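/- arXiv:0910.4809 — 10 statements merged into one kernel-verified Lean document; each statement's English description precedes it below -/
import Mathlib

section
/- Let m, d ≥ 1 and let Λ¹, Λ², Λ³ be m-multisets in ℝ^d. Let 0 < ε₁ < 2^{-1/2} and 0 < ε₂ < 2^{-1/2}. Suppose there exist x₁, x₂ ∈ ℝ^d with |x₁| ≤ ε₁ and |x₂| ≤ ε₁ such that for every i ≤ m, (−x₁ + Λ¹_i) ∩ B_{1/ε₁}(0) = (−x₂ + Λ²_i) ∩ B_{1/ε₁}(0), and there exist x₂′, x₃′ ∈ ℝ^d with |x₂′| ≤ ε₂ and |x₃′| ≤ ε₂ such that for every i ≤ m, (−x₂′ + Λ²_i) ∩ B_{1/ε₂}(0) = (−x₃′ + Λ³_i) ∩ B_{1/ε₂}(0). Then there exist y, z ∈ ℝ^d with |y| ≤ ε₁ + ε₂ and |z| ≤ ε₁ + ε₂ such that for every i ≤ m, (−y + Λ¹_i) ∩ B_{1/(ε₁+ε₂)}(0) = (−z + Λ³_i) ∩ B_{1/(ε₁+ε₂)}(0). -/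
open Metric Set

set_option maxHeartbeats 1600000 in
/-- the triangle-inequality step for the metric on multisets
(`B_r(c)` is the closed Euclidean ball, `(fun s => s - x) '' S` is `-x + S`). -/
theorem stmt_0 {m d : ℕ} (hm : 1 ≤ m) (hd : 1 ≤ d)
    (Λ₁ Λ₂ Λ₃ : Fin m → Set (EuclideanSpace ℝ (Fin d)))
    {ε₁ ε₂ : ℝ} (hε₁ : 0 < ε₁) (hε₁' : ε₁ < (Real.sqrt 2)⁻¹)
    (hε₂ : 0 < ε₂) (hε₂' : ε₂ < (Real.sqrt 2)⁻¹)
    (h₁ : ∃ x₁ x₂ : EuclideanSpace ℝ (Fin d), ‖x₁‖ ≤ ε₁ ∧ ‖x₂‖ ≤ ε₁ ∧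
      ∀ i : Fin m,
        ((fun s => s - x₁) '' Λ₁ i) ∩ closedBall 0 (1 / ε₁)
          = ((fun s => s - x₂) '' Λ₂ i) ∩ closedBall 0 (1 / ε₁))
    (h₂ : ∃ x₂' x₃' : EuclideanSpace ℝ (Fin d), ‖x₂'‖ ≤ ε₂ ∧ ‖x₃'‖ ≤ ε₂ ∧
      ∀ i : Fin m,
        ((fun s => s - x₂') '' Λ₂ i) ∩ closedBall 0 (1 / ε₂)
          = ((fun s => s - x₃') '' Λ₃ i) ∩ closedBall 0 (1 / ε₂)) :
    ∃ y z : EuclideanSpace ℝ (Fin d), ‖y‖ ≤ ε₁ + ε₂ ∧ ‖z‖ ≤ ε₁ + ε₂ ∧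
      ∀ i : Fin m,
        ((fun s => s - y) '' Λ₁ i) ∩ closedBall 0 (1 / (ε₁ + ε₂))
          = ((fun s => s - z) '' Λ₃ i) ∩ closedBall 0 (1 / (ε₁ + ε₂)) := by
  obtain ⟨x₁, x₂, hx₁, hx₂, H₁⟩ := h₁
  obtain ⟨x₂', x₃', hx₂', hx₃', H₂⟩ := h₂
  have hεpos : (0:ℝ) < ε₁ + ε₂ := by positivity
  -- the √2 bound gives ε₁ * (ε₁ + ε₂) ≤ 1 and ε₂ * (ε₁ + ε₂) ≤ 1
  have hs : ((Real.sqrt 2)⁻¹)^2 = 1/2 := by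
    rw [inv_pow, Real.sq_sqrt (by norm_num : (2:ℝ) ≥ 0)]; norm_num
  have hspos : (0:ℝ) < (Real.sqrt 2)⁻¹ := by positivity
  have hb₁ : ε₁ * (ε₁ + ε₂) ≤ 1 := by nlinarith
  have hb₂ : ε₂ * (ε₁ + ε₂) ≤ 1 := by nlinarith
  set t : ℝ := ε₂ / (ε₁ + ε₂) with ht
  have ht0 : 0 ≤ t := by positivity
  have htε : t * (ε₁ + ε₂) = ε₂ := div_mul_cancel₀ _ hεpos.ne'
  have ht1 : (0:ℝ) ≤ 1 - t := by
    have : t ≤ 1 := by rw [ht, div_le_one hεpos]; linarith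
    linarith
  have ht1ε : (1 - t) * (ε₁ + ε₂) = ε₁ := by rw [ht]; field_simp; ring
  refine ⟨x₁ + t • (x₂' - x₂), x₃' + (1 - t) • (x₂ - x₂'), ?_, ?_, ?_⟩
  · calc ‖x₁ + t • (x₂' - x₂)‖ ≤ ‖x₁‖ + ‖t • (x₂' - x₂)‖ := norm_add_le _ _
      _ ≤ ε₁ + t * (ε₂ + ε₁) := by
          rw [norm_smul, Real.norm_of_nonneg ht0]
          have : ‖x₂' - x₂‖ ≤ ε₂ + ε₁ := (norm_sub_le _ _).trans (by linarith)
          nlinarith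
      _ = ε₁ + ε₂ := by rw [show ε₂ + ε₁ = ε₁ + ε₂ by ring, htε]
  · calc ‖x₃' + (1-t) • (x₂ - x₂')‖ ≤ ‖x₃'‖ + ‖(1-t) • (x₂ - x₂')‖ := norm_add_le _ _
      _ ≤ ε₂ + (1-t) * (ε₁ + ε₂) := by
          rw [norm_smul, Real.norm_of_nonneg ht1]
          have : ‖x₂ - x₂'‖ ≤ ε₁ + ε₂ := (norm_sub_le _ _).trans (by linarith)
          nlinarith
      _ = ε₁ + ε₂ := by rw [ht1ε]; ring
  · intro i
    have mem_img : ∀ (x : EuclideanSpace ℝ (Fin d)) (S : Set (EuclideanSpace ℝ (Fin d)))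
        (u : EuclideanSpace ℝ (Fin d)), u ∈ (fun s => s - x) '' S ↔ u + x ∈ S := by
      intro x S u
      simp [Set.mem_image, sub_eq_iff_eq_add]
    have key₁ : ∀ u : EuclideanSpace ℝ (Fin d), ‖u‖ ≤ 1/ε₁ →
        (u + x₁ ∈ Λ₁ i ↔ u + x₂ ∈ Λ₂ i) := by
      intro u hu
      have := Set.ext_iff.1 (H₁ i) u
      simp only [Set.mem_inter_iff, mem_closedBall, dist_zero_right, mem_img] at this
      tauto
    have key₂ : ∀ u : EuclideanSpace ℝ (Fin d), ‖u‖ ≤ 1/ε₂ →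
        (u + x₂' ∈ Λ₂ i ↔ u + x₃' ∈ Λ₃ i) := by
      intro u hu
      have := Set.ext_iff.1 (H₂ i) u
      simp only [Set.mem_inter_iff, mem_closedBall, dist_zero_right, mem_img] at this
      tauto
    ext v
    simp only [Set.mem_inter_iff, mem_closedBall, dist_zero_right, mem_img]
    refine and_congr_left fun hv => ?_
    set u₁ : EuclideanSpace ℝ (Fin d) := v + t • (x₂' - x₂) with hu₁
    set u₂ : EuclideanSpace ℝ (Fin d) := v + (1 - t) • (x₂ - x₂') with hu₂
    have e₁ : v + (x₁ + t • (x₂' - x₂)) = u₁ + x₁ := by rw [hu₁]; abel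
    have e₂ : v + (x₃' + (1 - t) • (x₂ - x₂')) = u₂ + x₃' := by rw [hu₂]; abel
    have e₃ : u₁ + x₂ = u₂ + x₂' := by
      rw [hu₁, hu₂]
      module
    have hn₁ : ‖u₁‖ ≤ 1/ε₁ := by
      have h1 : ‖u₁‖ ≤ 1/(ε₁+ε₂) + ε₂ := by
        calc ‖u₁‖ ≤ ‖v‖ + ‖t • (x₂' - x₂)‖ := norm_add_le _ _
          _ ≤ 1/(ε₁+ε₂) + t * (ε₁ + ε₂) := by
              rw [norm_smul, Real.norm_of_nonneg ht0]
              have : ‖x₂' - x₂‖ ≤ ε₁ + ε₂ := (norm_sub_le _ _).trans (by linarith)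
              nlinarith
          _ = 1/(ε₁+ε₂) + ε₂ := by rw [htε]
      have h2 : 1/(ε₁+ε₂) + ε₂ ≤ 1/ε₁ := by
        rw [div_add' _ _ _ hεpos.ne', div_le_div_iff₀ hεpos hε₁]
        linarith [mul_le_mul_of_nonneg_left hb₁ hε₂.le]
      linarith
    have hn₂ : ‖u₂‖ ≤ 1/ε₂ := by
      have h1 : ‖u₂‖ ≤ 1/(ε₁+ε₂) + ε₁ := by
        calc ‖u₂‖ ≤ ‖v‖ + ‖(1-t) • (x₂ - x₂')‖ := norm_add_le _ _
          _ ≤ 1/(ε₁+ε₂) + (1-t) * (ε₁ + ε₂) := by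
              rw [norm_smul, Real.norm_of_nonneg ht1]
              have : ‖x₂ - x₂'‖ ≤ ε₁ + ε₂ := (norm_sub_le _ _).trans (by linarith)
              nlinarith
          _ = 1/(ε₁+ε₂) + ε₁ := by rw [ht1ε]
      have h2 : 1/(ε₁+ε₂) + ε₁ ≤ 1/ε₂ := by
        rw [div_add' _ _ _ hεpos.ne', div_le_div_iff₀ hεpos hε₂]
        linarith [mul_le_mul_of_nonneg_left hb₂ hε₁.le]
      linarith
    rw [e₁, e₂, key₁ u₁ hn₁, e₃, key₂ u₂ hn₂]
end

section
/- Let m, d ≥ 1. For m-multisets Λ, Λ′ in ℝ^d define d̃(Λ,Λ′) = inf{ε > 0 : there exist x, y ∈ B_ε(0) such that for all i ≤ m, B_{1/ε}(0) ∩ (−x + Λ_i) = B_{1/ε}(0) ∩ (−y + Λ′_i)} (with inf ∅ = +∞), and d(Λ,Λ′) = min{d̃(Λ,Λ′), 2^{−1/2}}. Then d satisfies the triangle inequality: for all m-multisets Λ¹, Λ², Λ³ in ℝ^d, d(Λ¹,Λ³) ≤ d(Λ¹,Λ²) + d(Λ²,Λ³). -/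
open Metric Set

/-- The metric `d(Λ,Λ') = min{d̃(Λ,Λ'), 2^{-1/2}}` on `m`-multisets of `ℝ^d`, where
`d̃(Λ,Λ') = inf{ε > 0 : ∃ x y ∈ B_ε(0), ∀ i, B_{1/ε}(0) ∩ (-x+Λᵢ) = B_{1/ε}(0) ∩ (-y+Λ'ᵢ)}`
with `inf ∅ = +∞`.  Since always `2^{-1/2} < ∞`, this minimum equals the (real) infimum of
the above set of ε's with `2^{-1/2}` adjoined, which is how we formalize it. -/
noncomputable def multisetDist {m d : ℕ}
    (Λ Λ' : Fin m → Set (EuclideanSpace ℝ (Fin d))) : ℝ :=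
  sInf ({ε : ℝ | 0 < ε ∧ ∃ x ∈ closedBall (0 : EuclideanSpace ℝ (Fin d)) ε,
      ∃ y ∈ closedBall (0 : EuclideanSpace ℝ (Fin d)) ε,
      ∀ i : Fin m,
        closedBall 0 (1 / ε) ∩ ((fun s => s - x) '' Λ i)
          = closedBall 0 (1 / ε) ∩ ((fun s => s - y) '' Λ' i)} ∪ {(Real.sqrt 2)⁻¹})

namespace MultisetDistAux

variable {m d : ℕ}

/-- The closeness predicate used in `multisetDist`. -/
def close (Λ Λ' : Fin m → Set (EuclideanSpace ℝ (Fin d))) (ε : ℝ) : Prop :=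
  0 < ε ∧ ∃ x ∈ closedBall (0 : EuclideanSpace ℝ (Fin d)) ε,
      ∃ y ∈ closedBall (0 : EuclideanSpace ℝ (Fin d)) ε,
      ∀ i : Fin m,
        closedBall 0 (1 / ε) ∩ ((fun s => s - x) '' Λ i)
          = closedBall 0 (1 / ε) ∩ ((fun s => s - y) '' Λ' i)

lemma multisetDist_eq (Λ Λ' : Fin m → Set (EuclideanSpace ℝ (Fin d))) :
    multisetDist Λ Λ' = sInf ({ε : ℝ | close Λ Λ' ε} ∪ {(Real.sqrt 2)⁻¹}) := rfl

lemma mem_img_sub {S : Set (EuclideanSpace ℝ (Fin d))} {x z : EuclideanSpace ℝ (Fin d)} :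
    z ∈ (fun s => s - x) '' S ↔ z + x ∈ S := by
  constructor
  · rintro ⟨a, ha, rfl⟩; simpa using ha
  · intro h; exact ⟨z + x, h, add_sub_cancel_right _ _⟩

lemma close_iff {Λ Λ' : Fin m → Set (EuclideanSpace ℝ (Fin d))} {ε : ℝ} :
    close Λ Λ' ε ↔ 0 < ε ∧ ∃ x y : EuclideanSpace ℝ (Fin d), ‖x‖ ≤ ε ∧ ‖y‖ ≤ ε ∧
      ∀ i : Fin m, ∀ z : EuclideanSpace ℝ (Fin d), ‖z‖ ≤ 1 / ε →
        (z + x ∈ Λ i ↔ z + y ∈ Λ' i) := by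
  unfold close
  refine and_congr_right fun hε => ?_
  constructor
  · rintro ⟨x, hx, y, hy, h⟩
    refine ⟨x, y, by simpa using hx, by simpa using hy, fun i z hz => ?_⟩
    have := Set.ext_iff.1 (h i) z
    simp only [mem_inter_iff, mem_closedBall, dist_zero_right, mem_img_sub] at this
    tauto
  · rintro ⟨x, y, hx, hy, h⟩
    refine ⟨x, by simpa using hx, y, by simpa using hy, fun i => ?_⟩
    ext z
    simp only [mem_inter_iff, mem_closedBall, dist_zero_right, mem_img_sub]
    have := h i z
    tauto

lemma sqrt2_inv_pos : (0:ℝ) < (Real.sqrt 2)⁻¹ :=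
  inv_pos.2 (Real.sqrt_pos.2 (by norm_num))

lemma close_triangle {Λ₁ Λ₂ Λ₃ : Fin m → Set (EuclideanSpace ℝ (Fin d))} {ε₁ ε₂ : ℝ}
    (hc : ε₁ + ε₂ ≤ (Real.sqrt 2)⁻¹)
    (h1 : close Λ₁ Λ₂ ε₁) (h2 : close Λ₂ Λ₃ ε₂) : close Λ₁ Λ₃ (ε₁ + ε₂) := by
  rw [close_iff] at h1 h2 ⊢
  obtain ⟨hε₁, x₁, y₁, hx₁, hy₁, H1⟩ := h1
  obtain ⟨hε₂, x₂, y₂, hx₂, hy₂, H2⟩ := h2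
  set ε := ε₁ + ε₂ with hεdef
  have hε : 0 < ε := by positivity
  have hsq : (Real.sqrt 2)⁻¹ * (Real.sqrt 2)⁻¹ = 1/2 := by
    rw [← mul_inv, Real.mul_self_sqrt (by norm_num)]; norm_num
  have hεε : ε * ε ≤ 1/2 := by
    calc ε * ε ≤ (Real.sqrt 2)⁻¹ * (Real.sqrt 2)⁻¹ :=
      mul_le_mul hc hc hε.le sqrt2_inv_pos.le
    _ = 1/2 := hsq
  have hε1ε : ε₁ * ε ≤ 1 := by nlinarith
  have hε2ε : ε₂ * ε ≤ 1 := by nlinarith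
  have hA : 1/ε + ε₂ ≤ 1/ε₁ := by
    rw [div_add' _ _ _ hε.ne', div_le_div_iff₀ hε hε₁]
    nlinarith
  have hB : 1/ε + ε₁ ≤ 1/ε₂ := by
    rw [div_add' _ _ _ hε.ne', div_le_div_iff₀ hε hε₂]
    nlinarith
  set l : ℝ := ε₁ / ε with hldef
  have hl0 : 0 ≤ l := by positivity
  have hl1 : l ≤ 1 := div_le_one_of_le₀ (by linarith) hε.le
  have hlε : l * ε = ε₁ := div_mul_cancel₀ _ hε.ne'
  have h1lε : (1 - l) * ε = ε₂ := by
    rw [sub_mul, one_mul, hlε]; linarith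
  set s : EuclideanSpace ℝ (Fin d) := l • (y₁ - x₂) with hsdef
  have hyx : ‖y₁ - x₂‖ ≤ ε := (norm_sub_le _ _).trans (by linarith)
  have hs1 : ‖s‖ ≤ ε₁ := by
    rw [hsdef, norm_smul, Real.norm_eq_abs, abs_of_nonneg hl0]
    calc l * ‖y₁ - x₂‖ ≤ l * ε := by gcongr
    _ = ε₁ := hlε
  have hs2 : ‖s - (y₁ - x₂)‖ ≤ ε₂ := by
    have h : s - (y₁ - x₂) = -((1 - l) • (y₁ - x₂)) := by
      rw [sub_smul, one_smul, neg_sub]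
    rw [h, norm_neg, norm_smul, Real.norm_eq_abs, abs_of_nonneg (by linarith)]
    calc (1 - l) * ‖y₁ - x₂‖ ≤ (1 - l) * ε :=
      mul_le_mul_of_nonneg_left hyx (by linarith)
    _ = ε₂ := h1lε
  refine ⟨hε, x₁ + (s - (y₁ - x₂)), y₂ + s, ?_, ?_, ?_⟩
  · exact (norm_add_le _ _).trans (by linarith)
  · exact (norm_add_le _ _).trans (by linarith)
  · intro i z hz
    have hw : ‖z + (s - (y₁ - x₂))‖ ≤ 1 / ε₁ := (norm_add_le _ _).trans (by linarith)
    have hw' : ‖z + s‖ ≤ 1 / ε₂ := (norm_add_le _ _).trans (by linarith)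
    have e1 := H1 i (z + (s - (y₁ - x₂))) hw
    have e2 := H2 i (z + s) hw'
    rw [show z + (s - (y₁ - x₂)) + x₁ = z + (x₁ + (s - (y₁ - x₂))) from by abel] at e1
    rw [show z + (s - (y₁ - x₂)) + y₁ = z + s + x₂ from by abel] at e1
    rw [show z + s + y₂ = z + (y₂ + s) from by abel] at e2
    exact e1.trans e2

lemma bddBelow_set (Λ Λ' : Fin m → Set (EuclideanSpace ℝ (Fin d))) :
    BddBelow ({ε : ℝ | close Λ Λ' ε} ∪ {(Real.sqrt 2)⁻¹}) := by
  refine ⟨0, ?_⟩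
  rintro x (hx | rfl)
  · exact hx.1.le
  · exact sqrt2_inv_pos.le

lemma dist_nonneg' (Λ Λ' : Fin m → Set (EuclideanSpace ℝ (Fin d))) :
    0 ≤ multisetDist Λ Λ' := by
  rw [multisetDist_eq]
  refine le_csInf ⟨_, Or.inr rfl⟩ ?_
  rintro x (hx | rfl)
  · exact hx.1.le
  · exact sqrt2_inv_pos.le

lemma dist_le_cap (Λ Λ' : Fin m → Set (EuclideanSpace ℝ (Fin d))) :
    multisetDist Λ Λ' ≤ (Real.sqrt 2)⁻¹ := by
  rw [multisetDist_eq]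
  exact csInf_le (bddBelow_set Λ Λ') (Or.inr rfl)

lemma dist_le_of_close {Λ Λ' : Fin m → Set (EuclideanSpace ℝ (Fin d))} {ε : ℝ}
    (h : close Λ Λ' ε) : multisetDist Λ Λ' ≤ ε := by
  rw [multisetDist_eq]
  exact csInf_le (bddBelow_set Λ Λ') (Or.inl h)

lemma exists_close_lt {Λ Λ' : Fin m → Set (EuclideanSpace ℝ (Fin d))} {t : ℝ}
    (h : multisetDist Λ Λ' < t) (ht : t ≤ (Real.sqrt 2)⁻¹) :
    ∃ ε, close Λ Λ' ε ∧ ε < t := by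
  rw [multisetDist_eq] at h
  have hne : ({ε : ℝ | close Λ Λ' ε} ∪ {(Real.sqrt 2)⁻¹}).Nonempty := ⟨_, Or.inr rfl⟩
  obtain ⟨ε, hmem, hlt⟩ := exists_lt_of_csInf_lt hne h
  rcases hmem with hmem | hmem
  · exact ⟨ε, hmem, hlt⟩
  · rw [mem_singleton_iff] at hmem
    subst hmem
    exact absurd hlt (by linarith)

end MultisetDistAux

/-- `d` satisfies the triangle inequality. -/
theorem stmt_1 {m d : ℕ} (hm : 1 ≤ m) (hd : 1 ≤ d)
    (Λ₁ Λ₂ Λ₃ : Fin m → Set (EuclideanSpace ℝ (Fin d))) :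
    multisetDist Λ₁ Λ₃ ≤ multisetDist Λ₁ Λ₂ + multisetDist Λ₂ Λ₃ := by
  open MultisetDistAux in
  set c : ℝ := (Real.sqrt 2)⁻¹ with hcdef
  set a := multisetDist Λ₁ Λ₂ with hadef
  set b := multisetDist Λ₂ Λ₃ with hbdef
  have ha0 : 0 ≤ a := dist_nonneg' Λ₁ Λ₂
  have hb0 : 0 ≤ b := dist_nonneg' Λ₂ Λ₃
  have hac : a ≤ c := dist_le_cap Λ₁ Λ₂
  have hbc : b ≤ c := dist_le_cap Λ₂ Λ₃
  apply le_of_forall_pos_le_add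
  intro δ hδ
  rcases le_or_gt c (a + b) with h | h
  · exact (dist_le_cap Λ₁ Λ₃).trans (by linarith)
  · set δ' := min δ (c - (a + b)) with hδ'def
    have hδ'0 : 0 < δ' := lt_min hδ (by linarith)
    have hδ'δ : δ' ≤ δ := min_le_left _ _
    have hδ'c : δ' ≤ c - (a + b) := min_le_right _ _
    obtain ⟨ε₁, hclose₁, hlt₁⟩ := exists_close_lt (show a < a + δ'/2 by linarith)
      (show a + δ'/2 ≤ c by linarith)
    obtain ⟨ε₂, hclose₂, hlt₂⟩ := exists_close_lt (show b < b + δ'/2 by linarith)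
      (show b + δ'/2 ≤ c by linarith)
    have hsum : ε₁ + ε₂ ≤ c := by linarith
    have hkey := close_triangle hsum hclose₁ hclose₂
    have := dist_le_of_close hkey
    linarith
end

section
/- Let Λ be a Delone multiset in ℝ^d with finite local complexity. Then for every sequence (h_n) in ℝ^d there exist a subsequence (h_{n_k}) and an m-multiset Γ in ℝ^d such that every cluster of Γ is a translate of a cluster of Λ and d(−h_{n_k} + Λ, Γ) → 0 as k → ∞, where d is the metric d(Λ,Λ′) = min{d̃(Λ,Λ′), 2^{−1/2}} with d̃(Λ,Λ′) = inf{ε > 0 : there exist x, y ∈ B_ε(0) such that for all i ≤ m, B_{1/ε}(0) ∩ (−x + Λ_i) = B_{1/ε}(0) ∩ (−y + Λ′_i)}. -/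
open Metric Set Filter Topology

/-- A set in `ℝ^d` is Delone: uniformly discrete and relatively dense
(every closed ball of some radius `R` contains a point of the set). -/
def IsDelone {d : ℕ} (D : Set (EuclideanSpace ℝ (Fin d))) : Prop :=
  (∃ r > (0 : ℝ), ∀ x ∈ D, ∀ y ∈ D, x ≠ y → r ≤ dist x y) ∧
  (∃ R > (0 : ℝ), ∀ c : EuclideanSpace ℝ (Fin d), ∃ p ∈ D, p ∈ closedBall c R)

/-- A Delone multiset: each component and the support are Delone. -/
def IsDeloneMultiset {m d : ℕ} (Λ : Fin m → Set (EuclideanSpace ℝ (Fin d))) : Prop :=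
  (∀ i, IsDelone (Λ i)) ∧ IsDelone (⋃ i, Λ i)

/-- `P` is a cluster of `Λ`: componentwise a finite subset. -/
def IsClusterOf {m d : ℕ} (Λ P : Fin m → Set (EuclideanSpace ℝ (Fin d))) : Prop :=
  ∀ i, P i ⊆ Λ i ∧ (P i).Finite

/-- Finite local complexity: for each `R > 0` there is a finite set `Y ⊆ supp(Λ)` such that
every `R`-patch of `Λ` centered at a point of the support is a translate of an `R`-patch
centered at a point of `Y`. -/
def HasFLC {m d : ℕ} (Λ : Fin m → Set (EuclideanSpace ℝ (Fin d))) : Prop :=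
  ∀ R > (0 : ℝ), ∃ Y : Set (EuclideanSpace ℝ (Fin d)), Y.Finite ∧ Y ⊆ ⋃ i, Λ i ∧
    ∀ x ∈ ⋃ i, Λ i, ∃ y ∈ Y, ∀ i,
      closedBall x R ∩ Λ i = (fun s => s + (x - y)) '' (closedBall y R ∩ Λ i)

section Helpers

variable {d : ℕ}

lemma subImage_inter_closedBall (c : EuclideanSpace ℝ (Fin d)) (r : ℝ)
    (A : Set (EuclideanSpace ℝ (Fin d))) :
    closedBall (0 : EuclideanSpace ℝ (Fin d)) r ∩ ((fun s => s - c) '' A)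
      = (fun s => s - c) '' (closedBall c r ∩ A) := by
  ext z
  simp only [Set.mem_inter_iff, Set.mem_image, mem_closedBall]
  constructor
  · rintro ⟨hz, a, ha, rfl⟩
    refine ⟨a, ⟨?_, ha⟩, rfl⟩
    rw [dist_eq_norm]
    simpa [dist_zero_right] using hz
  · rintro ⟨a, ⟨hab, ha⟩, rfl⟩
    refine ⟨?_, a, ha, rfl⟩
    rw [dist_zero_right]
    rwa [dist_eq_norm] at hab

lemma addImage_inter_closedBall (c : EuclideanSpace ℝ (Fin d)) (r : ℝ)
    (A : Set (EuclideanSpace ℝ (Fin d))) :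
    closedBall (0 : EuclideanSpace ℝ (Fin d)) r ∩ ((fun s => s + c) '' A)
      = (fun s => s + c) '' (closedBall (-c) r ∩ A) := by
  ext z
  simp only [Set.mem_inter_iff, Set.mem_image, mem_closedBall]
  constructor
  · rintro ⟨hz, a, ha, rfl⟩
    refine ⟨a, ⟨?_, ha⟩, rfl⟩
    rw [dist_eq_norm, sub_neg_eq_add]
    simpa [dist_zero_right] using hz
  · rintro ⟨a, ⟨hab, ha⟩, rfl⟩
    refine ⟨?_, a, ha, rfl⟩
    rw [dist_zero_right]
    rwa [dist_eq_norm, sub_neg_eq_add] at hab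

lemma patch_shift {x y : EuclideanSpace ℝ (Fin d)} {R : ℝ} {A : Set (EuclideanSpace ℝ (Fin d))}
    (hA : closedBall x R ∩ A = (fun s => s + (x - y)) '' (closedBall y R ∩ A)) :
    closedBall (0 : EuclideanSpace ℝ (Fin d)) R ∩ ((fun s => s - x) '' A)
      = closedBall (0 : EuclideanSpace ℝ (Fin d)) R ∩ ((fun s => s - y) '' A) := by
  rw [subImage_inter_closedBall, subImage_inter_closedBall, hA, Set.image_image]
  have : (fun s : EuclideanSpace ℝ (Fin d) => s + (x - y) - x) = fun s => s - y := by
    funext s; abel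
  rw [this]

lemma inter_eq_of_inter_eq {α : Type*} {U V A B : Set α} (hUV : U ⊆ V)
    (hV : V ∩ A = V ∩ B) : U ∩ A = U ∩ B := by
  ext z
  constructor
  · rintro ⟨hU, hA⟩
    have : z ∈ V ∩ B := hV ▸ (⟨hUV hU, hA⟩ : z ∈ V ∩ A)
    exact ⟨hU, this.2⟩
  · rintro ⟨hU, hB⟩
    have : z ∈ V ∩ A := hV.symm ▸ (⟨hUV hU, hB⟩ : z ∈ V ∩ B)
    exact ⟨hU, this.2⟩

end Helpers

/-- sequential compactness of the hull of an FLC Delone multiset: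
every sequence of translates of `Λ` has a subsequence converging (in the metric `d`)
to a multiset `Γ` all of whose clusters are translates of clusters of `Λ`. -/
theorem stmt_2 {m d : ℕ} (hm : 1 ≤ m) (hd : 1 ≤ d)
    (Λ : Fin m → Set (EuclideanSpace ℝ (Fin d)))
    (hDel : IsDeloneMultiset Λ) (hFLC : HasFLC Λ)
    (h : ℕ → EuclideanSpace ℝ (Fin d)) :
    ∃ φ : ℕ → ℕ, StrictMono φ ∧ ∃ Γ : Fin m → Set (EuclideanSpace ℝ (Fin d)),
      (∀ P : Fin m → Set (EuclideanSpace ℝ (Fin d)), IsClusterOf Γ P →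
        ∃ t : EuclideanSpace ℝ (Fin d), ∃ Q, IsClusterOf Λ Q ∧
          ∀ i, P i = (fun q => q + t) '' Q i) ∧
      Tendsto (fun k => multisetDist (fun i => (fun s => s - h (φ k)) '' Λ i) Γ)
        atTop (𝓝 0) := by
  classical
  obtain ⟨-, R₀, hR₀pos, hR₀⟩ := hDel.2
  choose p hpmem hpball using fun n => hR₀ (h n)
  set t : ℕ → EuclideanSpace ℝ (Fin d) := fun n => p n - h n with ht
  have htball : ∀ n, t n ∈ closedBall (0 : EuclideanSpace ℝ (Fin d)) R₀ := by
    intro n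
    have := hpball n
    rw [mem_closedBall, dist_eq_norm] at this
    rw [mem_closedBall, dist_zero_right]
    exact this
  -- FLC in centered form, for each natural radius N+1
  have hflcN : ∀ N : ℕ, ∃ Y : Set (EuclideanSpace ℝ (Fin d)), Y.Finite ∧
      ∀ x ∈ ⋃ i, Λ i, ∃ y ∈ Y, ∀ i,
        closedBall 0 ((N : ℝ) + 1) ∩ ((fun s => s - x) '' Λ i)
          = closedBall 0 ((N : ℝ) + 1) ∩ ((fun s => s - y) '' Λ i) := by
    intro N
    obtain ⟨Y, hYfin, -, hY⟩ := hFLC ((N : ℝ) + 1) (by positivity)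
    exact ⟨Y, hYfin, fun x hx =>
      (hY x hx).imp fun y hy => ⟨hy.1, fun i => patch_shift (hy.2 i)⟩⟩
  choose Y hYfin hY using hflcN
  choose y0 hy0mem hy0 using fun n N => hY N (p n) (hpmem n)
  -- stage 1: convergent subsequence for the offsets t n
  obtain ⟨tlim, -, ψ₁, hψ₁, hψ₁t⟩ :=
    tendsto_subseq_of_bounded (isBounded_closedBall (x := (0 : EuclideanSpace ℝ (Fin d)))
      (r := R₀)) htball
  -- stage 2: subsequence along which all patch labels stabilize
  let YT : ℕ → Type := fun N => ↥(Y N)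
  letI : ∀ N, TopologicalSpace (YT N) := fun N => ⊥
  haveI : ∀ N, DiscreteTopology (YT N) := fun N => ⟨rfl⟩
  haveI : ∀ N, Finite (YT N) := fun N => (hYfin N).to_subtype
  let g : ℕ → ∀ N, YT N := fun k N => ⟨y0 (ψ₁ k) N, hy0mem (ψ₁ k) N⟩
  obtain ⟨a, -, ψ₂, hψ₂, hψ₂g⟩ := isCompact_univ.tendsto_subseq (x := g)
    (fun k => Set.mem_univ _)
  set φ : ℕ → ℕ := ψ₁ ∘ ψ₂ with hφdef
  have hφ : StrictMono φ := hψ₁.comp hψ₂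
  set yinf : ℕ → EuclideanSpace ℝ (Fin d) := fun N => (a N : EuclideanSpace ℝ (Fin d))
    with hyinf
  have hconst : ∀ N, ∀ᶠ k in atTop, y0 (φ k) N = yinf N := by
    intro N
    have h1 : Tendsto (fun k => (g ∘ ψ₂) k N) atTop (𝓝 (a N)) := tendsto_pi_nhds.mp hψ₂g N
    have h2 : ∀ᶠ k in atTop, (g ∘ ψ₂) k N = a N :=
      h1 ((isOpen_discrete {a N}).mem_nhds rfl)
    exact h2.mono fun k hk => congrArg Subtype.val hk
  have hpatch : ∀ N : ℕ, ∀ᶠ k in atTop, ∀ i,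
      closedBall 0 ((N : ℝ) + 1) ∩ ((fun s => s - p (φ k)) '' Λ i)
        = closedBall 0 ((N : ℝ) + 1) ∩ ((fun s => s - yinf N) '' Λ i) := by
    intro N
    exact (hconst N).mono fun k hk => by rw [← hk]; exact hy0 (φ k) N
  -- the limit patches and their nesting
  set P : ℕ → Fin m → Set (EuclideanSpace ℝ (Fin d)) :=
    fun N i => closedBall 0 ((N : ℝ) + 1) ∩ ((fun s => s - yinf N) '' Λ i) with hP
  have hnest : ∀ M N : ℕ, M ≤ N → ∀ i,
      closedBall (0 : EuclideanSpace ℝ (Fin d)) ((M : ℝ) + 1) ∩ P N i = P M i := by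
    intro M N hMN i
    obtain ⟨k, hkM, hkN⟩ := ((hpatch M).and (hpatch N)).exists
    have hsub : closedBall (0 : EuclideanSpace ℝ (Fin d)) ((M : ℝ) + 1)
        ⊆ closedBall 0 ((N : ℝ) + 1) := by
      apply closedBall_subset_closedBall
      have : (M : ℝ) ≤ (N : ℝ) := by exact_mod_cast hMN
      linarith
    have e1 : closedBall (0 : EuclideanSpace ℝ (Fin d)) ((M : ℝ) + 1) ∩ P N i
        = closedBall 0 ((M : ℝ) + 1) ∩ ((fun s => s - yinf N) '' Λ i) := by
      rw [hP]
      rw [← Set.inter_assoc, Set.inter_eq_self_of_subset_left hsub]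
    rw [e1, inter_eq_of_inter_eq hsub (hkN i).symm]
    exact hkM i
  set Γ' : Fin m → Set (EuclideanSpace ℝ (Fin d)) := fun i => ⋃ N : ℕ, P N i with hΓ'
  have hΓ'cap : ∀ (M : ℕ) i,
      closedBall (0 : EuclideanSpace ℝ (Fin d)) ((M : ℝ) + 1) ∩ Γ' i = P M i := by
    intro M i
    apply subset_antisymm
    · rw [hΓ', Set.inter_iUnion]
      apply Set.iUnion_subset
      intro N
      rcases le_total M N with hMN | hNM
      · rw [hnest M N hMN i]
      · refine Set.inter_subset_right.trans ?_
        rw [← hnest N M hNM i]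
        exact Set.inter_subset_right
    · intro z hz
      exact ⟨hz.1, Set.mem_iUnion.2 ⟨M, hz⟩⟩
  set Γ : Fin m → Set (EuclideanSpace ℝ (Fin d)) := fun i => (fun s => s + tlim) '' Γ' i
    with hΓdef
  refine ⟨φ, hφ, Γ, ?_, ?_⟩
  · -- every cluster of Γ is a translate of a cluster of Λ
    intro Pc hPc
    have hfin : (⋃ i, Pc i).Finite := Set.finite_iUnion fun i => (hPc i).2
    obtain ⟨r, hr⟩ := hfin.isBounded.subset_closedBall tlim
    set N : ℕ := ⌈r⌉₊ with hN
    have hrN : r ≤ (N : ℝ) + 1 := (Nat.le_ceil r).trans (by linarith)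
    have key : ∀ i, ∀ z ∈ Pc i, ∃ w ∈ Λ i, z = w + (tlim - yinf N) := by
      intro i z hz
      obtain ⟨u, hu, rfl⟩ := (hPc i).1 hz
      have hball : u ∈ closedBall (0 : EuclideanSpace ℝ (Fin d)) ((N : ℝ) + 1) := by
        rw [mem_closedBall, dist_zero_right]
        have : u + tlim ∈ closedBall tlim r := hr (Set.mem_iUnion.2 ⟨i, hz⟩)
        rw [mem_closedBall, dist_eq_norm, add_sub_cancel_right] at this
        linarith
      have : u ∈ P N i := by rw [← hΓ'cap N i]; exact ⟨hball, hu⟩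
      obtain ⟨-, w, hw, hwu⟩ := this
      exact ⟨w, hw, by rw [← hwu]; show w - yinf N + tlim = w + (tlim - yinf N); rw [sub_add_eq_add_sub, add_sub_assoc]⟩
    refine ⟨tlim - yinf N, fun i => (fun z => z - (tlim - yinf N)) '' Pc i, ?_, ?_⟩
    · intro i
      constructor
      · rintro _ ⟨z, hz, rfl⟩
        obtain ⟨w, hw, rfl⟩ := key i z hz
        simpa using hw
      · exact ((hPc i).2).image _
    · intro i
      rw [Set.image_image]
      simp only [sub_add_cancel, Set.image_id']
  · -- convergence in the multiset metric
    have hnonneg : ∀ k, 0 ≤ multisetDist (fun i => (fun s => s - h (φ k)) '' Λ i) Γ := by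
      intro k
      apply Real.sInf_nonneg
      rintro x (⟨hx, -⟩ | hx)
      · exact hx.le
      · rw [Set.mem_singleton_iff] at hx
        rw [hx]
        positivity
    have hbdd : ∀ (A B : Fin m → Set (EuclideanSpace ℝ (Fin d))),
        BddBelow ({ε : ℝ | 0 < ε ∧ ∃ x ∈ closedBall (0 : EuclideanSpace ℝ (Fin d)) ε,
          ∃ y ∈ closedBall (0 : EuclideanSpace ℝ (Fin d)) ε,
          ∀ i : Fin m,
            closedBall 0 (1 / ε) ∩ ((fun s => s - x) '' A i)
              = closedBall 0 (1 / ε) ∩ ((fun s => s - y) '' B i)} ∪ {(Real.sqrt 2)⁻¹}) := by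
      intro A B
      refine ⟨0, ?_⟩
      rintro x (⟨hx, -⟩ | hx)
      · exact hx.le
      · rw [Set.mem_singleton_iff] at hx
        rw [hx]
        positivity
    have htφ : Tendsto (fun k => t (φ k)) atTop (𝓝 tlim) :=
      hψ₁t.comp hψ₂.tendsto_atTop
    rw [Metric.tendsto_atTop]
    intro ε hε
    have hε' : 0 < ε / 2 := by linarith
    set N : ℕ := ⌈1 / (ε / 2) + ‖tlim‖⌉₊ with hNdef
    have h1 : ∀ᶠ k in atTop, ‖t (φ k) - tlim‖ ≤ ε / 2 := by
      have := Metric.tendsto_atTop.mp htφ (ε / 2) hε'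
      obtain ⟨K, hK⟩ := this
      refine eventually_atTop.2 ⟨K, fun k hk => ?_⟩
      have := hK k hk
      rw [dist_eq_norm] at this
      exact this.le
    obtain ⟨K, hK⟩ := eventually_atTop.mp (h1.and (hpatch N))
    refine ⟨K, fun k hk => ?_⟩
    obtain ⟨hk1, hk2⟩ := hK k hk
    have hmem : (ε / 2) ∈ ({ε' : ℝ | 0 < ε' ∧
        ∃ x ∈ closedBall (0 : EuclideanSpace ℝ (Fin d)) ε',
        ∃ y ∈ closedBall (0 : EuclideanSpace ℝ (Fin d)) ε',
        ∀ i : Fin m,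
          closedBall 0 (1 / ε') ∩ ((fun s => s - x) '' ((fun s => s - h (φ k)) '' Λ i))
            = closedBall 0 (1 / ε') ∩ ((fun s => s - y) '' Γ i)} ∪ {(Real.sqrt 2)⁻¹}) := by
      refine Or.inl ⟨hε', t (φ k) - tlim, ?_, 0, ?_, ?_⟩
      · rw [mem_closedBall, dist_zero_right]; exact hk1
      · rw [mem_closedBall]; simp [hε'.le]
      · intro i
        have eL : (fun s => s - (t (φ k) - tlim)) '' ((fun s => s - h (φ k)) '' Λ i)
            = (fun s => s + tlim) '' ((fun s => s - p (φ k)) '' Λ i) := by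
          rw [Set.image_image, Set.image_image]
          apply Set.image_congr'
          intro s
          show s - h (φ k) - (t (φ k) - tlim) = s - p (φ k) + tlim
          rw [ht]
          show s - h (φ k) - (p (φ k) - h (φ k) - tlim) = s - p (φ k) + tlim
          module
        have eR : (fun s => s - (0 : EuclideanSpace ℝ (Fin d))) '' Γ i
            = (fun s => s + tlim) '' Γ' i := by
          rw [hΓdef]
          simp
        rw [eL, eR, addImage_inter_closedBall, addImage_inter_closedBall]
        have hsub : closedBall (-tlim) (1 / (ε / 2))
            ⊆ closedBall (0 : EuclideanSpace ℝ (Fin d)) ((N : ℝ) + 1) := by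
          apply closedBall_subset_closedBall'
          rw [dist_zero_right, norm_neg, hNdef]
          exact (Nat.le_ceil _).trans (by linarith)
        refine congrArg (Set.image fun s => s + tlim) (inter_eq_of_inter_eq hsub ?_)
        rw [hk2 i]
        rw [hΓ'cap N i]
    have hle : multisetDist (fun i => (fun s => s - h (φ k)) '' Λ i) Γ ≤ ε / 2 := by
      unfold multisetDist
      exact csInf_le (hbdd _ _) hmem
    rw [Real.dist_eq, sub_zero, abs_of_nonneg (hnonneg k)]
    linarith
end

section
/- Let d ≥ 1, b > 0 and R ≥ b/2. Let S ⊆ B_R(0) be a subset of ℝ^d such that for every y ∈ ℝ^d with |y| ≤ R − b/2 the closed ball B_{b/2}(y) contains a point of S. If u ∈ ℝ^d is such that −u + S ⊆ B_R(0), then |u| ≤ b. -/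
open Metric Set

/-- a nonempty `R`-patch of a point set whose support is relatively dense with
constant `b/2` cannot be translated by more than `b` and stay inside the window `B_R(0)`. -/
theorem stmt_3 {d : ℕ} (hd : 1 ≤ d) {b R : ℝ} (hb : 0 < b) (hR : b / 2 ≤ R)
    (S : Set (EuclideanSpace ℝ (Fin d))) (hS : S ⊆ closedBall 0 R)
    (hdense : ∀ y : EuclideanSpace ℝ (Fin d), ‖y‖ ≤ R - b / 2 →
      ∃ s ∈ S, s ∈ closedBall y (b / 2))
    (u : EuclideanSpace ℝ (Fin d))
    (hu : (fun s => s - u) '' S ⊆ closedBall 0 R) :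
    ‖u‖ ≤ b := by
  by_cases hu0 : u = 0
  · simp [hu0]; linarith
  have hun : 0 < ‖u‖ := norm_pos_iff.mpr hu0
  set y : EuclideanSpace ℝ (Fin d) := (-(R - b / 2) / ‖u‖) • u with hy
  have hyn : ‖y‖ = R - b / 2 := by
    rw [hy, norm_smul, Real.norm_eq_abs, abs_div, abs_neg, abs_of_nonneg (by linarith),
      abs_of_pos hun, div_mul_cancel₀ _ hun.ne']
  obtain ⟨s, hsS, hsy⟩ := hdense y (le_of_eq hyn)
  have h1 : ‖s - u‖ ≤ R := by
    have := hu ⟨s, hsS, rfl⟩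
    simpa [mem_closedBall, dist_eq_norm] using this
  have h2 : ‖s - y‖ ≤ b / 2 := by
    simpa [mem_closedBall, dist_eq_norm] using hsy
  have h3 : ‖y - u‖ = R - b / 2 + ‖u‖ := by
    have : y - u = (-(R - b / 2) / ‖u‖ - 1) • u := by
      rw [hy, sub_smul, one_smul]
    rw [this, norm_smul, Real.norm_eq_abs]
    have hneg : -(R - b / 2) / ‖u‖ - 1 ≤ 0 := by
      have : -(R - b / 2) / ‖u‖ ≤ 0 := div_nonpos_of_nonpos_of_nonneg (by linarith) hun.le
      linarith
    rw [abs_of_nonpos hneg]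
    field_simp
    ring
  have h4 : ‖y - u‖ ≤ ‖s - u‖ + ‖s - y‖ := by
    calc ‖y - u‖ = ‖(s - u) - (s - y)‖ := by rw [sub_sub_sub_cancel_left]
      _ ≤ ‖s - u‖ + ‖s - y‖ := norm_sub_le _ _
  linarith [h3 ▸ h4]
end

section
/- Let d ≥ 1, η > 0, and let D ⊆ ℝ^d be a set any two distinct points of which are at Euclidean distance ≥ η. Let F ⊆ ℝ^d be a nonempty bounded set and let r ≥ η/2. Then the set D ∩ (F^{+r} \ F^{−r}) is finite and #(D ∩ (F^{+r} \ F^{−r})) · Vol(B_{η/2}(0)) ≤ Vol((∂F)^{+2r}), where Vol denotes Lebesgue measure. -/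
open Metric Set MeasureTheory

/-- `F^{+r} = {x : dist(x,F) ≤ r}`. -/
def plusR {d : ℕ} (F : Set (EuclideanSpace ℝ (Fin d))) (r : ℝ) :
    Set (EuclideanSpace ℝ (Fin d)) :=
  {x | infDist x F ≤ r}

/-- `F^{-r} = {x ∈ F : dist(x,∂F) ≥ r}`. -/
def minusR {d : ℕ} (F : Set (EuclideanSpace ℝ (Fin d))) (r : ℝ) :
    Set (EuclideanSpace ℝ (Fin d)) :=
  {x ∈ F | r ≤ infDist x (frontier F)}

/-- A segment from a point outside `F` to a point of `F` meets the frontier of `F`. -/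
lemma segment_meets_frontier {E : Type*} [NormedAddCommGroup E] [NormedSpace ℝ E]
    {F : Set E} {x z : E} (hx : x ∉ F) (hz : z ∈ F) :
    ∃ w ∈ segment ℝ x z, w ∈ frontier F := by
  by_contra h
  push_neg at h
  have hzint : z ∈ interior F := by
    rcases (closure_eq_interior_union_frontier F ▸ subset_closure hz : _) with h' | h'
    · exact h'
    · exact absurd h' (h z (right_mem_segment ℝ x z))
  have hxcl : x ∉ closure F := by
    intro hxc
    rcases (closure_eq_interior_union_frontier F ▸ hxc : _) with h' | h'
    · exact hx (interior_subset h')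
    · exact h x (left_mem_segment ℝ x z) h'
  have hpc : IsPreconnected (segment ℝ x z) := (convex_segment x z).isPreconnected
  have hsub : segment ℝ x z ⊆ interior F ∪ (closure F)ᶜ := by
    intro w hw
    by_cases hwc : w ∈ closure F
    · rcases (closure_eq_interior_union_frontier F ▸ hwc : _) with h' | h'
      · exact Or.inl h'
      · exact absurd h' (h w hw)
    · exact Or.inr hwc
  have := hpc (interior F) (closure F)ᶜ isOpen_interior isClosed_closure.isOpen_compl hsub
    ⟨z, right_mem_segment ℝ x z, hzint⟩ ⟨x, left_mem_segment ℝ x z, hxcl⟩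
  rcases this with ⟨w, -, hw1, hw2⟩
  exact hw2 (subset_closure (interior_subset hw1))

/-- Every point of the annulus `F^{+r} \ F^{-r}` is within distance `r` of the frontier. -/
lemma infDist_frontier_le {d : ℕ} {F : Set (EuclideanSpace ℝ (Fin d))} (hFne : F.Nonempty)
    {r : ℝ} (hr0 : 0 ≤ r) {x : EuclideanSpace ℝ (Fin d)}
    (hx : x ∈ plusR F r \ minusR F r) :
    infDist x (frontier F) ≤ r := by
  by_cases hxF : x ∈ F
  · have h2 := hx.2
    simp only [minusR, mem_setOf_eq, not_and, not_le] at h2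
    exact (h2 hxF).le
  · refine le_of_forall_pos_le_add (fun ε hε => ?_)
    have h1 : infDist x F < r + ε := lt_of_le_of_lt hx.1 (by linarith)
    rcases (infDist_lt_iff hFne).mp h1 with ⟨z, hzF, hdz⟩
    rcases segment_meets_frontier hxF hzF with ⟨w, hwseg, hwfr⟩
    have hdw : dist x w ≤ dist x z := by
      have := dist_add_dist_of_mem_segment hwseg
      have := dist_nonneg (x := w) (y := z)
      linarith
    calc infDist x (frontier F) ≤ dist x w := infDist_le_dist_of_mem hwfr
      _ ≤ dist x z := hdw
      _ ≤ r + ε := hdz.le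

/-- an `η`-uniformly-discrete set meets the boundary annulus
`F^{+r} \ F^{-r}` in a finite set whose cardinality, times the volume of a ball of
radius `η/2`, is at most the volume of `(∂F)^{+2r}`. -/
theorem stmt_4 {d : ℕ} (hd : 1 ≤ d) {η : ℝ} (hη : 0 < η)
    (D : Set (EuclideanSpace ℝ (Fin d)))
    (hD : ∀ x ∈ D, ∀ y ∈ D, x ≠ y → η ≤ dist x y)
    (F : Set (EuclideanSpace ℝ (Fin d))) (hFne : F.Nonempty)
    (hFb : Bornology.IsBounded F) {r : ℝ} (hr : η / 2 ≤ r) :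
    (D ∩ (plusR F r \ minusR F r)).Finite ∧
    (D ∩ (plusR F r \ minusR F r)).ncard *
        volume (closedBall (0 : EuclideanSpace ℝ (Fin d)) (η / 2))
      ≤ volume (plusR (frontier F) (2 * r)) := by
  have hη2 : (0:ℝ) < η / 2 := by linarith
  have hr0 : (0:ℝ) < r := lt_of_lt_of_le hη2 hr
  have hi : Nonempty (Fin d) := ⟨⟨0, hd⟩⟩
  have hnt : Nontrivial (EuclideanSpace ℝ (Fin d)) := by
    refine ⟨EuclideanSpace.single ⟨0, hd⟩ (1:ℝ), 0, fun h => ?_⟩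
    have := congrArg (fun v : EuclideanSpace ℝ (Fin d) => v ⟨0, hd⟩) h
    simp [EuclideanSpace.single_apply] at this
  set S := D ∩ (plusR F r \ minusR F r) with hSdef
  -- every point of S is within r of the frontier
  have hSfr : ∀ x ∈ S, infDist x (frontier F) ≤ r := fun x hx =>
    infDist_frontier_le hFne hr0.le hx.2
  -- S is bounded
  rcases hFne with ⟨z0, hz0⟩
  rcases (Metric.isBounded_iff_subset_closedBall z0).mp hFb with ⟨R, hR⟩
  have hSb : Bornology.IsBounded S := by
    refine (Metric.isBounded_closedBall (x := z0) (r := r + 1 + R)).subset (fun x hx => ?_)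
    have h1 : infDist x F < r + 1 := lt_of_le_of_lt hx.2.1 (by linarith)
    rcases (infDist_lt_iff ⟨z0, hz0⟩).mp h1 with ⟨z, hzF, hdz⟩
    have hz' : dist z z0 ≤ R := hR hzF
    have : dist x z0 ≤ dist x z + dist z z0 := dist_triangle x z z0
    simp only [mem_closedBall]
    linarith
  -- S is finite
  have hSfin : S.Finite := by
    have htb : TotallyBounded S :=
      (hSb.isCompact_closure.totallyBounded).subset subset_closure
    rcases Metric.totallyBounded_iff.mp htb (η / 2) hη2 with ⟨t, htfin, hcov⟩
    choose f hf using fun (x : S) => mem_iUnion₂.mp (hcov x.2)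
    have hinj : Function.Injective f := by
      intro a b hab
      have h1 := (hf a).2
      have h2 := (hf b).2
      rw [hab] at h1
      by_contra hne
      have hne' : (a : EuclideanSpace ℝ (Fin d)) ≠ b := fun h => hne (Subtype.ext h)
      have := hD a a.2.1 b b.2.1 hne'
      have : dist (a : EuclideanSpace ℝ (Fin d)) b ≤ dist (a:EuclideanSpace ℝ (Fin d)) (f b) + dist (f b) (b:EuclideanSpace ℝ (Fin d)) := dist_triangle _ _ _
      rw [mem_ball] at h1 h2
      rw [dist_comm (f b)] at this
      linarith
    have : Finite S := by
      have : Finite t := htfin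
      exact Finite.of_injective (fun x : S => (⟨f x, (hf x).1⟩ : t)) (fun a b h =>
        hinj (congrArg Subtype.val h))
    exact S.toFinite
  refine ⟨hSfin, ?_⟩
  -- the open balls of radius η/2 around points of S are pairwise disjoint
  classical
  set v := volume (closedBall (0 : EuclideanSpace ℝ (Fin d)) (η / 2)) with hv
  have hball : ∀ x : EuclideanSpace ℝ (Fin d), volume (ball x (η / 2)) = v := by
    intro x
    rw [hv, Measure.addHaar_closedBall_eq_addHaar_ball, Measure.addHaar_ball_center]
  have hdisj : (hSfin.toFinset : Set (EuclideanSpace ℝ (Fin d))).Pairwise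
      (Function.onFun Disjoint fun x => ball x (η / 2)) := by
    intro a ha b hb hab
    simp only [Set.Finite.coe_toFinset] at ha hb
    refine Set.disjoint_left.mpr (fun z hza hzb => ?_)
    have hd' := hD a ha.1 b hb.1 hab
    rw [mem_ball] at hza hzb
    have : dist a b ≤ dist z a + dist z b := dist_triangle_left a b z
    linarith
  have hmeas : ∀ x ∈ hSfin.toFinset,
      MeasurableSet (ball x (η / 2)) := fun x _ => measurableSet_ball
  have hunion : volume (⋃ x ∈ hSfin.toFinset, ball x (η / 2))
      = ∑ x ∈ hSfin.toFinset, volume (ball x (η / 2)) :=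
    measure_biUnion_finset hdisj hmeas
  have hsum : ∑ x ∈ hSfin.toFinset, volume (ball x (η / 2))
      = (hSfin.toFinset.card : ℕ) * v := by
    rw [Finset.sum_congr rfl (fun x _ => hball x), Finset.sum_const, nsmul_eq_mul]
  have hsub : (⋃ x ∈ hSfin.toFinset, ball x (η / 2)) ⊆ plusR (frontier F) (2 * r) := by
    intro y hy
    rcases mem_iUnion₂.mp hy with ⟨x, hx, hyx⟩
    rw [Set.Finite.mem_toFinset] at hx
    rw [mem_ball] at hyx
    have h1 : infDist y (frontier F) ≤ infDist x (frontier F) + dist y x :=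
      infDist_le_infDist_add_dist
    have h2 := hSfr x hx
    show infDist y (frontier F) ≤ 2 * r
    linarith
  have hcard : S.ncard = hSfin.toFinset.card := Set.ncard_eq_toFinset_card S hSfin
  calc (S.ncard : ENNReal) * v = (hSfin.toFinset.card : ENNReal) * v := by rw [hcard]
    _ = volume (⋃ x ∈ hSfin.toFinset, ball x (η / 2)) := by rw [hunion, hsum]
    _ ≤ volume (plusR (frontier F) (2 * r)) := measure_mono hsub
end

section
/- Let d ≥ 1, let V ⊆ ℝ^d be a bounded measurable set, let r ≥ sup{|v| : v ∈ V}, let D ⊆ ℝ^d be a countable set such that the translates {x + V : x ∈ D} are pairwise disjoint, and let F ⊆ ℝ^d be a bounded measurable set. Then Vol(V) · #(D ∩ F^{−r}) ≤ Vol(⋃_{x∈D} (F ∩ (x+V))) ≤ Vol(V) · #(D ∩ F^{+r}), where the cardinalities are taken in ℕ∪{∞} and the inequalities hold in [0,∞]. -/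
open Metric Set MeasureTheory ENNReal

lemma aux_vol {d : ℕ} (W : Set (EuclideanSpace ℝ (Fin d))) (hWm : MeasurableSet W)
    (S : Set (EuclideanSpace ℝ (Fin d))) (hSc : S.Countable)
    (hdisj : S.PairwiseDisjoint fun x => (fun v => x + v) '' W) :
    volume (⋃ x ∈ S, (fun v => x + v) '' W) = volume W * S.encard := by
  rw [measure_biUnion hSc hdisj (fun x _ => by
      rw [Set.image_add_left]; exact hWm.preimage (measurable_const_add _))]
  simp_rw [Set.image_add_left, measure_preimage_add]
  rw [ENNReal.tsum_set_const, mul_comm]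

/-- for pairwise disjoint translates `x + V` (`x ∈ D`) and a bounded
measurable `F`, `Vol(V)·#(D ∩ F^{-r}) ≤ Vol(⋃_{x∈D} (F ∩ (x+V))) ≤ Vol(V)·#(D ∩ F^{+r})`,
where `r` bounds the norms of elements of `V`; cardinalities are `encard ∈ ℕ∞`. -/
theorem stmt_5 {d : ℕ} (hd : 1 ≤ d)
    (V : Set (EuclideanSpace ℝ (Fin d))) (hVb : Bornology.IsBounded V)
    (hVm : MeasurableSet V)
    {r : ℝ} (hr : sSup ((fun v => ‖v‖) '' V) ≤ r)
    (D : Set (EuclideanSpace ℝ (Fin d))) (hDc : D.Countable)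
    (hdisj : D.PairwiseDisjoint fun x => (fun v => x + v) '' V)
    (F : Set (EuclideanSpace ℝ (Fin d))) (hFb : Bornology.IsBounded F)
    (hFm : MeasurableSet F) :
    volume V * ((D ∩ minusR F r).encard : ℝ≥0∞)
        ≤ volume (⋃ x ∈ D, F ∩ ((fun v => x + v) '' V)) ∧
      volume (⋃ x ∈ D, F ∩ ((fun v => x + v) '' V))
        ≤ volume V * ((D ∩ plusR F r).encard : ℝ≥0∞) := by
  haveI : Nonempty (Fin d) := ⟨⟨0, hd⟩⟩
  haveI : Nontrivial (EuclideanSpace ℝ (Fin d)) := inferInstance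
  -- norms of elements of V are ≤ r
  obtain ⟨R, hR⟩ := hVb.exists_norm_le
  have hbdd : BddAbove ((fun v => ‖v‖) '' V) := ⟨R, by rintro _ ⟨v, hv, rfl⟩; exact hR v hv⟩
  have hVr : ∀ v ∈ V, ‖v‖ ≤ r := fun v hv =>
    le_trans (le_csSup hbdd (mem_image_of_mem _ hv)) hr
  constructor
  · -- lower bound
    set T := D ∩ minusR F r with hT
    set V' := V ∩ ball 0 r with hV'
    -- volume V' = volume V
    have hVV' : volume V' = volume V := by
      apply le_antisymm (measure_mono inter_subset_left)
      have hsub : V ⊆ V' ∪ sphere 0 r := by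
        intro v hv
        by_cases h : v ∈ ball 0 r
        · exact Or.inl ⟨hv, h⟩
        · right
          simp only [mem_ball, mem_sphere, dist_zero_right] at h ⊢
          exact le_antisymm (hVr v hv) (not_lt.1 h)
      calc volume V ≤ volume (V' ∪ sphere 0 r) := measure_mono hsub
        _ ≤ volume V' + volume (sphere (0:EuclideanSpace ℝ (Fin d)) r) := measure_union_le _ _
        _ = volume V' := by rw [Measure.addHaar_sphere, add_zero]
    -- translates of V' by points of T are inside F ∩ (x + V)
    have key : ∀ x ∈ T, (fun v => x + v) '' V' ⊆ F ∩ ((fun v => x + v) '' V) := by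
      rintro x ⟨hxD, hxF, hxd⟩ _ ⟨v, ⟨hvV, hvb⟩, rfl⟩
      refine ⟨?_, mem_image_of_mem _ hvV⟩
      rw [mem_ball, dist_zero_right] at hvb
      have hr0 : 0 < r := lt_of_le_of_lt (norm_nonneg v) hvb
      -- ball x r ⊆ F
      have hxnf : x ∉ frontier F := fun h =>
        absurd (le_trans hxd (infDist_le_dist_of_mem h)) (by simp [hr0.not_ge])
      have hxint : x ∈ interior F := by
        have := closure_eq_interior_union_frontier F ▸ subset_closure hxF
        rcases this with h | h
        · exact h
        · exact absurd h hxnf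
      have hball : ball x r ⊆ interior F ∪ interior Fᶜ := by
        intro y hy
        have hynf : y ∉ frontier F := fun h =>
          absurd (le_trans hxd (infDist_le_dist_of_mem h)) (not_le.2 (mem_ball'.1 hy))
        by_cases hyc : y ∈ closure F
        · rcases closure_eq_interior_union_frontier F ▸ hyc with h | h
          · exact Or.inl h
          · exact absurd h hynf
        · right; rw [interior_compl]; exact hyc
      have hdis : Disjoint (interior F) (interior Fᶜ) :=
        (disjoint_compl_right (a := F)).mono interior_subset interior_subset
      have hbF : ball x r ⊆ interior F :=
        (convex_ball x r).isPreconnected.subset_left_of_subset_union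
          isOpen_interior isOpen_interior hdis hball ⟨x, mem_ball_self hr0, hxint⟩
      exact interior_subset (hbF (by simpa [mem_ball, dist_eq_norm, add_sub_cancel_left] using hvb))
    have hdisj' : T.PairwiseDisjoint fun x => (fun v => x + v) '' V' :=
      PairwiseDisjoint.mono_on ((hdisj.subset inter_subset_left))
        (fun x _ => image_mono inter_subset_left)
    calc volume V * (T.encard : ℝ≥0∞)
        = volume (⋃ x ∈ T, (fun v => x + v) '' V') := by
          rw [aux_vol V' (hVm.inter measurableSet_ball) T
            (hDc.mono inter_subset_left) hdisj', hVV']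
      _ ≤ volume (⋃ x ∈ D, F ∩ ((fun v => x + v) '' V)) := by
          apply measure_mono
          exact iUnion₂_subset fun x hx =>
            subset_iUnion₂_of_subset x hx.1 (key x hx)
  · -- upper bound
    set S := D ∩ plusR F r with hS
    have hsub : (⋃ x ∈ D, F ∩ ((fun v => x + v) '' V)) ⊆
        ⋃ x ∈ S, (fun v => x + v) '' V := by
      refine iUnion₂_subset fun x hx => ?_
      by_cases hxS : x ∈ plusR F r
      · exact (inter_subset_right).trans (subset_biUnion_of_mem (u := fun x => (fun v => x + v) '' V) (show x ∈ S from ⟨hx, hxS⟩))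
      · rintro y ⟨hyF, v, hvV, rfl⟩
        exfalso
        apply hxS
        have : infDist x F ≤ dist x ((fun v => x + v) v) := infDist_le_dist_of_mem hyF
        rw [show (fun v => x + v) v = x + v from rfl, dist_self_add_right] at this
        exact le_trans this (hVr v hvV)
    calc volume (⋃ x ∈ D, F ∩ ((fun v => x + v) '' V))
        ≤ volume (⋃ x ∈ S, (fun v => x + v) '' V) := measure_mono hsub
      _ = volume V * (S.encard : ℝ≥0∞) :=
          aux_vol V hVm S (hDc.mono inter_subset_left) (hdisj.subset inter_subset_left)
end

section
/- Let Λ = (Λ_i)_{i≤m} be an m-multiset in ℝ^d such that any two distinct points of supp(Λ) are at distance ≥ η > 0, let {F_n} be a van Hove sequence, and suppose Λ has uniform cluster frequencies relative to {F_n}. Let P = (P_i)_{i≤m} be a cluster of Λ with not all P_i empty, let V ⊆ ℝ^d be a bounded Borel set with diam(V) < η, let D = {x ∈ ℝ^d : x + P_i ⊆ Λ_i for all i ≤ m}, and put J(h,F_n) = Vol(⋃_{x∈D} ((h+F_n) ∩ (x+V))). Then lim_{n→∞} J(h,F_n)/Vol(F_n) = Vol(V) · freq(P,Λ), uniformly in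 h ∈ ℝ^d. -/
open Metric Set Filter MeasureTheory Topology
open scoped ENNReal

section Helpers

variable {d : ℕ}
local notation "E" => EuclideanSpace ℝ (Fin d)

/-- A preconnected set meeting both `s` and its complement meets the frontier of `s`. -/
lemma my_crossing {X : Type*} [TopologicalSpace X] {s t : Set X} (ht : IsPreconnected t)
    (h1 : (t ∩ s).Nonempty) (h2 : (t \ s).Nonempty) : (t ∩ frontier s).Nonempty := by
  by_contra h
  rw [Set.not_nonempty_iff_eq_empty] at h
  have hsub : t ⊆ interior s ∪ interior sᶜ := by
    intro z hz
    have hzf : z ∉ frontier s := fun hf => (Set.eq_empty_iff_forall_notMem.1 h z) ⟨hz, hf⟩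
    have : z ∈ (frontier s)ᶜ := hzf
    rwa [compl_frontier_eq_union_interior] at this
  obtain ⟨a, hat, has⟩ := h1
  obtain ⟨b, hbt, hbs⟩ := h2
  have h1' : (t ∩ interior s).Nonempty := by
    refine ⟨a, hat, ?_⟩
    rcases hsub hat with h' | h'
    · exact h'
    · exact absurd (interior_subset h') (by simpa using has)
  have h2' : (t ∩ interior sᶜ).Nonempty := by
    refine ⟨b, hbt, ?_⟩
    rcases hsub hbt with h' | h'
    · exact absurd (interior_subset h') hbs
    · exact h'
  obtain ⟨z, -, hz1, hz2⟩ := ht _ _ isOpen_interior isOpen_interior hsub h1' h2'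
  exact (interior_subset hz2) (interior_subset hz1)

/-- Crossing a set along a segment: if `a ∈ s`, `b ∉ s`, there is a frontier point `z`
with `dist a z ≤ dist a b`. -/
lemma my_segment_frontier {a b : E} {s : Set E} (ha : a ∈ s) (hb : b ∉ s) :
    ∃ z ∈ frontier s, dist a z ≤ dist a b := by
  obtain ⟨z, hz1, hz2⟩ := my_crossing (convex_segment a b).isPreconnected
    ⟨a, left_mem_segment ℝ a b, ha⟩ ⟨b, right_mem_segment ℝ a b, hb⟩
  refine ⟨z, hz2, ?_⟩
  have h1 : segment ℝ a b ⊆ closedBall a (dist a b) :=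
    (convex_closedBall a (dist a b)).segment_subset (by simp [dist_nonneg])
      (by simp [dist_comm, mem_closedBall])
  have := h1 hz1
  rwa [mem_closedBall, dist_comm] at this

lemma my_finset_packing {η : ℝ} (hη : 0 < η) {T : Set E}
    (t : Finset E) (hs : ∀ x ∈ t, ∀ y ∈ t, x ≠ y → η ≤ dist x y)
    (hsub : ∀ x ∈ t, ball x (η/3) ⊆ T) :
    (t.card : ℝ≥0∞) * volume (ball (0:E) (η/3)) ≤ volume T := by
  have hdisj : (t : Set E).PairwiseDisjoint (fun x => ball x (η/3)) := by
    intro x hx y hy hxy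
    apply ball_disjoint_ball
    calc η/3 + η/3 ≤ η := by linarith
    _ ≤ dist x y := hs x hx y hy hxy
  have h1 : volume (⋃ x ∈ t, ball x (η/3)) = ∑ x ∈ t, volume (ball x (η/3)) :=
    measure_biUnion_finset hdisj (fun _ _ => measurableSet_ball)
  have h2 : ∀ x : E, volume (ball x (η/3)) = volume (ball (0:E) (η/3)) := fun x =>
    Measure.addHaar_ball_center volume x _
  have h3 : (⋃ x ∈ t, ball x (η/3)) ⊆ T := Set.iUnion₂_subset hsub
  calc (t.card : ℝ≥0∞) * volume (ball (0:E) (η/3))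
      = ∑ x ∈ t, volume (ball x (η/3)) := by
        rw [Finset.sum_congr rfl (fun x _ => h2 x), Finset.sum_const, nsmul_eq_mul]
    _ = volume (⋃ x ∈ t, ball x (η/3)) := h1.symm
    _ ≤ volume T := measure_mono h3

/-- Packing: an `η`-separated set whose `η/3`-balls lie in a set of finite volume is
finite, with an explicit cardinality bound. -/
lemma my_packing {η : ℝ} (hη : 0 < η) {s T : Set E}
    (hs : ∀ x ∈ s, ∀ y ∈ s, x ≠ y → η ≤ dist x y)
    (hsub : ∀ x ∈ s, ball x (η/3) ⊆ T) (hT : volume T < ⊤) :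
    s.Finite ∧ (s.ncard : ℝ≥0∞) * volume (ball (0:E) (η/3)) ≤ volume T := by
  have hc : (0:ℝ≥0∞) < volume (ball (0:E) (η/3)) := measure_ball_pos _ _ (by linarith)
  have key : ∀ t : Finset E, ↑t ⊆ s →
      (t.card : ℝ≥0∞) * volume (ball (0:E) (η/3)) ≤ volume T := by
    intro t ht
    exact my_finset_packing hη t (fun x hx y hy => hs x (ht hx) y (ht hy))
      (fun x hx => hsub x (ht hx))
  have hfin : s.Finite := by
    by_contra hinf
    obtain ⟨N, hN⟩ := ENNReal.exists_nat_gt (r := volume T / volume (ball (0:E) (η/3)))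
      (by
        intro h
        rw [ENNReal.div_eq_top] at h
        rcases h with ⟨_, h2⟩ | ⟨h1, _⟩
        · exact hc.ne' h2
        · exact hT.ne h1)
    have h2 : volume T < (N : ℝ≥0∞) * volume (ball (0:E) (η/3)) := by
      rw [← ENNReal.div_lt_iff (Or.inl hc.ne') (Or.inl (measure_ball_lt_top).ne)]
      exact hN
    obtain ⟨u, hus, hufin, hucard⟩ := Set.Infinite.exists_subset_ncard_eq hinf N
    have hkey := key hufin.toFinset (by simpa using hus)
    rw [Set.ncard_eq_toFinset_card u hufin] at hucard
    rw [hucard] at hkey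
    exact absurd hkey (not_le.mpr h2)
  refine ⟨hfin, ?_⟩
  have := key hfin.toFinset (by simp)
  rwa [Set.ncard_eq_toFinset_card s hfin]

/-- An `η`-separated bounded set is finite. -/
lemma my_sep_finite {η : ℝ} (hη : 0 < η) {s : Set E}
    (hs : ∀ x ∈ s, ∀ y ∈ s, x ≠ y → η ≤ dist x y) (hb : Bornology.IsBounded s) :
    s.Finite := by
  obtain ⟨R, hR⟩ := hb.subset_closedBall (0:E)
  refine (my_packing hη hs (T := closedBall (0:E) (R + η)) ?_ measure_closedBall_lt_top).1
  intro x hx z hz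
  have h1 : dist x 0 ≤ R := hR hx
  have h2 : dist z x < η/3 := hz
  have : dist z 0 ≤ dist z x + dist x 0 := dist_triangle _ _ _
  exact mem_closedBall.mpr (by linarith)

lemma my_ne_univ (hd : 1 ≤ d) {s : Set E} (hb : Bornology.IsBounded s) : s ≠ univ := by
  intro h
  obtain ⟨R, hR⟩ := hb.subset_closedBall (0:E)
  set y : E := (|R|+1) • EuclideanSpace.single (⟨0, hd⟩ : Fin d) (1:ℝ) with hy
  have hyn : ‖y‖ = |R| + 1 := by
    rw [hy, norm_smul, EuclideanSpace.norm_single]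
    simp [abs_of_nonneg (by positivity : (0:ℝ) ≤ |R|+1)]
  have hmem : y ∈ closedBall (0:E) R := hR (h ▸ mem_univ y)
  rw [mem_closedBall, dist_zero_right, hyn] at hmem
  linarith [le_abs_self R]

/-- The `ρ`-neighbourhood of the frontier of a nonempty bounded set has finite volume. -/
lemma my_W_lt_top (hd : 1 ≤ d) {G : Set E} (hGne : G.Nonempty)
    (hGb : Bornology.IsBounded G) {ρ : ℝ} (hρ : 0 < ρ) :
    volume {z : E | infDist z (frontier G) ≤ ρ} < ⊤ := by
  have hfr : (frontier G).Nonempty :=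
    nonempty_frontier_iff.mpr ⟨hGne, my_ne_univ hd hGb⟩
  have hfb : Bornology.IsBounded (frontier G) :=
    (hGb.closure).subset frontier_subset_closure
  obtain ⟨R, hR⟩ := hfb.subset_closedBall (0:E)
  have hsub : {z : E | infDist z (frontier G) ≤ ρ} ⊆ closedBall (0:E) (R + (ρ + 1)) := by
    intro z hz
    have : infDist z (frontier G) < ρ + 1 := lt_of_le_of_lt hz (by linarith)
    obtain ⟨w, hw, hdw⟩ := (infDist_lt_iff hfr).mp this
    have h1 : dist w 0 ≤ R := hR hw
    have : dist z 0 ≤ dist z w + dist w 0 := dist_triangle _ _ _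
    exact mem_closedBall.mpr (by linarith)
  exact lt_of_le_of_lt (measure_mono hsub) measure_closedBall_lt_top

lemma my_isometry (h : E) : Isometry (fun f : E => h + f) :=
  Isometry.of_dist_eq (fun a b => dist_add_left h a b)

lemma my_meas_image (h : E) {S : Set E} (hS : MeasurableSet S) :
    MeasurableSet ((fun f => h + f) '' S) := by
  rw [Set.image_add_left]; exact hS.preimage (measurable_const_add _)

lemma my_vol_image (h : E) (S : Set E) : volume ((fun f => h + f) '' S) = volume S := by
  rw [Set.image_add_left]; exact measure_preimage_add volume _ S

lemma my_bounded_image (h : E) {S : Set E} (hS : Bornology.IsBounded S) :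
    Bornology.IsBounded ((fun f => h + f) '' S) :=
  (my_isometry h).lipschitz.isBounded_image hS

end Helpers

/-- The number of translates of the cluster `P` contained in `A` (inside the multiset `Λ`):
`L_P(A) = #{x : x + Pᵢ ⊆ A ∩ Λᵢ for all i}`. -/
noncomputable def clusterCount {m d : ℕ} (Λ P : Fin m → Set (EuclideanSpace ℝ (Fin d)))
    (A : Set (EuclideanSpace ℝ (Fin d))) : ℕ :=
  {x : EuclideanSpace ℝ (Fin d) | ∀ i, (fun p => x + p) '' P i ⊆ A ∩ Λ i}.ncard


section Key
variable {d m : ℕ}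
local notation "E" => EuclideanSpace ℝ (Fin d)

lemma my_key (hd : 1 ≤ d) {η : ℝ} (hη : 0 < η)
    (Λ : Fin m → Set E)
    (hsep : ∀ x ∈ ⋃ i, Λ i, ∀ y ∈ ⋃ i, Λ i, x ≠ y → η ≤ dist x y)
    (P : Fin m → Set E) (hP : ∀ i, P i ⊆ Λ i ∧ (P i).Finite)
    {i₀ : Fin m} {p₀ : E} (hp₀ : p₀ ∈ P i₀)
    (V : Set E) (hVm : MeasurableSet V) (hVd : diam V < η) (hVne : V.Nonempty)
    {RV RP : ℝ} (hRV : V ⊆ closedBall 0 RV) (hRP : ∀ i, P i ⊆ closedBall 0 RP)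
    (G : Set E) (hGne : G.Nonempty) (hGb : Bornology.IsBounded G) (hGm : MeasurableSet G)
    (h : E) :
    ∃ B : ℕ,
      ((B : ℝ≥0∞) * volume (ball (0:E) (η/3)) ≤
        volume {z : E | infDist z (frontier G) ≤ 2*(RV+RP) + η}) ∧
      volume (⋃ x ∈ {x : E | ∀ i, (fun p => x + p) '' P i ⊆ Λ i},
          ((fun f => h + f) '' G) ∩ ((fun v => x + v) '' V))
        ≤ ((clusterCount Λ P ((fun f => h + f) '' G) : ℝ≥0∞) + B) * volume V ∧
      (clusterCount Λ P ((fun f => h + f) '' G) : ℝ≥0∞) * volume V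
        ≤ volume (⋃ x ∈ {x : E | ∀ i, (fun p => x + p) '' P i ⊆ Λ i},
            ((fun f => h + f) '' G) ∩ ((fun v => x + v) '' V)) + (B : ℝ≥0∞) * volume V := by
  have hRP0 : 0 ≤ RP := by
    have := hRP i₀ hp₀; rw [mem_closedBall] at this; exact dist_nonneg.trans this
  have hRV0 : 0 ≤ RV := by
    obtain ⟨v, hv⟩ := hVne
    have := hRV hv; rw [mem_closedBall] at this; exact dist_nonneg.trans this
  set A : Set E := (fun f => h + f) '' G with hA
  have hAm : MeasurableSet A := my_meas_image h hGm
  have hAb : Bornology.IsBounded A := my_bounded_image h hGb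
  set D : Set E := {x : E | ∀ i, (fun p => x + p) '' P i ⊆ Λ i} with hD
  -- separation of D
  have hDsep : ∀ x ∈ D, ∀ y ∈ D, x ≠ y → η ≤ dist x y := by
    intro x hx y hy hxy
    have hx' : x + p₀ ∈ Λ i₀ := hx i₀ ⟨p₀, hp₀, rfl⟩
    have hy' : y + p₀ ∈ Λ i₀ := hy i₀ ⟨p₀, hp₀, rfl⟩
    have := hsep (x + p₀) (Set.mem_iUnion.mpr ⟨i₀, hx'⟩) (y + p₀)
      (Set.mem_iUnion.mpr ⟨i₀, hy'⟩) (by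
        intro hc; exact hxy (by simpa using congrArg (fun z => z - p₀) hc))
    rwa [dist_add_right] at this
  -- disjointness of translated copies of V
  have hdisj : ∀ x ∈ D, ∀ y ∈ D, x ≠ y →
      Disjoint ((fun v => x + v) '' V) ((fun v => y + v) '' V) := by
    intro x hx y hy hxy
    rw [Set.disjoint_left]
    rintro z ⟨v, hv, rfl⟩ ⟨w, hw, hzw⟩
    have hvw : dist v w ≤ diam V := dist_le_diam_of_mem
      (Bornology.IsBounded.subset (isBounded_closedBall) hRV) hv hw
    have h1 : x + v = y + w := hzw.symm
    have : dist x y = dist v w := by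
      have : x = (x + v) - v := by abel
      have hyw : y = (x + v) - w := by rw [h1]; abel
      calc dist x y = dist ((x+v) - v) ((x+v) - w) := by rw [← this, ← hyw]
      _ = dist v w := dist_sub_left _ _ _
    have := hDsep x hx y hy hxy
    linarith [hvw, hVd]
  -- the S set and the cluster count
  set S : Set E := {x : E | x ∈ D ∧ ∀ i, (fun p => x + p) '' P i ⊆ A} with hS
  have hSL : clusterCount Λ P A = S.ncard := by
    unfold clusterCount
    congr 1
    ext x
    simp only [hS, hD, Set.mem_setOf_eq, Set.subset_inter_iff]
    constructor
    · intro hx; exact ⟨fun i => (hx i).2, fun i => (hx i).1⟩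
    · intro hx i; exact ⟨hx.2 i, hx.1 i⟩
  -- frontier of A
  have hfrA : frontier A = (fun f => h + f) '' frontier G :=
    ((Homeomorph.addLeft h).image_frontier G).symm
  -- the boundary set
  set Bd : Set E := {x : E | x ∈ D ∧ infDist (x + p₀) (frontier A) ≤ 2*(RV+RP)} with hBd
  -- packing bound for Bd
  have hWlt : volume {z : E | infDist z (frontier G) ≤ 2*(RV+RP) + η} < ⊤ :=
    my_W_lt_top hd hGne hGb (by linarith)
  have hBdpack : Bd.Finite ∧ (Bd.ncard : ℝ≥0∞) * volume (ball (0:E) (η/3)) ≤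
      volume {z : E | infDist z (frontier G) ≤ 2*(RV+RP) + η} := by
    set f : E → E := fun x => x + (p₀ - h) with hf
    have hfinj : Function.Injective f := fun a b hab => by
      simpa [hf] using congrArg (fun z => z - (p₀ - h)) hab
    have him : ∀ x, h + f x = x + p₀ := by intro x; simp [hf]; abel
    have hsep' : ∀ a ∈ f '' Bd, ∀ b ∈ f '' Bd, a ≠ b → η ≤ dist a b := by
      rintro a ⟨x, hx, rfl⟩ b ⟨y, hy, rfl⟩ hab
      have hxy : x ≠ y := fun hc => hab (by rw [hc])
      have := hDsep x hx.1 y hy.1 hxy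
      rwa [hf, dist_add_right]
    have hsub' : ∀ a ∈ f '' Bd, ball a (η/3) ⊆
        {z : E | infDist z (frontier G) ≤ 2*(RV+RP) + η} := by
      rintro a ⟨x, hx, rfl⟩ z hz
      have h1 : infDist (h + f x) (frontier A) ≤ 2*(RV+RP) := by rw [him]; exact hx.2
      have h2 : infDist (f x) (frontier G) ≤ 2*(RV+RP) := by
        rwa [hfrA, infDist_image (my_isometry h)] at h1
      have h3 : infDist z (frontier G) ≤ infDist (f x) (frontier G) + dist z (f x) :=
        infDist_le_infDist_add_dist
      have h4 : dist z (f x) < η/3 := hz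
      exact Set.mem_setOf_eq ▸ (by linarith)
    obtain ⟨hfin', hcard'⟩ := my_packing hη hsep' hsub' hWlt
    have hBdfin : Bd.Finite := (hfin'.of_finite_image (hfinj.injOn))
    have : (f '' Bd).ncard = Bd.ncard := Set.ncard_image_of_injective _ hfinj
    rw [this] at hcard'
    exact ⟨hBdfin, hcard'⟩
  obtain ⟨hBdfin, hBdcard⟩ := hBdpack
  -- auxiliary facts about translated copies of V
  have hxVm : ∀ x : E, MeasurableSet ((fun v => x + v) '' V) := fun x => my_meas_image x hVm
  have hxVvol : ∀ x : E, volume ((fun v => x + v) '' V) = volume V := fun x => my_vol_image x V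
  obtain ⟨RA, hRA⟩ := hAb.subset_closedBall (0:E)
  -- the set of x contributing to the union
  set T : Set E := {x : E | x ∈ D ∧ (A ∩ (fun v => x + v) '' V).Nonempty} with hT
  have hTfin : T.Finite := by
    apply my_sep_finite hη (fun x hx y hy => hDsep x hx.1 y hy.1)
    apply Bornology.IsBounded.subset (isBounded_closedBall (x := (0:E)) (r := RA + RV))
    rintro x ⟨hxD, z, hzA, v, hv, hzv⟩
    have h1 : dist (x + v) 0 ≤ RA := hRA (by rw [show x + v = z from hzv]; exact hzA)
    have h2 : dist v 0 ≤ RV := hRV hv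
    have h3 : dist x 0 = dist (x + v) (0 + v) := (dist_add_right x 0 v).symm
    have h4 : dist (x + v) (0 + v) ≤ dist (x + v) 0 + dist 0 (0 + v) := dist_triangle _ _ _
    have h5 : dist 0 (0 + v) ≤ RV := by rw [zero_add, dist_comm]; exact h2
    exact mem_closedBall.mpr (by rw [h3]; linarith)
  have hSfin : S.Finite := by
    apply my_sep_finite hη (fun x hx y hy => hDsep x hx.1 y hy.1)
    apply Bornology.IsBounded.subset (isBounded_closedBall (x := (0:E)) (r := RA + RP))
    rintro x ⟨hxD, hxA⟩
    have h1 : dist (x + p₀) 0 ≤ RA := hRA (hxA i₀ ⟨p₀, hp₀, rfl⟩)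
    have h2 : dist p₀ 0 ≤ RP := hRP i₀ hp₀
    have h3 : dist x 0 = dist (x + p₀) (0 + p₀) := (dist_add_right x 0 p₀).symm
    have h4 : dist (x + p₀) (0 + p₀) ≤ dist (x + p₀) 0 + dist 0 (0 + p₀) := dist_triangle _ _ _
    have h5 : dist 0 (0 + p₀) ≤ RP := by rw [zero_add, dist_comm]; exact h2
    exact mem_closedBall.mpr (by rw [h3]; linarith)
  -- rewrite the union over D as a union over the finite set T
  have hUT : (⋃ x ∈ D, (A ∩ (fun v => x + v) '' V)) = ⋃ x ∈ hTfin.toFinset, (A ∩ (fun v => x + v) '' V) := by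
    ext z
    simp only [Set.mem_iUnion, Set.Finite.mem_toFinset]
    constructor
    · rintro ⟨x, hx, hz⟩
      exact ⟨x, ⟨hx, ⟨z, hz⟩⟩, hz⟩
    · rintro ⟨x, hx, hz⟩
      exact ⟨x, hx.1, hz⟩
  have hdisjT : (↑hTfin.toFinset : Set E).PairwiseDisjoint (fun x => A ∩ (fun v => x + v) '' V) := by
    intro x hx y hy hxy
    rw [Set.Finite.coe_toFinset] at hx hy
    exact Disjoint.mono Set.inter_subset_right Set.inter_subset_right
      (hdisj x hx.1 y hy.1 hxy)
  have hvolU : volume (⋃ x ∈ D, (A ∩ (fun v => x + v) '' V)) =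
      ∑ x ∈ hTfin.toFinset, volume (A ∩ (fun v => x + v) '' V) := by
    rw [hUT]
    exact measure_biUnion_finset hdisjT (fun x _ => hAm.inter (hxVm x))
  -- T is covered by S and Bd
  have hTsub : T ⊆ S ∪ Bd := by
    rintro x ⟨hxD, z, hzA, v, hv, hzv⟩
    by_cases hxS : ∀ i, (fun p => x + p) '' P i ⊆ A
    · exact Or.inl ⟨hxD, hxS⟩
    · push_neg at hxS
      obtain ⟨j, hj⟩ := hxS
      rw [Set.not_subset] at hj
      obtain ⟨w, ⟨p, hp, hwp⟩, hwA⟩ := hj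
      obtain ⟨z', hz', hdz'⟩ := my_segment_frontier (a := x + v) (b := x + p) (s := A)
        (by rw [show x + v = z from hzv]; exact hzA) (by rw [show x + p = w from hwp]; exact hwA)
      refine Or.inr ⟨hxD, ?_⟩
      have h1 : dist (x + v) (x + p) = dist v p := dist_add_left x v p
      have h2 : dist v p ≤ RV + RP := by
        have hv' := hRV hv
        have hp' := hRP j hp
        rw [mem_closedBall] at hv' hp'
        calc dist v p ≤ dist v 0 + dist 0 p := dist_triangle _ _ _
        _ ≤ RV + RP := by rw [dist_comm (0:E) p]; exact add_le_add hv' hp'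
      have h3 : dist (x + p₀) (x + v) = dist p₀ v := dist_add_left x p₀ v
      have h4 : dist p₀ v ≤ RP + RV := by
        have hv' := hRV hv
        have hp' := hRP i₀ hp₀
        rw [mem_closedBall] at hv' hp'
        calc dist p₀ v ≤ dist p₀ 0 + dist 0 v := dist_triangle _ _ _
        _ ≤ RP + RV := by rw [dist_comm (0:E) v]; exact add_le_add hp' hv'
      calc infDist (x + p₀) (frontier A) ≤ dist (x + p₀) z' := infDist_le_dist_of_mem hz'
      _ ≤ dist (x + p₀) (x + v) + dist (x + v) z' := dist_triangle _ _ _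
      _ ≤ (RP + RV) + (RV + RP) := add_le_add (h3 ▸ h4) (hdz'.trans (h1 ▸ h2))
      _ = 2*(RV+RP) := by ring
  -- upper bound
  have hTcard : hTfin.toFinset.card = T.ncard := (Set.ncard_eq_toFinset_card T hTfin).symm
  have hTle : T.ncard ≤ S.ncard + Bd.ncard := by
    calc T.ncard ≤ (S ∪ Bd).ncard := Set.ncard_le_ncard hTsub (hSfin.union hBdfin)
    _ ≤ S.ncard + Bd.ncard := Set.ncard_union_le S Bd
  have hupper : volume (⋃ x ∈ D, (A ∩ (fun v => x + v) '' V))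
      ≤ ((clusterCount Λ P A : ℝ≥0∞) + Bd.ncard) * volume V := by
    rw [hvolU, hSL]
    calc ∑ x ∈ hTfin.toFinset, volume (A ∩ (fun v => x + v) '' V)
        ≤ ∑ x ∈ hTfin.toFinset, volume V := by
          apply Finset.sum_le_sum
          intro x _
          exact le_trans (measure_mono Set.inter_subset_right) (hxVvol x).le
      _ = (hTfin.toFinset.card : ℝ≥0∞) * volume V := by
          rw [Finset.sum_const, nsmul_eq_mul]
      _ ≤ ((S.ncard : ℝ≥0∞) + Bd.ncard) * volume V := by
          apply mul_le_mul_left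
          rw [hTcard]
          calc (T.ncard : ℝ≥0∞) ≤ ((S.ncard + Bd.ncard : ℕ) : ℝ≥0∞) := by exact_mod_cast hTle
          _ = (S.ncard : ℝ≥0∞) + Bd.ncard := by push_cast; ring
  -- lower bound
  set S₀ : Set E := {x : E | x ∈ S ∧ (fun v => x + v) '' V ⊆ A} with hS₀
  have hS₀T : S₀ ⊆ T := by
    rintro x ⟨hxS, hxV⟩
    obtain ⟨v₀, hv₀⟩ := hVne
    exact ⟨hxS.1, ⟨x + v₀, hxV ⟨v₀, hv₀, rfl⟩, ⟨v₀, hv₀, rfl⟩⟩⟩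
  have hS₀fin : S₀.Finite := hTfin.subset hS₀T
  have hSsub : S ⊆ S₀ ∪ Bd := by
    intro x hxS
    by_cases hxV : (fun v => x + v) '' V ⊆ A
    · exact Or.inl ⟨hxS, hxV⟩
    · rw [Set.not_subset] at hxV
      obtain ⟨w, ⟨v, hv, hwv⟩, hwA⟩ := hxV
      obtain ⟨z', hz', hdz'⟩ := my_segment_frontier (a := x + p₀) (b := x + v) (s := A)
        (hxS.2 i₀ ⟨p₀, hp₀, rfl⟩) (by rw [show x + v = w from hwv]; exact hwA)
      refine Or.inr ⟨hxS.1, ?_⟩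
      have h3 : dist (x + p₀) (x + v) = dist p₀ v := dist_add_left x p₀ v
      have h4 : dist p₀ v ≤ RP + RV := by
        have hv' := hRV hv
        have hp' := hRP i₀ hp₀
        rw [mem_closedBall] at hv' hp'
        calc dist p₀ v ≤ dist p₀ 0 + dist 0 v := dist_triangle _ _ _
        _ ≤ RP + RV := by rw [dist_comm (0:E) v]; exact add_le_add hp' hv'
      calc infDist (x + p₀) (frontier A) ≤ dist (x + p₀) z' := infDist_le_dist_of_mem hz'
      _ ≤ dist p₀ v := h3 ▸ hdz'
      _ ≤ RP + RV := h4
      _ ≤ 2*(RV+RP) := by linarith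
  have hSle : S.ncard ≤ S₀.ncard + Bd.ncard := by
    calc S.ncard ≤ (S₀ ∪ Bd).ncard := Set.ncard_le_ncard hSsub (hS₀fin.union hBdfin)
    _ ≤ S₀.ncard + Bd.ncard := Set.ncard_union_le S₀ Bd
  have hlowsum : (S₀.ncard : ℝ≥0∞) * volume V ≤ volume (⋃ x ∈ D, (A ∩ (fun v => x + v) '' V)) := by
    rw [hvolU]
    have hsubf : hS₀fin.toFinset ⊆ hTfin.toFinset := by
      intro x hx
      rw [Set.Finite.mem_toFinset] at hx ⊢
      exact hS₀T hx
    calc (S₀.ncard : ℝ≥0∞) * volume V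
        = ∑ x ∈ hS₀fin.toFinset, volume V := by
          rw [Finset.sum_const, nsmul_eq_mul, Set.ncard_eq_toFinset_card S₀ hS₀fin]
      _ = ∑ x ∈ hS₀fin.toFinset, volume (A ∩ (fun v => x + v) '' V) := by
          apply Finset.sum_congr rfl
          intro x hx
          rw [Set.Finite.mem_toFinset] at hx
          rw [Set.inter_eq_right.mpr hx.2, hxVvol x]
      _ ≤ ∑ x ∈ hTfin.toFinset, volume (A ∩ (fun v => x + v) '' V) :=
          Finset.sum_le_sum_of_subset hsubf
  have hlower : (clusterCount Λ P A : ℝ≥0∞) * volume V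
      ≤ volume (⋃ x ∈ D, (A ∩ (fun v => x + v) '' V)) + (Bd.ncard : ℝ≥0∞) * volume V := by
    rw [hSL]
    calc (S.ncard : ℝ≥0∞) * volume V
        ≤ ((S₀.ncard + Bd.ncard : ℕ) : ℝ≥0∞) * volume V := by
          apply mul_le_mul_left
          exact_mod_cast hSle
      _ = (S₀.ncard : ℝ≥0∞) * volume V + (Bd.ncard : ℝ≥0∞) * volume V := by
          push_cast; ring
      _ ≤ volume (⋃ x ∈ D, (A ∩ (fun v => x + v) '' V)) + (Bd.ncard : ℝ≥0∞) * volume V :=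
          add_le_add_left hlowsum _
  exact ⟨Bd.ncard, hBdcard, hupper, hlower⟩

end Key

/-- A van Hove sequence: nonempty bounded measurable sets of positive volume with
`Vol((∂Fₙ)^{+r})/Vol(Fₙ) → 0` for every `r > 0`. -/
def IsVanHove {d : ℕ} (F : ℕ → Set (EuclideanSpace ℝ (Fin d))) : Prop :=
  (∀ n, (F n).Nonempty ∧ Bornology.IsBounded (F n) ∧ MeasurableSet (F n) ∧
      0 < volume (F n)) ∧
  ∀ r > (0 : ℝ),
    Tendsto (fun n => volume {x | infDist x (frontier (F n)) ≤ r} / volume (F n))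
      atTop (𝓝 0)

/-- `Λ` has uniform cluster frequencies relative to `{Fₙ}`, with frequency function `freq`:
for every cluster `Q` of `Λ`, `L_Q(x+Fₙ)/Vol(Fₙ) → freq Q` uniformly in `x`. -/
def HasUCFWith {m d : ℕ} (Λ : Fin m → Set (EuclideanSpace ℝ (Fin d)))
    (F : ℕ → Set (EuclideanSpace ℝ (Fin d)))
    (freq : (Fin m → Set (EuclideanSpace ℝ (Fin d))) → ℝ) : Prop :=
  ∀ Q : Fin m → Set (EuclideanSpace ℝ (Fin d)), (∀ i, Q i ⊆ Λ i ∧ (Q i).Finite) →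
    TendstoUniformly
      (fun n x => (clusterCount Λ Q ((fun f => x + f) '' F n) : ℝ) / (volume (F n)).toReal)
      (fun _ => freq Q) atTop

/-- under UCF, with `D = {x : x + Pᵢ ⊆ Λᵢ ∀i}` and
`J(h,Fₙ) = Vol(⋃_{x∈D} ((h+Fₙ) ∩ (x+V)))`, we have
`J(h,Fₙ)/Vol(Fₙ) → Vol(V)·freq(P,Λ)` uniformly in `h`. -/
theorem stmt_7 {m d : ℕ} (hm : 1 ≤ m) (hd : 1 ≤ d) {η : ℝ} (hη : 0 < η)
    (Λ : Fin m → Set (EuclideanSpace ℝ (Fin d)))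
    (hsep : ∀ x ∈ ⋃ i, Λ i, ∀ y ∈ ⋃ i, Λ i, x ≠ y → η ≤ dist x y)
    (F : ℕ → Set (EuclideanSpace ℝ (Fin d))) (hF : IsVanHove F)
    (freq : (Fin m → Set (EuclideanSpace ℝ (Fin d))) → ℝ)
    (hUCF : HasUCFWith Λ F freq)
    (P : Fin m → Set (EuclideanSpace ℝ (Fin d)))
    (hP : ∀ i, P i ⊆ Λ i ∧ (P i).Finite) (hPne : ∃ i, (P i).Nonempty)
    (V : Set (EuclideanSpace ℝ (Fin d))) (hVb : Bornology.IsBounded V)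
    (hVm : MeasurableSet V) (hVd : diam V < η) :
    TendstoUniformly
      (fun n h =>
        (volume (⋃ x ∈ {x : EuclideanSpace ℝ (Fin d) | ∀ i, (fun p => x + p) '' P i ⊆ Λ i},
            ((fun f => h + f) '' F n) ∩ ((fun v => x + v) '' V))).toReal
            / (volume (F n)).toReal)
      (fun _ => (volume V).toReal * freq P) atTop := by
  classical
  obtain ⟨i₀, p₀, hp₀⟩ : ∃ i p, p ∈ P i := by
    obtain ⟨i, p, hp⟩ := hPne; exact ⟨i, p, hp⟩
  -- trivial case: V empty
  rcases V.eq_empty_or_nonempty with rfl | hVne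
  · rw [Metric.tendstoUniformly_iff]
    intro ε hε
    filter_upwards with n h
    simp [hε]
  -- main case
  obtain ⟨RV, hRV⟩ := hVb.subset_closedBall (0 : EuclideanSpace ℝ (Fin d))
  have hPb : Bornology.IsBounded (⋃ i, P i) :=
    (Set.finite_iUnion (fun i => (hP i).2)).isBounded
  obtain ⟨RP, hRP'⟩ := hPb.subset_closedBall (0 : EuclideanSpace ℝ (Fin d))
  have hRP : ∀ i, P i ⊆ closedBall 0 RP := fun i =>
    (Set.subset_iUnion P i).trans hRP'
  have hRP0 : 0 ≤ RP := by
    have := hRP i₀ hp₀; rw [mem_closedBall] at this; exact dist_nonneg.trans this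
  have hRV0 : 0 ≤ RV := by
    obtain ⟨v, hv⟩ := hVne
    have := hRV hv; rw [mem_closedBall] at this; exact dist_nonneg.trans this
  set ρ : ℝ := 2*(RV+RP) + η with hρdef
  have hρ : 0 < ρ := by positivity
  set c : ℝ≥0∞ := volume (ball (0 : EuclideanSpace ℝ (Fin d)) (η/3)) with hc
  have hcpos : 0 < c := measure_ball_pos _ _ (by linarith)
  have hcfin : c < ⊤ := measure_ball_lt_top
  have hcR : 0 < c.toReal := ENNReal.toReal_pos hcpos.ne' hcfin.ne
  have hVfin : volume V < ⊤ := hVb.measure_lt_top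
  set vb : ℝ := (volume V).toReal with hvb
  have hvb0 : 0 ≤ vb := ENNReal.toReal_nonneg
  set M : ℝ := vb + 1 with hM
  have hM0 : 0 < M := by positivity
  have hvbM : vb < M := by rw [hM]; linarith
  clear_value M
  rw [Metric.tendstoUniformly_iff]
  intro ε hε
  set ε₁ : ℝ := ε / (2*M) with hε₁
  have hε₁0 : 0 < ε₁ := by positivity
  set δ : ℝ := ε * c.toReal / (2*M) with hδ
  have hδ0 : 0 < δ := by positivity
  have hδc : δ / c.toReal = ε / (2*M) := by
    rw [hδ]; field_simp
  clear_value ε₁ δ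
  have hucf := (Metric.tendstoUniformly_iff.mp (hUCF P hP)) ε₁ hε₁0
  have hvh := (hF.2 ρ hρ).eventually (gt_mem_nhds (ENNReal.ofReal_pos.mpr hδ0))
  filter_upwards [hucf, hvh] with n hn1 hn2
  intro h
  show dist (vb * freq P)
      ((volume (⋃ x ∈ {x : EuclideanSpace ℝ (Fin d) | ∀ i, (fun p => x + p) '' P i ⊆ Λ i},
        ((fun f => h + f) '' F n) ∩ ((fun v => x + v) '' V))).toReal
        / (volume (F n)).toReal) < ε
  obtain ⟨B, hB1, hB2, hB3⟩ := my_key hd hη Λ hsep P hP hp₀ V hVm hVd hVne hRV hRP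
    (F n) (hF.1 n).1 (hF.1 n).2.1 (hF.1 n).2.2.1 h
  set U : Set (EuclideanSpace ℝ (Fin d)) :=
    ⋃ x ∈ {x : EuclideanSpace ℝ (Fin d) | ∀ i, (fun p => x + p) '' P i ⊆ Λ i},
      ((fun f => h + f) '' F n) ∩ ((fun v => x + v) '' V) with hU
  set L : ℕ := clusterCount Λ P ((fun f => h + f) '' F n) with hL
  set W : ℝ≥0∞ := volume {z : EuclideanSpace ℝ (Fin d) | infDist z (frontier (F n)) ≤ ρ} with hW
  have hWfin : W < ⊤ := my_W_lt_top hd (hF.1 n).1 (hF.1 n).2.1 hρ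
  have hvolF0 : (0:ℝ≥0∞) < volume (F n) := (hF.1 n).2.2.2
  have hvolFfin : volume (F n) < ⊤ := (hF.1 n).2.1.measure_lt_top
  have hUfin : volume U < ⊤ := by
    apply lt_of_le_of_lt (measure_mono (Set.iUnion₂_subset (fun x _ => Set.inter_subset_left)))
    exact (my_bounded_image h (hF.1 n).2.1).measure_lt_top
  -- real versions of the inequalities
  have hub : (volume U).toReal ≤ ((L:ℝ) + B) * vb := by
    have h2 : (((L:ℝ≥0∞) + B) * volume V).toReal = ((L:ℝ) + B) * vb := by
      rw [ENNReal.toReal_mul, hvb, ENNReal.toReal_add (by simp) (by simp)]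
      simp
    calc (volume U).toReal ≤ (((L:ℝ≥0∞) + B) * volume V).toReal := by
          apply ENNReal.toReal_le_toReal hUfin.ne ?_ |>.mpr hB2
          exact (ENNReal.mul_lt_top (by simp [ENNReal.add_lt_top]) hVfin).ne
      _ = ((L:ℝ) + B) * vb := h2
  have hlb : (L:ℝ) * vb ≤ (volume U).toReal + (B:ℝ) * vb := by
    have hfin2 : volume U + (B : ℝ≥0∞) * volume V < ⊤ :=
      ENNReal.add_lt_top.mpr ⟨hUfin, ENNReal.mul_lt_top (by simp) hVfin⟩
    calc (L:ℝ) * vb = ((L : ℝ≥0∞) * volume V).toReal := by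
          rw [ENNReal.toReal_mul]; simp [hvb]
      _ ≤ (volume U + (B : ℝ≥0∞) * volume V).toReal :=
          (ENNReal.toReal_le_toReal (ENNReal.mul_lt_top (by simp) hVfin).ne hfin2.ne).mpr hB3
      _ = (volume U).toReal + (B:ℝ) * vb := by
          rw [ENNReal.toReal_add hUfin.ne (ENNReal.mul_lt_top (by simp) hVfin).ne,
            ENNReal.toReal_mul]
          simp [hvb]
  have hBW : (B : ℝ) * c.toReal ≤ W.toReal := by
    calc (B : ℝ) * c.toReal = ((B : ℝ≥0∞) * c).toReal := by
          rw [ENNReal.toReal_mul]; simp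
      _ ≤ W.toReal := (ENNReal.toReal_le_toReal (ENNReal.mul_lt_top (by simp) hcfin).ne
          hWfin.ne).mpr hB1
  set JR : ℝ := (volume U).toReal with hJR
  set vF : ℝ := (volume (F n)).toReal with hvF
  have hvF0 : 0 < vF := ENNReal.toReal_pos hvolF0.ne' hvolFfin.ne
  have hWvF : W.toReal / vF < δ := by
    have h2 : (W / volume (F n)).toReal < (ENNReal.ofReal δ).toReal :=
      (ENNReal.toReal_lt_toReal (hn2.trans_le le_top).ne ENNReal.ofReal_ne_top).mpr hn2
    rwa [ENNReal.toReal_div, ENNReal.toReal_ofReal hδ0.le] at h2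
  have hfreq : dist (freq P) ((L : ℝ) / vF) < ε₁ := hn1 h
  have hWc0 : 0 ≤ W.toReal := ENNReal.toReal_nonneg
  clear_value U L W JR vF c vb
  clear hB1 hB2 hB3 hn1 hn2 hucf hvh
  -- final estimate
  have hBbound : (B : ℝ) ≤ W.toReal / c.toReal := by
    rw [le_div_iff₀ hcR]; exact hBW
  have habs : |vb * (L : ℝ) - JR| ≤ vb * B := by
    rw [abs_le]
    constructor
    · nlinarith
    · nlinarith
  have key : dist (vb * freq P) (JR / vF) ≤ vb * ε₁ + vb * (B : ℝ) / vF := by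
    have h1 : dist (vb * freq P) (vb * ((L:ℝ)/vF)) ≤ vb * ε₁ := by
      rw [Real.dist_eq, ← mul_sub, abs_mul, abs_of_nonneg hvb0]
      apply mul_le_mul_of_nonneg_left _ hvb0
      rw [← Real.dist_eq]
      exact hfreq.le
    have h2 : dist (vb * ((L:ℝ)/vF)) (JR / vF) ≤ vb * (B:ℝ) / vF := by
      rw [Real.dist_eq]
      have heq : vb * ((L:ℝ)/vF) - JR / vF = (vb * (L:ℝ) - JR) / vF := by ring
      rw [heq, abs_div, abs_of_pos hvF0]
      gcongr
    calc dist (vb * freq P) (JR / vF)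
        ≤ dist (vb * freq P) (vb * ((L:ℝ)/vF)) + dist (vb * ((L:ℝ)/vF)) (JR / vF) :=
          dist_triangle _ _ _
      _ ≤ vb * ε₁ + vb * (B:ℝ) / vF := add_le_add h1 h2
  have hfinal : vb * ε₁ + vb * (B : ℝ) / vF < ε := by
    have h3 : vb * (B:ℝ) / vF ≤ vb * (W.toReal / c.toReal) / vF := by
      gcongr
    have h4 : vb * (W.toReal / c.toReal) / vF = vb * (W.toReal / vF) / c.toReal := by ring
    have h5 : vb * (W.toReal / vF) / c.toReal ≤ vb * δ / c.toReal := by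
      gcongr
    have h6 : vb * δ / c.toReal = vb * (ε / (2*M)) := by
      rw [mul_div_assoc, hδc]
    have h7 : vb * ε₁ = vb * (ε / (2*M)) := by rw [hε₁]
    have h9 : vb * (ε / (2*M)) + vb * (ε / (2*M)) < ε := by
      have hM2 : 0 < 2*M := by linarith
      rw [show vb * (ε / (2*M)) + vb * (ε / (2*M)) = (2*vb*ε) / (2*M) by ring]
      rw [div_lt_iff₀ hM2]
      have := mul_lt_mul_of_pos_right hvbM hε
      linarith
    calc vb * ε₁ + vb * (B:ℝ) / vF ≤ vb * (ε/(2*M)) + vb * (ε/(2*M)) := by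
          rw [← h7]
          have := (h3.trans_eq h4).trans h5
          rw [h6] at this
          linarith
      _ < ε := h9
  exact lt_of_le_of_lt key hfinal
end

section
/- Let X be a compact metric space equipped with a continuous action of (ℝ^d,+), written (g,Γ) ↦ −g+Γ, which is uniquely ergodic with unique invariant Borel probability measure μ, and let {F_n} be a van Hove sequence in ℝ^d. Then for every continuous f : X → ℂ, every x ∈ ℝ^d and every Γ ∈ X, lim_{n→∞} (1/Vol(F_n)) ∫_{F_n} f(−x−y+Γ) · conj(f(−y+Γ)) dy = ∫_X f(−x+Γ′) · conj(f(Γ′)) dμ(Γ′). -/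
open Metric Set Filter MeasureTheory Topology


set_option linter.unusedSectionVars false
set_option linter.unusedVariables false
set_option linter.deprecated false
set_option maxHeartbeats 1000000

open scoped ENNReal NNReal
open TopologicalSpace

/-- Data of a positive linear functional on `C(X, ℝ)`. -/
structure RieszData (X : Type*) [TopologicalSpace X] where
  L : C(X, ℝ) → ℝ
  map_add' : ∀ f g, L (f + g) = L f + L g
  map_smul' : ∀ (c : ℝ) (f), L (c • f) = c * L f
  nonneg' : ∀ f : C(X, ℝ), (∀ z, 0 ≤ f z) → 0 ≤ L f

namespace RieszData

variable {X : Type*} [MetricSpace X] [CompactSpace X] (D : RieszData X)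

lemma map_zero : D.L 0 = 0 := by
  have h := D.map_smul' 0 0
  simpa using h

lemma map_sub (f g : C(X, ℝ)) : D.L (f - g) = D.L f - D.L g := by
  have h := D.map_add' (f - g) g
  rw [sub_add_cancel] at h
  linarith

lemma mono {f g : C(X, ℝ)} (h : ∀ z, f z ≤ g z) : D.L f ≤ D.L g := by
  have h2 := D.nonneg' (g - f) (fun z => by
    simp only [ContinuousMap.sub_apply]
    linarith [h z])
  have h3 := D.map_sub g f
  linarith

/-- The Riesz set: values of the functional on functions dominating `1` on `K`. -/
def rset (K : Set X) : Set ℝ :=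
  D.L '' {f : C(X, ℝ) | (∀ z, 0 ≤ f z) ∧ ∀ z ∈ K, 1 ≤ f z}

lemma one_mem_rset (K : Set X) : D.L 1 ∈ D.rset K :=
  ⟨1, ⟨fun z => by simp, fun z _ => by simp⟩, rfl⟩

lemma rset_nonempty (K : Set X) : (D.rset K).Nonempty := ⟨_, D.one_mem_rset K⟩

lemma rset_bddBelow (K : Set X) : BddBelow (D.rset K) := by
  refine ⟨0, ?_⟩
  rintro r ⟨f, ⟨hf0, _⟩, rfl⟩
  exact D.nonneg' f hf0

/-- The content value of a set. -/
noncomputable def ct (K : Set X) : ℝ := sInf (D.rset K)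

lemma ct_nonneg (K : Set X) : 0 ≤ D.ct K :=
  le_csInf (D.rset_nonempty K) (by rintro r ⟨f, ⟨hf0, _⟩, rfl⟩; exact D.nonneg' f hf0)

lemma ct_le {K : Set X} {f : C(X, ℝ)} (hf0 : ∀ z, 0 ≤ f z) (hf1 : ∀ z ∈ K, 1 ≤ f z) :
    D.ct K ≤ D.L f :=
  csInf_le (D.rset_bddBelow K) ⟨f, ⟨hf0, hf1⟩, rfl⟩

lemma le_ct {K : Set X} {c : ℝ}
    (h : ∀ f : C(X, ℝ), (∀ z, 0 ≤ f z) → (∀ z ∈ K, 1 ≤ f z) → c ≤ D.L f) :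
    c ≤ D.ct K :=
  le_csInf (D.rset_nonempty K) (by rintro r ⟨f, ⟨hf0, hf1⟩, rfl⟩; exact h f hf0 hf1)

lemma ct_mono {K₁ K₂ : Set X} (h : K₁ ⊆ K₂) : D.ct K₁ ≤ D.ct K₂ := by
  apply csInf_le_csInf (D.rset_bddBelow K₁) (D.rset_nonempty K₂)
  rintro r ⟨f, ⟨hf0, hf1⟩, rfl⟩
  exact ⟨f, ⟨hf0, fun z hz => hf1 z (h hz)⟩, rfl⟩

lemma ct_union_le (K₁ K₂ : Set X) : D.ct (K₁ ∪ K₂) ≤ D.ct K₁ + D.ct K₂ := by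
  refine le_of_forall_pos_le_add fun ε hε => ?_
  obtain ⟨r₁, ⟨f₁, ⟨hf₁0, hf₁1⟩, rfl⟩, hr₁⟩ :=
    exists_lt_of_csInf_lt (D.rset_nonempty K₁) (lt_add_of_pos_right (D.ct K₁) (half_pos hε))
  obtain ⟨r₂, ⟨f₂, ⟨hf₂0, hf₂1⟩, rfl⟩, hr₂⟩ :=
    exists_lt_of_csInf_lt (D.rset_nonempty K₂) (lt_add_of_pos_right (D.ct K₂) (half_pos hε))
  have hmem : D.ct (K₁ ∪ K₂) ≤ D.L (f₁ + f₂) := by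
    apply D.ct_le
    · intro z; simp only [ContinuousMap.add_apply]; exact add_nonneg (hf₁0 z) (hf₂0 z)
    · rintro z (hz | hz) <;> simp only [ContinuousMap.add_apply]
      · linarith [hf₁1 z hz, hf₂0 z]
      · linarith [hf₂1 z hz, hf₁0 z]
  rw [D.map_add'] at hmem
  linarith

lemma ct_union_eq {K₁ K₂ : Set X} (h₁ : IsClosed K₁) (h₂ : IsClosed K₂)
    (hd : Disjoint K₁ K₂) : D.ct (K₁ ∪ K₂) = D.ct K₁ + D.ct K₂ := by
  refine le_antisymm (D.ct_union_le K₁ K₂) ?_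
  obtain ⟨h, h0, h1, h01⟩ := exists_continuous_zero_one_of_isClosed h₁ h₂ hd
  apply D.le_ct
  intro f hf0 hf1
  have key : D.L (f * (1 - h)) + D.L (f * h) = D.L f := by
    rw [← D.map_add']
    congr 1
    ext z
    simp only [ContinuousMap.add_apply, ContinuousMap.mul_apply, ContinuousMap.sub_apply,
      ContinuousMap.one_apply]
    ring
  have e₁ : D.ct K₁ ≤ D.L (f * (1 - h)) := by
    apply D.ct_le
    · intro z
      simp only [ContinuousMap.mul_apply, ContinuousMap.sub_apply, ContinuousMap.one_apply]
      have := (h01 z).1; have := (h01 z).2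
      have := hf0 z
      nlinarith
    · intro z hz
      have hz0 : h z = 0 := h0 hz
      simp only [ContinuousMap.mul_apply, ContinuousMap.sub_apply, ContinuousMap.one_apply, hz0]
      simpa using hf1 z (Or.inl hz)
  have e₂ : D.ct K₂ ≤ D.L (f * h) := by
    apply D.ct_le
    · intro z
      simp only [ContinuousMap.mul_apply]
      have := (h01 z).1; have := hf0 z
      positivity
    · intro z hz
      have hz1 : h z = 1 := h1 hz
      simp only [ContinuousMap.mul_apply, hz1, mul_one]
      exact hf1 z (Or.inr hz)
  linarith

/-- The content associated with a positive linear functional. -/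
noncomputable def content : Content X where
  toFun K := Real.toNNReal (D.ct K)
  mono' K₁ K₂ h := Real.toNNReal_mono (D.ct_mono h)
  sup_disjoint' K₁ K₂ hd hc₁ hc₂ := by
    have : (↑(K₁ ⊔ K₂) : Set X) = ↑K₁ ∪ ↑K₂ := rfl
    simp only [this]
    rw [show D.ct (↑K₁ ∪ ↑K₂) = D.ct ↑K₁ + D.ct ↑K₂ from D.ct_union_eq hc₁ hc₂ hd]
    exact Real.toNNReal_add (D.ct_nonneg _) (D.ct_nonneg _)
  sup_le' K₁ K₂ := by
    have : (↑(K₁ ⊔ K₂) : Set X) = ↑K₁ ∪ ↑K₂ := rfl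
    simp only [this]
    calc Real.toNNReal (D.ct (↑K₁ ∪ ↑K₂)) ≤ Real.toNNReal (D.ct ↑K₁ + D.ct ↑K₂) :=
          Real.toNNReal_mono (D.ct_union_le _ _)
      _ = _ := Real.toNNReal_add (D.ct_nonneg _) (D.ct_nonneg _)

variable [MeasurableSpace X] [BorelSpace X]

/-- The measure associated with a positive linear functional. -/
noncomputable def meas : Measure X := D.content.measure

lemma meas_le_L {f : C(X, ℝ)} (hf0 : ∀ z, 0 ≤ f z) {K : Set X} (hK1 : ∀ z ∈ K, 1 ≤ f z) :
    D.meas K ≤ ENNReal.ofReal (D.L f) := by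
  have hLf : 0 ≤ D.L f := D.nonneg' f hf0
  have key : ∀ c : ℝ, 1 < c → D.meas K ≤ ENNReal.ofReal (c * D.L f) := by
    intro c hc
    have hc0 : 0 < c := by linarith
    set U : Set X := {z | c⁻¹ < f z} with hU
    have hUopen : IsOpen U := isOpen_lt continuous_const f.continuous
    have hKU : K ⊆ U := by
      intro z hz
      have : c⁻¹ < 1 := inv_lt_one_of_one_lt₀ hc
      exact lt_of_lt_of_le this (hK1 z hz)
    calc D.meas K ≤ D.meas U := measure_mono hKU
      _ = D.content.outerMeasure U := by
          rw [meas, Content.measure_apply _ hUopen.measurableSet]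
      _ = D.content.innerContent ⟨U, hUopen⟩ := D.content.outerMeasure_opens ⟨U, hUopen⟩
      _ ≤ ENNReal.ofReal (c * D.L f) := by
          apply iSup₂_le
          intro K' hK'
          have hct : D.ct ↑K' ≤ c * D.L f := by
            have := D.ct_le (K := (K' : Set X)) (f := c • f)
              (fun z => by
                simp only [ContinuousMap.smul_apply, smul_eq_mul]
                exact mul_nonneg (le_of_lt hc0) (hf0 z))
              (fun z hz => by
                simp only [ContinuousMap.smul_apply, smul_eq_mul]
                have hfz : c⁻¹ < f z := hK' hz
                calc (1 : ℝ) = c * c⁻¹ := (mul_inv_cancel₀ (ne_of_gt hc0)).symm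
                  _ ≤ c * f z := by
                      exact mul_le_mul_of_nonneg_left (le_of_lt hfz) (le_of_lt hc0))
            rwa [D.map_smul'] at this
          have hrfl : D.content K' = Real.toNNReal (D.ct ↑K') := rfl
          rw [hrfl, ENNReal.ofReal]
          exact_mod_cast Real.toNNReal_mono hct
  refine ENNReal.le_of_forall_pos_le_add fun ε hε _ => ?_
  have hεR : (0 : ℝ) < (ε : ℝ) := hε
  have h1 : (1 : ℝ) < 1 + (ε : ℝ) / (D.L f + 1) := by
    have : 0 < D.L f + 1 := by linarith
    have : 0 < (ε : ℝ) / (D.L f + 1) := by positivity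
    linarith
  refine (key _ h1).trans ?_
  have hmul : (1 + (ε : ℝ) / (D.L f + 1)) * D.L f ≤ D.L f + (ε : ℝ) := by
    have hpos : 0 < D.L f + 1 := by linarith
    have hfrac : D.L f / (D.L f + 1) ≤ 1 := by
      rw [div_le_one hpos]; linarith
    have heq : (ε : ℝ) / (D.L f + 1) * D.L f = (ε : ℝ) * (D.L f / (D.L f + 1)) := by ring
    have h2 : (ε : ℝ) / (D.L f + 1) * D.L f ≤ (ε : ℝ) := by
      rw [heq]
      calc (ε : ℝ) * (D.L f / (D.L f + 1)) ≤ (ε : ℝ) * 1 :=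
            mul_le_mul_of_nonneg_left hfrac (le_of_lt hεR)
        _ = (ε : ℝ) := mul_one _
    nlinarith
  calc ENNReal.ofReal ((1 + (ε : ℝ) / (D.L f + 1)) * D.L f)
      ≤ ENNReal.ofReal (D.L f + (ε : ℝ)) := ENNReal.ofReal_le_ofReal hmul
    _ ≤ ENNReal.ofReal (D.L f) + ENNReal.ofReal (ε : ℝ) := ENNReal.ofReal_add_le
    _ = ENNReal.ofReal (D.L f) + ε := by
        rw [ENNReal.ofReal_coe_nnreal]

lemma meas_univ_le : D.meas univ ≤ ENNReal.ofReal (D.L 1) :=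
  D.meas_le_L (f := 1) (fun z => by simp) (fun z _ => by simp)

instance : IsFiniteMeasure D.meas :=
  ⟨lt_of_le_of_lt D.meas_univ_le ENNReal.ofReal_lt_top⟩

lemma L_le_meas_open {h : C(X, ℝ)} (h0 : ∀ z, 0 ≤ h z) (h1 : ∀ z, h z ≤ 1) {U : Set X}
    (hU : IsOpen U) (hsupp : tsupport h ⊆ U) : ENNReal.ofReal (D.L h) ≤ D.meas U := by
  have hKc : IsCompact (tsupport h) :=
    IsCompact.of_isClosed_subset isCompact_univ (isClosed_tsupport _) (subset_univ _)
  have hLh : D.L h ≤ D.ct (tsupport h) := by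
    apply D.le_ct
    intro f hf0 hf1
    apply D.mono
    intro z
    by_cases hz : z ∈ tsupport h
    · exact le_trans (h1 z) (hf1 z hz)
    · rw [image_eq_zero_of_notMem_tsupport hz]
      exact hf0 z
  calc ENNReal.ofReal (D.L h) ≤ ENNReal.ofReal (D.ct (tsupport h)) :=
        ENNReal.ofReal_le_ofReal hLh
    _ = D.content ⟨tsupport h, hKc⟩ := rfl
    _ ≤ D.content.innerContent ⟨U, hU⟩ := D.content.le_innerContent _ _ hsupp
    _ = D.content.outerMeasure U := (D.content.outerMeasure_opens ⟨U, hU⟩).symm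
    _ = D.meas U := by rw [meas, Content.measure_apply _ hU.measurableSet]

lemma map_sum {ι : Type*} (s : Finset ι) (h : ι → C(X, ℝ)) :
    D.L (∑ i ∈ s, h i) = ∑ i ∈ s, D.L (h i) := by
  classical
  induction s using Finset.induction_on with
  | empty => simpa using D.map_zero
  | insert _ _ hx ih => rw [Finset.sum_insert hx, Finset.sum_insert hx, D.map_add', ih]

lemma integrable_continuous (g : C(X, ℝ)) : Integrable (fun z => g z) D.meas :=
  g.continuous.integrable_of_hasCompactSupport
    (IsCompact.of_isClosed_subset isCompact_univ (isClosed_tsupport _) (subset_univ _))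

lemma L_le_integral_aux [Nonempty X] {f : C(X, ℝ)} (hf : ∀ z, 0 < f z) {ε : ℝ}
    (hε : 0 < ε) (hε1 : ε ≤ 1) :
    D.L f ≤ ∫ z, f z ∂D.meas + ε * ((‖f‖ + 1) + 2 * (D.meas univ).toReal) := by
  set b := ‖f‖ with hb
  have hbpos : 0 < b := lt_of_lt_of_le (by
      have := hf (Classical.arbitrary X)
      exact lt_of_lt_of_le this (le_abs_self _))
    (by simpa using f.norm_coe_le_norm (Classical.arbitrary X) |>.trans_eq rfl)
  set m : ℕ := ⌈b / ε⌉₊ + 1 with hm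
  have hmpos : (0 : ℝ) < m := by positivity
  have hbm : b / ε ≤ (m : ℝ) := by
    calc b / ε ≤ (⌈b / ε⌉₊ : ℝ) := Nat.le_ceil _
      _ ≤ (m : ℝ) := by exact_mod_cast Nat.le_succ _
  set δ := b / m with hδ
  have hδpos : 0 < δ := div_pos hbpos hmpos
  have hmδ : (m : ℝ) * δ = b := by have := hmpos.ne'; rw [hδ]; field_simp
  have hδε : δ ≤ ε := by
    rw [hδ, div_le_iff₀ hmpos]
    calc b = ε * (b / ε) := by field_simp
      _ ≤ ε * m := mul_le_mul_of_nonneg_left hbm hε.le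
  set y : ℕ → ℝ := fun i => i * δ with hy
  set E : ℕ → Set X := fun i => (fun z => f z) ⁻¹' (Ioc (y i) (y (i + 1))) with hE
  have hEmeas : ∀ i, MeasurableSet (E i) := fun i =>
    f.continuous.measurable measurableSet_Ioc
  have hymono : ∀ {i j : ℕ}, i ≤ j → y i ≤ y j := by
    intro i j hij
    exact mul_le_mul_of_nonneg_right (by exact_mod_cast hij) hδpos.le
  have hEdisj : ∀ i j : ℕ, i ≠ j → Disjoint (E i) (E j) := by
    have key : ∀ i j : ℕ, i < j → Disjoint (E i) (E j) := by
      intro i j hij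
      rw [Set.disjoint_left]
      rintro z hzi hzj
      have h1 : f z ≤ y (i + 1) := hzi.2
      have h2 : y j < f z := hzj.1
      have h3 : y (i + 1) ≤ y j := hymono hij
      linarith
    intro i j hij
    rcases lt_or_gt_of_ne hij with h | h
    · exact key i j h
    · exact (key j i h).symm
  have hcover : ∀ z, ∃ i, i < m ∧ z ∈ E i := by
    intro z
    have hfz : 0 < f z := hf z
    have hfb : f z ≤ b := le_trans (le_abs_self _) (f.norm_coe_le_norm z)
    set t := f z / δ with ht
    have htpos : 0 < t := div_pos hfz hδpos
    set k := ⌈t⌉₊ with hk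
    have hk1 : 1 ≤ k := Nat.one_le_ceil_iff.2 htpos
    have hkm : k ≤ m := by
      apply Nat.ceil_le.2
      calc t = f z / δ := rfl
        _ ≤ b / δ := by gcongr
        _ = (m : ℝ) := by rw [← hmδ]; field_simp
    refine ⟨k - 1, ?_, ?_, ?_⟩
    · omega
    · show y (k - 1) < f z
      have hcast : ((k - 1 : ℕ) : ℝ) = (k : ℝ) - 1 := by
        push_cast [Nat.cast_sub hk1]; ring
      have hceil : (k : ℝ) < t + 1 := Nat.ceil_lt_add_one htpos.le
      show ((k - 1 : ℕ) : ℝ) * δ < f z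
      rw [hcast]
      have : ((k : ℝ) - 1) * δ < t * δ := by nlinarith
      rwa [ht, div_mul_cancel₀ _ (ne_of_gt hδpos)] at this
    · show f z ≤ y ((k - 1) + 1)
      have : (k - 1) + 1 = k := by omega
      rw [this]
      show f z ≤ (k : ℝ) * δ
      have h1 : t ≤ (k : ℝ) := Nat.le_ceil _
      have : t * δ ≤ (k : ℝ) * δ := mul_le_mul_of_nonneg_right h1 hδpos.le
      rwa [ht, div_mul_cancel₀ _ (ne_of_gt hδpos)] at this
  have hWex : ∀ i : Fin m, ∃ W, E ↑i ⊆ W ∧ IsOpen W ∧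
      D.meas W < D.meas (E ↑i) + ENNReal.ofReal (ε / m) := by
    intro i
    obtain ⟨W, hW1, hW2, hW3⟩ := Set.exists_isOpen_lt_add (μ := D.meas)
      (ε := ENNReal.ofReal (ε / ↑m)) (E ↑i)
      (measure_ne_top _ _) (ne_of_gt (ENNReal.ofReal_pos.2 (by positivity)))
    exact ⟨W, hW1, hW2, hW3⟩
  choose W hWE hWopen hWlt using hWex
  set U : Fin m → Set X := fun i => W i ∩ {z | f z < y (↑i + 1) + ε} with hU
  have hUopen : ∀ i, IsOpen (U i) := fun i =>
    (hWopen i).inter (isOpen_lt f.continuous continuous_const)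
  have hEU : ∀ i : Fin m, E ↑i ⊆ U i := by
    intro i z hz
    refine ⟨hWE i hz, ?_⟩
    have h1 : f z ≤ y (↑i + 1) := hz.2
    show f z < y (↑i + 1) + ε
    linarith
  have hUcover : (univ : Set X) ⊆ ⋃ i, U i := by
    intro z _
    obtain ⟨i, him, hzi⟩ := hcover z
    exact mem_iUnion.2 ⟨⟨i, him⟩, hEU ⟨i, him⟩ hzi⟩
  obtain ⟨g, hgsupp, hgsum, hg01, -⟩ :=
    exists_continuous_sum_one_of_isOpen_isCompact hUopen isCompact_univ hUcover
  have hsumf : (∑ i : Fin m, g i * f) = f := by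
    ext z
    have h1 : (∑ i : Fin m, (g i : X → ℝ)) z = 1 := hgsum (mem_univ z)
    rw [Finset.sum_apply] at h1
    simp only [ContinuousMap.coe_sum, Finset.sum_apply, ContinuousMap.mul_apply]
    rw [← Finset.sum_mul, h1, one_mul]
  have hLsum : D.L f = ∑ i : Fin m, D.L (g i * f) := by
    conv_lhs => rw [← hsumf]
    exact D.map_sum _ _
  have hterm : ∀ i : Fin m, D.L (g i * f) ≤ (y (↑i + 1) + ε) * D.L (g i) := by
    intro i
    rw [← D.map_smul']
    apply D.mono
    intro z
    simp only [ContinuousMap.mul_apply, ContinuousMap.smul_apply, smul_eq_mul]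
    by_cases hz : z ∈ tsupport ⇑(g i)
    · have hzU : z ∈ U i := hgsupp i hz
      have hfz : f z < y (↑i + 1) + ε := hzU.2
      have hg0 : 0 ≤ g i z := (hg01 i z).1
      nlinarith
    · rw [image_eq_zero_of_notMem_tsupport hz]
      simp
  have hcoeff : ∀ i : Fin m, 0 ≤ y (↑i + 1) + ε := by
    intro i
    have h1 : (0 : ℝ) ≤ ((↑i + 1 : ℕ) : ℝ) * δ := by positivity
    show 0 ≤ ((↑i + 1 : ℕ) : ℝ) * δ + ε
    linarith
  have hLg : ∀ i : Fin m, 0 ≤ D.L (g i) ∧ D.L (g i) ≤ (D.meas (U i)).toReal := by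
    intro i
    have hgi0 : ∀ z, 0 ≤ g i z := fun z => (hg01 i z).1
    refine ⟨D.nonneg' _ hgi0, ?_⟩
    have h2 := D.L_le_meas_open (h := g i) hgi0 (fun z => (hg01 i z).2)
      (hUopen i) (hgsupp i)
    have h3 := ENNReal.toReal_mono (measure_ne_top _ _) h2
    rwa [ENNReal.toReal_ofReal (D.nonneg' _ hgi0)] at h3
  have hU_meas_le : ∀ i : Fin m, (D.meas (U i)).toReal ≤ (D.meas (E ↑i)).toReal + ε / m := by
    intro i
    have h1 : D.meas (U i) ≤ D.meas (E ↑i) + ENNReal.ofReal (ε / m) :=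
      le_trans (measure_mono inter_subset_left) (le_of_lt (hWlt i))
    have hne : D.meas (E ↑i) + ENNReal.ofReal (ε / m) ≠ ⊤ :=
      ENNReal.add_ne_top.2 ⟨measure_ne_top _ _, ENNReal.ofReal_ne_top⟩
    have h2 := ENNReal.toReal_mono hne h1
    rwa [ENNReal.toReal_add (measure_ne_top _ _) ENNReal.ofReal_ne_top,
      ENNReal.toReal_ofReal (by positivity)] at h2
  have hEint : ∀ i : Fin m, (y (↑i + 1) + ε) * (D.meas (E ↑i)).toReal ≤
      (∫ z in E ↑i, f z ∂D.meas) + 2 * ε * (D.meas (E ↑i)).toReal := by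
    intro i
    have hconst : (y ↑i) * (D.meas (E ↑i)).toReal ≤ ∫ z in E ↑i, f z ∂D.meas :=
      setIntegral_ge_of_const_le_real (hEmeas _) (measure_ne_top _ _)
        (fun z hz => le_of_lt hz.1) ((D.integrable_continuous f).integrableOn)
    have hyy : y (↑i + 1) = y ↑i + δ := by
      show ((↑i + 1 : ℕ) : ℝ) * δ = (↑i : ℕ) * δ + δ
      push_cast
      ring
    have hm0 : 0 ≤ (D.meas (E ↑i)).toReal := ENNReal.toReal_nonneg
    nlinarith
  have hbiUnion : ⋃ i ∈ (Finset.univ : Finset (Fin m)), E ↑i = (univ : Set X) := by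
    apply eq_univ_of_forall
    intro z
    obtain ⟨i, him, hzi⟩ := hcover z
    exact mem_biUnion (Finset.mem_univ (⟨i, him⟩ : Fin m)) hzi
  have hpairwise : ((Finset.univ : Finset (Fin m)) : Set (Fin m)).Pairwise
      (Function.onFun Disjoint fun i : Fin m => E ↑i) := by
    intro i _ j _ hij
    exact hEdisj ↑i ↑j (fun h => hij (Fin.val_injective h))
  have hsum_meas : ∑ i : Fin m, (D.meas (E ↑i)).toReal ≤ (D.meas univ).toReal := by
    have h1 : D.meas (⋃ i ∈ (Finset.univ : Finset (Fin m)), E ↑i) =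
        ∑ i : Fin m, D.meas (E ↑i) :=
      measure_biUnion_finset hpairwise (fun i _ => hEmeas ↑i)
    rw [hbiUnion] at h1
    rw [← ENNReal.toReal_sum (fun i _ => measure_ne_top _ _), ← h1]
  have hsum_int : ∑ i : Fin m, ∫ z in E ↑i, f z ∂D.meas = ∫ z, f z ∂D.meas := by
    have h1 := integral_biUnion_finset (f := fun z => f z) (μ := D.meas)
      (Finset.univ : Finset (Fin m)) (fun i _ => hEmeas ↑i) hpairwise
      (fun i _ => (D.integrable_continuous f).integrableOn)
    rw [hbiUnion, Measure.restrict_univ] at h1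
    exact h1.symm
  have hsumcoeff : ∑ i : Fin m, (y (↑i + 1) + ε) * (ε / m) ≤ (b + 1) * ε := by
    have hb1 : ∀ i : Fin m, y (↑i + 1) + ε ≤ b + 1 := by
      intro i
      have h1 : ((↑i + 1 : ℕ) : ℝ) ≤ (m : ℝ) := by exact_mod_cast i.2
      have h2 : y (↑i + 1) ≤ (m : ℝ) * δ := by
        show ((↑i + 1 : ℕ) : ℝ) * δ ≤ (m : ℝ) * δ
        exact mul_le_mul_of_nonneg_right h1 hδpos.le
      rw [hmδ] at h2
      linarith
    calc ∑ i : Fin m, (y (↑i + 1) + ε) * (ε / m)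
        ≤ ∑ i : Fin m, (b + 1) * (ε / m) :=
          Finset.sum_le_sum (fun i _ => mul_le_mul_of_nonneg_right (hb1 i) (by positivity))
      _ = (m : ℝ) * ((b + 1) * (ε / m)) := by
          rw [Finset.sum_const, Finset.card_univ, Fintype.card_fin, nsmul_eq_mul]
      _ = (b + 1) * ε := by field_simp
  calc D.L f = ∑ i : Fin m, D.L (g i * f) := hLsum
    _ ≤ ∑ i : Fin m, (y (↑i + 1) + ε) * D.L (g i) :=
        Finset.sum_le_sum (fun i _ => hterm i)
    _ ≤ ∑ i : Fin m, (y (↑i + 1) + ε) * (D.meas (U i)).toReal :=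
        Finset.sum_le_sum (fun i _ => mul_le_mul_of_nonneg_left (hLg i).2 (hcoeff i))
    _ ≤ ∑ i : Fin m, ((y (↑i + 1) + ε) * (D.meas (E ↑i)).toReal +
          (y (↑i + 1) + ε) * (ε / m)) := by
        apply Finset.sum_le_sum
        intro i _
        have h1 := hU_meas_le i
        have h2 := hcoeff i
        nlinarith
    _ = ∑ i : Fin m, (y (↑i + 1) + ε) * (D.meas (E ↑i)).toReal +
          ∑ i : Fin m, (y (↑i + 1) + ε) * (ε / m) := Finset.sum_add_distrib
    _ ≤ (∑ i : Fin m, ((∫ z in E ↑i, f z ∂D.meas) + 2 * ε * (D.meas (E ↑i)).toReal)) +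
          (b + 1) * ε :=
        add_le_add (Finset.sum_le_sum fun i _ => hEint i) hsumcoeff
    _ = (∫ z, f z ∂D.meas) + 2 * ε * (∑ i : Fin m, (D.meas (E ↑i)).toReal) +
          (b + 1) * ε := by
        rw [Finset.sum_add_distrib, hsum_int, ← Finset.mul_sum]
    _ ≤ ∫ z, f z ∂D.meas + ε * ((b + 1) + 2 * (D.meas univ).toReal) := by
        have h5 : 2 * ε * (∑ i : Fin m, (D.meas (E ↑i)).toReal) ≤
            2 * ε * (D.meas univ).toReal :=
          mul_le_mul_of_nonneg_left hsum_meas (by linarith)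
        linarith

lemma L_le_integral_of_pos [Nonempty X] {f : C(X, ℝ)} (hf : ∀ z, 0 < f z) :
    D.L f ≤ ∫ z, f z ∂D.meas := by
  refine le_of_forall_pos_le_add fun ε' hε' => ?_
  set C := (‖f‖ + 1) + 2 * (D.meas univ).toReal with hC
  have hCpos : 0 < C := by
    have := norm_nonneg f
    have := (ENNReal.toReal_nonneg : (0:ℝ) ≤ (D.meas univ).toReal)
    nlinarith
  have hεpos : 0 < min 1 (ε' / C) := lt_min one_pos (by positivity)
  have h1 := D.L_le_integral_aux hf hεpos (min_le_left _ _)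
  have h2 : min 1 (ε' / C) * C ≤ ε' := by
    calc min 1 (ε' / C) * C ≤ (ε' / C) * C :=
          mul_le_mul_of_nonneg_right (min_le_right _ _) hCpos.le
      _ = ε' := by field_simp
  linarith

lemma L_le_integral [Nonempty X] (f : C(X, ℝ)) : D.L f ≤ ∫ z, f z ∂D.meas := by
  set c := ‖f‖ + 1 with hc
  have hpos : ∀ z, 0 < (f + c • (1 : C(X, ℝ))) z := by
    intro z
    have h1 : -‖f‖ ≤ f z := neg_le_of_abs_le (f.norm_coe_le_norm z)
    simp only [ContinuousMap.add_apply, ContinuousMap.smul_apply, ContinuousMap.one_apply,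
      smul_eq_mul, mul_one]
    linarith
  have h1 := D.L_le_integral_of_pos hpos
  have h2 : D.L (f + c • 1) = D.L f + c * D.L 1 := by rw [D.map_add', D.map_smul']
  have h3 : ∫ z, (f + c • (1 : C(X, ℝ))) z ∂D.meas =
      (∫ z, f z ∂D.meas) + c * (D.meas univ).toReal := by
    have : (fun z => (f + c • (1 : C(X, ℝ))) z) = fun z => f z + c := by
      ext z
      simp [ContinuousMap.add_apply]
    rw [this, integral_add (D.integrable_continuous f) (integrable_const c),
      integral_const]
    simp [smul_eq_mul, mul_comm]
    exact Or.inl rfl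
  have h4 : (D.meas univ).toReal ≤ D.L 1 := by
    have := D.meas_univ_le
    exact ENNReal.toReal_le_of_le_ofReal (D.nonneg' 1 (fun z => by simp)) this
  have hc0 : 0 ≤ c := by have := norm_nonneg f; linarith
  rw [h2] at h1
  rw [h3] at h1
  nlinarith

lemma integral_eq [Nonempty X] (f : C(X, ℝ)) : ∫ z, f z ∂D.meas = D.L f := by
  have h1 := D.L_le_integral f
  have h2 := D.L_le_integral (-f)
  have h3 : D.L (-f) = -D.L f := by
    have := D.map_smul' (-1) f
    simpa [neg_smul, one_smul] using this
  have h4 : ∫ z, (-f : C(X, ℝ)) z ∂D.meas = -∫ z, f z ∂D.meas := by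
    simp only [ContinuousMap.neg_apply]
    exact integral_neg _
  rw [h3, h4] at h2
  linarith

lemma meas_univ_eq [Nonempty X] : D.meas univ = ENNReal.ofReal (D.L 1) := by
  refine le_antisymm D.meas_univ_le ?_
  have h1 : D.L 1 = (D.meas univ).toReal := by
    have := D.integral_eq 1
    exact (by simpa [integral_const, smul_eq_mul] using this.symm : D.L 1 = D.meas.real univ)
  rw [h1, ENNReal.ofReal_toReal (measure_ne_top _ _)]

end RieszData

section Frontier

variable {W : Type*} [NormedAddCommGroup W] [NormedSpace ℝ W]

lemma infDist_frontier_le_dist {B : Set W} {x y : W} (hy : y ∈ B) (hx : x ∉ B) :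
    infDist x (frontier B) ≤ dist x y := by
  have hseg : IsPreconnected (segment ℝ x y) := (convex_segment x y).isPreconnected
  have hcross : ∃ z ∈ segment ℝ x y, z ∈ frontier B := by
    by_contra hno
    push_neg at hno
    have hfr : ∀ z, z ∈ frontier B ↔ z ∈ closure B ∧ z ∉ interior B := by
      intro z
      rw [frontier_eq_closure_inter_closure, closure_compl]
      simp [mem_inter_iff, mem_compl_iff]
    have h1 := hseg (interior B) (closure B)ᶜ isOpen_interior isClosed_closure.isOpen_compl
      (by
        intro z hz
        by_cases hzc : z ∈ closure B
        · left
          by_contra hzi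
          exact hno z hz ((hfr z).2 ⟨hzc, hzi⟩)
        · right; exact hzc)
      (by
        refine ⟨y, right_mem_segment ℝ x y, ?_⟩
        by_contra hyi
        exact hno y (right_mem_segment ℝ x y) ((hfr y).2 ⟨subset_closure hy, hyi⟩))
      (by
        refine ⟨x, left_mem_segment ℝ x y, ?_⟩
        simp only [mem_compl_iff]
        intro hxc
        exact hno x (left_mem_segment ℝ x y)
          ((hfr x).2 ⟨hxc, fun hxi => hx (interior_subset hxi)⟩))
    obtain ⟨z, -, hzi, hzc⟩ := h1
    exact hzc (subset_closure (interior_subset hzi))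
  obtain ⟨z, hzseg, hzf⟩ := hcross
  have h2 : dist x z ≤ dist x y := by
    have h3 := dist_add_dist_of_mem_segment hzseg
    have h4 : (0:ℝ) ≤ dist z y := dist_nonneg
    linarith
  exact le_trans (infDist_le_dist_of_mem hzf) h2

lemma symmDiff_subset_frontier_thickening {B : Set W} {t : W} :
    (((fun y => t + y) '' B \ B) ∪ (B \ (fun y => t + y) '' B)) ⊆
      {x | infDist x (frontier B) ≤ ‖t‖} := by
  rintro x (⟨hxA, hxB⟩ | ⟨hxB, hxA⟩)
  · obtain ⟨y, hy, rfl⟩ := hxA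
    have h1 : dist (t + y) y = ‖t‖ := by
      rw [dist_eq_norm]
      simp
    exact mem_setOf.2 (h1 ▸ infDist_frontier_le_dist hy hxB)
  · have hyB : x - t ∉ B := by
      intro hc
      exact hxA ⟨x - t, hc, by simp⟩
    have h1 : dist x (x - t) = ‖t‖ := by
      rw [dist_eq_norm]
      simp
    have h2 : infDist x (frontier Bᶜ) ≤ dist x (x - t) :=
      infDist_frontier_le_dist (B := Bᶜ) hyB (by simpa using hxB)
    rw [frontier_compl] at h2
    exact mem_setOf.2 (h1 ▸ h2)

end Frontier

section Key

variable {d : ℕ} {X : Type*} [MetricSpace X] [CompactSpace X]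
    [MeasurableSpace X] [BorelSpace X]
    [AddAction (EuclideanSpace ℝ (Fin d)) X]

theorem key_real (hcont : Continuous fun p : EuclideanSpace ℝ (Fin d) × X => p.1 +ᵥ p.2)
    (μ : Measure X) (hμp : IsProbabilityMeasure μ)
    (huniq : ∀ ν : Measure X, IsProbabilityMeasure ν →
      (∀ g : EuclideanSpace ℝ (Fin d), Measure.map (fun Γ => g +ᵥ Γ) ν = ν) → ν = μ)
    (F : ℕ → Set (EuclideanSpace ℝ (Fin d))) (hF : IsVanHove F) (Γ : X) (φ : C(X, ℝ)) :
    Tendsto (fun n => ((volume (F n)).toReal)⁻¹ * ∫ y in F n, φ (y +ᵥ Γ)) atTop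
      (𝓝 (∫ z, φ z ∂μ)) := by
  haveI : Nonempty X := ⟨Γ⟩
  obtain ⟨hFprop, hFratio⟩ := hF
  have hFmeas : ∀ n, MeasurableSet (F n) := fun n => (hFprop n).2.2.1
  have hFbdd : ∀ n, Bornology.IsBounded (F n) := fun n => (hFprop n).2.1
  have hFpos : ∀ n, 0 < volume (F n) := fun n => (hFprop n).2.2.2
  have hFfin : ∀ n, volume (F n) < ⊤ := fun n => (hFbdd n).measure_lt_top
  have hFtR : ∀ n, 0 < (volume (F n)).toReal := fun n =>
    ENNReal.toReal_pos (hFpos n).ne' (hFfin n).ne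
  have horb : Continuous fun y : EuclideanSpace ℝ (Fin d) => y +ᵥ Γ :=
    hcont.comp (continuous_id.prodMk continuous_const)
  have hvaddX : ∀ t : EuclideanSpace ℝ (Fin d), Continuous fun z : X => t +ᵥ z := fun t =>
    hcont.comp (continuous_const.prodMk continuous_id)
  have hint : ∀ (ψ : C(X, ℝ)) (s : Set (EuclideanSpace ℝ (Fin d))), MeasurableSet s →
      volume s < ⊤ → IntegrableOn (fun y => ψ (y +ᵥ Γ)) s volume := by
    intro ψ s hs hsf
    haveI : IsFiniteMeasure (volume.restrict s) :=
      ⟨by rwa [Measure.restrict_apply_univ]⟩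
    apply Integrable.mono' (integrable_const ‖ψ‖)
    · exact (ψ.continuous.comp horb).aestronglyMeasurable.restrict
    · exact Filter.Eventually.of_forall fun y => ψ.norm_coe_le_norm _
  set Λs : ℕ → (C(X, ℝ) → ℝ) :=
    fun n ψ => ((volume (F n)).toReal)⁻¹ * ∫ y in F n, ψ (y +ᵥ Γ) with hΛs
  show Tendsto (fun n => Λs n φ) atTop (𝓝 (∫ z, φ z ∂μ))
  have hbound : ∀ n ψ, |Λs n ψ| ≤ ‖ψ‖ := by
    intro n ψ
    have h1 : ‖∫ y in F n, ψ (y +ᵥ Γ)‖ ≤ ‖ψ‖ * (volume (F n)).toReal :=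
      norm_setIntegral_le_of_norm_le_const (hFfin n)
        (fun y _ => ψ.norm_coe_le_norm _)
    rw [Real.norm_eq_abs] at h1
    have h2 : |Λs n ψ| = ((volume (F n)).toReal)⁻¹ * |∫ y in F n, ψ (y +ᵥ Γ)| := by
      rw [hΛs]
      simp only
      rw [abs_mul, abs_inv, abs_of_nonneg ENNReal.toReal_nonneg]
    rw [h2]
    calc ((volume (F n)).toReal)⁻¹ * |∫ y in F n, ψ (y +ᵥ Γ)|
        ≤ ((volume (F n)).toReal)⁻¹ * (‖ψ‖ * (volume (F n)).toReal) := by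
          apply mul_le_mul_of_nonneg_left h1 (by positivity)
      _ = ‖ψ‖ := by
          rw [mul_comm ‖ψ‖, ← mul_assoc, inv_mul_cancel₀ (hFtR n).ne', one_mul]
  have hΛadd : ∀ n (f g : C(X, ℝ)), Λs n (f + g) = Λs n f + Λs n g := by
    intro n f g
    have h1 : ∫ y in F n, (f + g) (y +ᵥ Γ) =
        (∫ y in F n, f (y +ᵥ Γ)) + ∫ y in F n, g (y +ᵥ Γ) := by
      simp only [ContinuousMap.add_apply]
      exact integral_add (hint f _ (hFmeas n) (hFfin n)) (hint g _ (hFmeas n) (hFfin n))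
    rw [hΛs]
    simp only
    rw [h1]
    ring
  have hΛsmul : ∀ n (c : ℝ) (f : C(X, ℝ)), Λs n (c • f) = c * Λs n f := by
    intro n c f
    have h1 : ∫ y in F n, (c • f) (y +ᵥ Γ) = c * ∫ y in F n, f (y +ᵥ Γ) := by
      simp only [ContinuousMap.smul_apply, smul_eq_mul]
      rw [integral_const_mul]
    rw [hΛs]
    simp only
    rw [h1]
    ring
  have hΛpos : ∀ n (f : C(X, ℝ)), (∀ z, 0 ≤ f z) → 0 ≤ Λs n f := by
    intro n f hf
    apply mul_nonneg (by positivity)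
    exact setIntegral_nonneg (hFmeas n) fun y _ => hf _
  have hΛone : ∀ n, Λs n (1 : C(X, ℝ)) = 1 := by
    intro n
    have h1 : ∫ y in F n, (1 : C(X, ℝ)) (y +ᵥ Γ) = (volume (F n)).toReal := by
      simp only [ContinuousMap.one_apply]
      rw [setIntegral_const]
      simp
      rfl
    rw [hΛs]
    simp only
    rw [h1]
    exact inv_mul_cancel₀ (hFtR n).ne'
  have hΛinv : ∀ (t : EuclideanSpace ℝ (Fin d)) (f : C(X, ℝ)), t ≠ 0 →
      Tendsto (fun n => Λs n (f.comp ⟨fun z => t +ᵥ z, hvaddX t⟩) - Λs n f) atTop (𝓝 0) := by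
    intro t f ht
    set A : ℕ → Set (EuclideanSpace ℝ (Fin d)) := fun n => (fun y => t + y) '' F n with hA
    have hME : MeasurableEmbedding (fun y : EuclideanSpace ℝ (Fin d) => t + y) :=
      (Homeomorph.addLeft t).measurableEmbedding
    have hMP : MeasurePreserving (fun y : EuclideanSpace ℝ (Fin d) => t + y) volume volume :=
      measurePreserving_add_left volume t
    have hAmeas : ∀ n, MeasurableSet (A n) := fun n => hME.measurableSet_image' (hFmeas n)
    have hAeq : ∀ n, volume (A n) = volume (F n) := by
      intro n
      have h1 : volume (A n) = (Measure.map (fun y => t + y) volume) (A n) := by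
        rw [hMP.map_eq]
      rw [h1, Measure.map_apply hMP.measurable (hAmeas n), hA]
      congr 1
      exact preimage_image_eq _ (add_right_injective t)
    have hAfin : ∀ n, volume (A n) < ⊤ := fun n => (hAeq n) ▸ hFfin n
    have hshift : ∀ n, Λs n (f.comp ⟨fun z => t +ᵥ z, hvaddX t⟩) =
        ((volume (F n)).toReal)⁻¹ * ∫ y in A n, f (y +ᵥ Γ) := by
      intro n
      rw [hΛs]
      simp only
      congr 1
      have h1 : ∫ y in A n, f (y +ᵥ Γ) = ∫ y in F n, f ((t + y) +ᵥ Γ) :=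
        hMP.setIntegral_image_emb hME _ _
      rw [h1]
      apply integral_congr_ae
      apply Filter.Eventually.of_forall
      intro y
      simp only [ContinuousMap.comp_apply, ContinuousMap.coe_mk, vadd_vadd]
    have hdiff : ∀ n, |Λs n (f.comp ⟨fun z => t +ᵥ z, hvaddX t⟩) - Λs n f| ≤
        ‖f‖ * ((volume (A n \ F n) + volume (F n \ A n)) / volume (F n)).toReal := by
      intro n
      have hintA : IntegrableOn (fun y => f (y +ᵥ Γ)) (A n) volume :=
        hint f _ (hAmeas n) (hAfin n)
      have hintB : IntegrableOn (fun y => f (y +ᵥ Γ)) (F n) volume :=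
        hint f _ (hFmeas n) (hFfin n)
      have hsplitA : (∫ y in A n ∩ F n, f (y +ᵥ Γ)) + ∫ y in A n \ F n, f (y +ᵥ Γ)
          = ∫ y in A n, f (y +ᵥ Γ) :=
        integral_inter_add_diff (hFmeas n) hintA
      have hsplitB : (∫ y in F n ∩ A n, f (y +ᵥ Γ)) + ∫ y in F n \ A n, f (y +ᵥ Γ)
          = ∫ y in F n, f (y +ᵥ Γ) :=
        integral_inter_add_diff (hAmeas n) hintB
      have hb1 : |∫ y in A n \ F n, f (y +ᵥ Γ)| ≤ ‖f‖ * (volume (A n \ F n)).toReal := by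
        have := norm_setIntegral_le_of_norm_le_const
          (lt_of_le_of_lt (measure_mono diff_subset) (hAfin n))
          (fun y (_ : y ∈ A n \ F n) => f.norm_coe_le_norm (y +ᵥ Γ))
        rwa [Real.norm_eq_abs] at this
      have hb2 : |∫ y in F n \ A n, f (y +ᵥ Γ)| ≤ ‖f‖ * (volume (F n \ A n)).toReal := by
        have := norm_setIntegral_le_of_norm_le_const
          (lt_of_le_of_lt (measure_mono diff_subset) (hFfin n))
          (fun y (_ : y ∈ F n \ A n) => f.norm_coe_le_norm (y +ᵥ Γ))
        rwa [Real.norm_eq_abs] at this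
      have hinterc : A n ∩ F n = F n ∩ A n := inter_comm _ _
      have hc0 : (0:ℝ) ≤ ((volume (F n)).toReal)⁻¹ := by positivity
      have hkey : |Λs n (f.comp ⟨fun z => t +ᵥ z, hvaddX t⟩) - Λs n f| ≤
          ((volume (F n)).toReal)⁻¹ *
            ((‖f‖ * (volume (A n \ F n)).toReal) + (‖f‖ * (volume (F n \ A n)).toReal)) := by
        rw [hshift n, hΛs]
        simp only
        rw [← mul_sub, abs_mul, abs_inv, abs_of_nonneg ENNReal.toReal_nonneg]
        apply mul_le_mul_of_nonneg_left _ hc0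
        have heq : (∫ y in A n, f (y +ᵥ Γ)) - ∫ y in F n, f (y +ᵥ Γ) =
            (∫ y in A n \ F n, f (y +ᵥ Γ)) - ∫ y in F n \ A n, f (y +ᵥ Γ) := by
          rw [← hsplitA, ← hsplitB, hinterc]
          ring
        rw [heq]
        calc |(∫ y in A n \ F n, f (y +ᵥ Γ)) - ∫ y in F n \ A n, f (y +ᵥ Γ)|
            ≤ |∫ y in A n \ F n, f (y +ᵥ Γ)| + |∫ y in F n \ A n, f (y +ᵥ Γ)| :=
              abs_sub _ _
          _ ≤ _ := add_le_add hb1 hb2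
      have hratio : ((volume (A n \ F n) + volume (F n \ A n)) / volume (F n)).toReal =
          ((volume (F n)).toReal)⁻¹ *
            ((volume (A n \ F n)).toReal + (volume (F n \ A n)).toReal) := by
        rw [ENNReal.toReal_div,
          ENNReal.toReal_add (ne_of_lt (lt_of_le_of_lt (measure_mono diff_subset) (hAfin n)))
            (ne_of_lt (lt_of_le_of_lt (measure_mono diff_subset) (hFfin n)))]
        rw [div_eq_inv_mul]
      rw [hratio]
      calc |Λs n (f.comp ⟨fun z => t +ᵥ z, hvaddX t⟩) - Λs n f|
          ≤ ((volume (F n)).toReal)⁻¹ *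
            ((‖f‖ * (volume (A n \ F n)).toReal) + (‖f‖ * (volume (F n \ A n)).toReal)) := hkey
        _ = ‖f‖ * (((volume (F n)).toReal)⁻¹ *
            ((volume (A n \ F n)).toReal + (volume (F n \ A n)).toReal)) := by ring
    have hr : 0 < ‖t‖ := norm_pos_iff.2 ht
    have hsub : ∀ n, (A n \ F n) ∪ (F n \ A n) ⊆
        {x | infDist x (frontier (F n)) ≤ ‖t‖} := fun n =>
      symmDiff_subset_frontier_thickening
    have hratio0 : Tendsto
        (fun n => (volume (A n \ F n) + volume (F n \ A n)) / volume (F n)) atTop (𝓝 0) := by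
      have hle : ∀ n, (volume (A n \ F n) + volume (F n \ A n)) / volume (F n) ≤
          volume {x | infDist x (frontier (F n)) ≤ ‖t‖} / volume (F n) +
          volume {x | infDist x (frontier (F n)) ≤ ‖t‖} / volume (F n) := by
        intro n
        rw [← ENNReal.add_div]
        apply ENNReal.div_le_div_right
        exact add_le_add
          (measure_mono (subset_trans subset_union_left (hsub n)))
          (measure_mono (subset_trans subset_union_right (hsub n)))
      have hlim := hFratio ‖t‖ hr
      have hlim2 := hlim.add hlim
      rw [add_zero] at hlim2
      exact tendsto_of_tendsto_of_tendsto_of_le_of_le tendsto_const_nhds hlim2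
        (fun n => zero_le) hle
    have htoReal : Tendsto
        (fun n => ((volume (A n \ F n) + volume (F n \ A n)) / volume (F n)).toReal)
        atTop (𝓝 0) := by
      have h1 : Tendsto ENNReal.toReal (𝓝 0) (𝓝 0) := by
        simpa using ENNReal.tendsto_toReal (a := 0) (by simp)
      exact h1.comp hratio0
    have h2 : Tendsto
        (fun n => ‖f‖ * ((volume (A n \ F n) + volume (F n \ A n)) / volume (F n)).toReal)
        atTop (𝓝 (‖f‖ * 0)) := htoReal.const_mul ‖f‖
    rw [mul_zero] at h2
    exact squeeze_zero_norm (fun n => by rw [Real.norm_eq_abs]; exact hdiff n) h2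
  -- main contradiction argument
  by_contra hcon
  rw [Metric.tendsto_atTop] at hcon
  push_neg at hcon
  obtain ⟨ε, hε, hfreq⟩ := hcon
  have hfreq' : ∃ᶠ n in atTop, ε ≤ dist (Λs n φ) (∫ z, φ z ∂μ) := by
    rw [frequently_atTop]
    intro N
    obtain ⟨n, hn1, hn2⟩ := hfreq N
    exact ⟨n, hn1, hn2⟩
  haveI hl : (atTop ⊓ 𝓟 {n | ε ≤ dist (Λs n φ) (∫ z, φ z ∂μ)}).NeBot :=
    frequently_iff_neBot.1 hfreq'
  set l := atTop ⊓ 𝓟 {n | ε ≤ dist (Λs n φ) (∫ z, φ z ∂μ)} with hldef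
  set S : Set (C(X, ℝ) → ℝ) := univ.pi (fun ψ => Icc (-‖ψ‖) ‖ψ‖) with hSdef
  have hScpt : IsCompact S := isCompact_univ_pi fun ψ => isCompact_Icc
  have hmemS : ∀ n, Λs n ∈ S := by
    intro n ψ _
    have := abs_le.1 (hbound n ψ)
    exact ⟨this.1, this.2⟩
  have hmaple : Filter.map Λs l ≤ 𝓟 S :=
    le_principal_iff.2 (mem_map.2 (Filter.Eventually.of_forall hmemS))
  obtain ⟨ψl, hψS, hclp⟩ := hScpt.exists_clusterPt hmaple
  have hclosed : ∀ T : Set (C(X, ℝ) → ℝ), IsClosed T → (∀ᶠ n in l, Λs n ∈ T) → ψl ∈ T := by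
    intro T hT hev
    have h1 : Filter.map Λs l ≤ 𝓟 T := le_principal_iff.2 (mem_map.2 hev)
    have h2 : ClusterPt ψl (𝓟 T) := hclp.mono h1
    rw [← hT.closure_eq]
    exact mem_closure_iff_clusterPt.2 h2
  have padd : ∀ f g : C(X, ℝ), ψl (f + g) = ψl f + ψl g := by
    intro f g
    have := hclosed {h : C(X, ℝ) → ℝ | h (f + g) = h f + h g}
      (isClosed_eq (continuous_apply (f + g)) ((continuous_apply f).add (continuous_apply g)))
      (Filter.Eventually.of_forall fun n => hΛadd n f g)
    exact this
  have psmul : ∀ (c : ℝ) (f : C(X, ℝ)), ψl (c • f) = c * ψl f := by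
    intro c f
    have := hclosed {h : C(X, ℝ) → ℝ | h (c • f) = c * h f}
      (isClosed_eq (continuous_apply _) (continuous_const.mul (continuous_apply f)))
      (Filter.Eventually.of_forall fun n => hΛsmul n c f)
    exact this
  have ppos : ∀ f : C(X, ℝ), (∀ z, 0 ≤ f z) → 0 ≤ ψl f := by
    intro f hf
    have := hclosed {h : C(X, ℝ) → ℝ | 0 ≤ h f}
      (isClosed_le continuous_const (continuous_apply f))
      (Filter.Eventually.of_forall fun n => hΛpos n f hf)
    exact this
  have pone : ψl 1 = 1 := by
    have := hclosed {h : C(X, ℝ) → ℝ | h 1 = 1}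
      (isClosed_eq (continuous_apply _) continuous_const)
      (Filter.Eventually.of_forall fun n => hΛone n)
    exact this
  have pinv : ∀ (t : EuclideanSpace ℝ (Fin d)) (f : C(X, ℝ)),
      ψl (f.comp ⟨fun z => t +ᵥ z, hvaddX t⟩) = ψl f := by
    intro t f
    by_cases ht : t = 0
    · subst ht
      have : f.comp ⟨fun z => (0 : EuclideanSpace ℝ (Fin d)) +ᵥ z, hvaddX 0⟩ = f := by
        ext z
        simp [zero_vadd]
      rw [this]
    · set ft : C(X, ℝ) := f.comp ⟨fun z => t +ᵥ z, hvaddX t⟩ with hft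
      have heta : ∀ η : ℝ, 0 < η → |ψl ft - ψl f| ≤ η := by
        intro η hη
        have hTclosed : IsClosed {g : C(X, ℝ) → ℝ | |g ft - g f| ≤ η} :=
          isClosed_le (((continuous_apply ft).sub (continuous_apply f)).abs) continuous_const
        refine hclosed {g : C(X, ℝ) → ℝ | |g ft - g f| ≤ η} hTclosed ?_
        have h2 : ∀ᶠ n in atTop, |Λs n ft - Λs n f| ≤ η := by
          have h3 := Metric.tendsto_nhds.1 (hΛinv t f ht) η hη
          apply h3.mono
          intro n hn
          rw [Real.dist_eq, sub_zero] at hn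
          exact le_of_lt hn
        exact h2.filter_mono inf_le_left
      have h4 : |ψl ft - ψl f| = 0 := by
        by_contra h5
        have h6 : 0 < |ψl ft - ψl f| :=
          lt_of_le_of_ne (abs_nonneg _) (Ne.symm h5)
        have h7 := heta _ (half_pos h6)
        linarith
      have := abs_eq_zero.1 h4
      linarith [sub_eq_zero.1 this]
  set D : RieszData X := ⟨ψl, padd, psmul, ppos⟩ with hD
  have hrep : ∀ f : C(X, ℝ), ∫ z, f z ∂D.meas = ψl f := fun f => D.integral_eq f
  haveI hprob : IsProbabilityMeasure D.meas := by
    constructor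
    rw [D.meas_univ_eq]
    show ENNReal.ofReal (ψl 1) = 1
    rw [pone, ENNReal.ofReal_one]
  have hconv : ∀ (h : X → ℝ≥0), Continuous h →
      ∫⁻ x, (h x : ℝ≥0∞) ∂D.meas = ENNReal.ofReal (∫ x, (h x : ℝ) ∂D.meas) := by
    intro h hc
    have hcr : Continuous fun x => (h x : ℝ) := NNReal.continuous_coe.comp hc
    have hint0 : Integrable (fun x => (h x : ℝ)) D.meas :=
      hcr.integrable_of_hasCompactSupport
        (IsCompact.of_isClosed_subset isCompact_univ (isClosed_tsupport _) (subset_univ _))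
    rw [ofReal_integral_eq_lintegral_ofReal hint0
      (Filter.Eventually.of_forall fun x => NNReal.coe_nonneg _)]
    apply lintegral_congr
    intro x
    rw [ENNReal.ofReal_coe_nnreal]
  have hinv : ∀ g : EuclideanSpace ℝ (Fin d),
      Measure.map (fun z : X => g +ᵥ z) D.meas = D.meas := by
    intro g
    have hgmeas : Measurable fun z : X => g +ᵥ z := (hvaddX g).measurable
    haveI : IsFiniteMeasure (Measure.map (fun z : X => g +ᵥ z) D.meas) := by
      constructor
      rw [Measure.map_apply hgmeas MeasurableSet.univ, preimage_univ]
      exact measure_lt_top _ _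
    apply ext_of_forall_lintegral_eq_of_IsFiniteMeasure
    intro f
    have hmeasf : Measurable fun x : X => (f x : ℝ≥0∞) :=
      measurable_coe_nnreal_ennreal.comp f.continuous.measurable
    rw [lintegral_map hmeasf hgmeas]
    have hc1 := hconv (fun x => f (g +ᵥ x)) (f.continuous.comp (hvaddX g))
    have hc2 := hconv (fun x => f x) f.continuous
    rw [hc1, hc2]
    congr 1
    set φ₀ : C(X, ℝ) := ⟨fun z => (f z : ℝ), NNReal.continuous_coe.comp f.continuous⟩ with hφ₀
    have e1 : ∫ x, ((f (g +ᵥ x) : ℝ)) ∂D.meas =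
        ∫ z, (φ₀.comp ⟨fun z => g +ᵥ z, hvaddX g⟩) z ∂D.meas := rfl
    have e2 : ∫ x, ((f x : ℝ)) ∂D.meas = ∫ z, φ₀ z ∂D.meas := rfl
    rw [e1, e2, hrep, hrep, pinv]
  have huniq2 := huniq D.meas hprob hinv
  have hμφ : ∫ z, φ z ∂μ = ψl φ := by
    rw [← huniq2]
    exact hrep φ
  have hbad : ε ≤ dist (ψl φ) (∫ z, φ z ∂μ) := by
    have := hclosed {g : C(X, ℝ) → ℝ | ε ≤ dist (g φ) (∫ z, φ z ∂μ)}
      (isClosed_le continuous_const ((continuous_apply φ).dist continuous_const))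
      (by
        rw [hldef]
        exact eventually_inf_principal.2 (Filter.Eventually.of_forall fun n hn => hn))
    exact this
  rw [← hμφ, dist_self] at hbad
  linarith

end Key

/-- Dworkin's argument, main step: for a uniquely ergodic continuous action
of `ℝ^d` on a compact metric space (written `g +ᵥ Γ`, standing for `-g + Γ`), with unique
invariant probability measure `μ`, the averages of `y ↦ f(-x-y+Γ)·conj(f(-y+Γ))` over a
van Hove sequence converge to `∫ f(-x+Γ')·conj(f(Γ')) dμ(Γ')`. -/
theorem stmt_10 {d : ℕ} (hd : 1 ≤ d) {X : Type*} [MetricSpace X] [CompactSpace X]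
    [MeasurableSpace X] [BorelSpace X]
    [AddAction (EuclideanSpace ℝ (Fin d)) X]
    (hcont : Continuous fun p : EuclideanSpace ℝ (Fin d) × X => p.1 +ᵥ p.2)
    (μ : Measure X) (hμp : IsProbabilityMeasure μ)
    (hμinv : ∀ g : EuclideanSpace ℝ (Fin d), Measure.map (fun Γ => g +ᵥ Γ) μ = μ)
    (huniq : ∀ ν : Measure X, IsProbabilityMeasure ν →
      (∀ g : EuclideanSpace ℝ (Fin d), Measure.map (fun Γ => g +ᵥ Γ) ν = ν) → ν = μ)
    (F : ℕ → Set (EuclideanSpace ℝ (Fin d))) (hF : IsVanHove F) :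
    ∀ f : C(X, ℂ), ∀ x : EuclideanSpace ℝ (Fin d), ∀ Γ : X,
      Tendsto
        (fun n => ((volume (F n)).toReal)⁻¹ •
          ∫ y in F n, f ((x + y) +ᵥ Γ) * (starRingEnd ℂ) (f (y +ᵥ Γ)))
        atTop
        (𝓝 (∫ Γ', f (x +ᵥ Γ') * (starRingEnd ℂ) (f Γ') ∂μ)) := by
  intro f x Γ
  haveI : Nonempty X := ⟨Γ⟩
  have hvaddX : ∀ t : EuclideanSpace ℝ (Fin d), Continuous fun z : X => t +ᵥ z := fun t =>
    hcont.comp (continuous_const.prodMk continuous_id)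
  have horb : Continuous fun y : EuclideanSpace ℝ (Fin d) => y +ᵥ Γ :=
    hcont.comp (continuous_id.prodMk continuous_const)
  have hΦc : Continuous fun z : X => f (x +ᵥ z) * (starRingEnd ℂ) (f z) :=
    (f.continuous.comp (hvaddX x)).mul (continuous_star.comp f.continuous)
  set Φ : X → ℂ := fun z => f (x +ᵥ z) * (starRingEnd ℂ) (f z) with hΦ
  set φre : C(X, ℝ) := ⟨fun z => (Φ z).re, Complex.continuous_re.comp hΦc⟩ with hφre
  set φim : C(X, ℝ) := ⟨fun z => (Φ z).im, Complex.continuous_im.comp hΦc⟩ with hφim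
  have hFmeas : ∀ n, MeasurableSet (F n) := fun n => (hF.1 n).2.2.1
  have hFfin : ∀ n, volume (F n) < ⊤ := fun n => (hF.1 n).2.1.measure_lt_top
  have hintC : ∀ n, IntegrableOn (fun y => Φ (y +ᵥ Γ)) (F n) volume := by
    intro n
    haveI : IsFiniteMeasure (volume.restrict (F n)) :=
      ⟨by rw [Measure.restrict_apply_univ]; exact hFfin n⟩
    apply Integrable.mono' (integrable_const (‖f‖ * ‖f‖))
    · exact (hΦc.comp horb).aestronglyMeasurable.restrict
    · apply Filter.Eventually.of_forall
      intro y
      show ‖f (x +ᵥ (y +ᵥ Γ)) * (starRingEnd ℂ) (f (y +ᵥ Γ))‖ ≤ ‖f‖ * ‖f‖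
      rw [starRingEnd_apply, norm_mul, norm_star]
      exact mul_le_mul (f.norm_coe_le_norm _) (f.norm_coe_le_norm _) (norm_nonneg _)
        (norm_nonneg _)
  have hEq : ∀ n, (∫ y in F n, f ((x + y) +ᵥ Γ) * (starRingEnd ℂ) (f (y +ᵥ Γ))) =
      ∫ y in F n, Φ (y +ᵥ Γ) := by
    intro n
    apply integral_congr_ae
    apply Filter.Eventually.of_forall
    intro y
    show f ((x + y) +ᵥ Γ) * (starRingEnd ℂ) (f (y +ᵥ Γ)) =
      f (x +ᵥ (y +ᵥ Γ)) * (starRingEnd ℂ) (f (y +ᵥ Γ))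
    rw [vadd_vadd]
  have hRe : ∀ n, (((volume (F n)).toReal)⁻¹ •
      ∫ y in F n, f ((x + y) +ᵥ Γ) * (starRingEnd ℂ) (f (y +ᵥ Γ))) =
      (((((volume (F n)).toReal)⁻¹ * ∫ y in F n, φre (y +ᵥ Γ) : ℝ) : ℂ) +
      ((((volume (F n)).toReal)⁻¹ * ∫ y in F n, φim (y +ᵥ Γ) : ℝ) : ℂ) * Complex.I) := by
    intro n
    rw [hEq n]
    have hintn := hintC n
    have hre : ∫ y in F n, φre (y +ᵥ Γ) = (∫ y in F n, Φ (y +ᵥ Γ)).re := by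
      have h := integral_re (μ := volume.restrict (F n)) hintn
      simpa [hφre] using h
    have him : ∫ y in F n, φim (y +ᵥ Γ) = (∫ y in F n, Φ (y +ᵥ Γ)).im := by
      have h := integral_im (μ := volume.restrict (F n)) hintn
      simpa [hφim] using h
    rw [hre, him]
    rw [Complex.real_smul]
    conv_lhs => rw [← Complex.re_add_im (∫ y in F n, Φ (y +ᵥ Γ))]
    push_cast
    ring
  have hμint : Integrable Φ μ := hΦc.integrable_of_hasCompactSupport
    (IsCompact.of_isClosed_subset isCompact_univ (isClosed_tsupport _) (subset_univ _))
  have hμre : ∫ z, φre z ∂μ = (∫ z, Φ z ∂μ).re := by simpa [hφre] using integral_re hμint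
  have hμim : ∫ z, φim z ∂μ = (∫ z, Φ z ∂μ).im := by simpa [hφim] using integral_im hμint
  have hkre := key_real hcont μ hμp huniq F hF Γ φre
  have hkim := key_real hcont μ hμp huniq F hF Γ φim
  rw [hμre] at hkre
  rw [hμim] at hkim
  have h1 : Tendsto (fun n =>
      (((((volume (F n)).toReal)⁻¹ * ∫ y in F n, φre (y +ᵥ Γ) : ℝ) : ℂ) +
      ((((volume (F n)).toReal)⁻¹ * ∫ y in F n, φim (y +ᵥ Γ) : ℝ) : ℂ) * Complex.I)) atTop
      (𝓝 ((((∫ z, Φ z ∂μ).re : ℝ) : ℂ) + (((∫ z, Φ z ∂μ).im : ℝ) : ℂ) * Complex.I)) := by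
    apply Tendsto.add
    · exact (Complex.continuous_ofReal.tendsto _).comp hkre
    · exact Tendsto.mul_const Complex.I ((Complex.continuous_ofReal.tendsto _).comp hkim)
  rw [Complex.re_add_im] at h1
  have h2 : (fun n => ((volume (F n)).toReal)⁻¹ •
      ∫ y in F n, f ((x + y) +ᵥ Γ) * (starRingEnd ℂ) (f (y +ᵥ Γ))) = (fun n =>
      (((((volume (F n)).toReal)⁻¹ * ∫ y in F n, φre (y +ᵥ Γ) : ℝ) : ℂ) +
      ((((volume (F n)).toReal)⁻¹ * ∫ y in F n, φim (y +ᵥ Γ) : ℝ) : ℂ) * Complex.I)) :=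
    funext hRe
  rw [h2]
  exact h1
end

section
/- Let m, d ≥ 1, let Γ = (Γ_i)_{i≤m} and P = (P_i)_{i≤m} be m-multisets in ℝ^d with each P_i finite and not all P_i empty, let V ⊆ ℝ^d be a bounded set, and let θ₁ be a real number with diam(V) ≤ θ₁ < 1. Assume: (a) for every family Q = (Q_i)_{i≤m} with Q_i ⊆ Γ_i for all i and every w ∈ ℝ^d, if ρ_H(Q_i, −w+P_i) ≤ θ₁ for all i ≤ m, then there exists u ∈ ℝ^d with Q_i = −u + P_i for all i; (b) for all u, w ∈ ℝ^d, if ρ_H(−u+P_i, −w+P_i) ≤ θ₁ for all i ≤ m, then u = w. If for every i ≤ m and every x ∈ P_i there exists v ∈ V with x − v ∈ Γ_i, then there exists a single v ∈ V such that −v + P_i ⊆ Γ_i for all i ≤ m. -/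
open Metric Set
open scoped Classical

/-- The (Hausdorff-type) distance `ρ_H` on (finite) point sets:
`max{max_{a∈A} dist(a,B), max_{b∈B} dist(b,A)}` for nonempty `A,B`; `1` if exactly one
is empty; `0` if both are empty. -/
noncomputable def rhoH {d : ℕ} (A B : Set (EuclideanSpace ℝ (Fin d))) : ℝ :=
  if A = ∅ ∧ B = ∅ then 0
  else if A = ∅ ∨ B = ∅ then 1
  else sSup (((fun a => infDist a B) '' A) ∪ ((fun b => infDist b A) '' B))

lemma rhoH_le_aux {d : ℕ} {A B : Set (EuclideanSpace ℝ (Fin d))} {θ : ℝ} (hθ : 0 ≤ θ)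
    (hAB : A = ∅ ↔ B = ∅)
    (h1 : ∀ a ∈ A, ∃ b ∈ B, dist a b ≤ θ)
    (h2 : ∀ b ∈ B, ∃ a ∈ A, dist a b ≤ θ) :
    rhoH A B ≤ θ := by
  unfold rhoH
  by_cases hA : A = ∅
  · simp [hA, hAB.mp hA, hθ]
  · have hB : B ≠ ∅ := fun h => hA (hAB.mpr h)
    rw [if_neg (by tauto), if_neg (by tauto)]
    apply Real.sSup_le _ hθ
    rintro x (⟨a, haA, rfl⟩ | ⟨b, hbB, rfl⟩)
    · obtain ⟨b, hbB, hd⟩ := h1 a haA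
      exact le_trans (infDist_le_dist_of_mem hbB) hd
    · obtain ⟨a, haA, hd⟩ := h2 b hbB
      exact le_trans (infDist_le_dist_of_mem haA) (by rwa [dist_comm])

/-- Lemma 3.5 of the paper: under the local rigidity hypotheses (a), (b)
coming from FLC, if each point `x` of the cluster `P` can be moved into `Γ` by some
`v = v(x) ∈ V` (i.e. `x - v ∈ Γᵢ`), with `diam V ≤ θ₁ < 1`, then a single `v ∈ V` works
for all of `P` simultaneously. -/
theorem stmt_11 {m d : ℕ} (hm : 1 ≤ m) (hd : 1 ≤ d)
    (Γ P : Fin m → Set (EuclideanSpace ℝ (Fin d)))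
    (hPfin : ∀ i, (P i).Finite) (hPne : ∃ i, (P i).Nonempty)
    (V : Set (EuclideanSpace ℝ (Fin d))) (hVb : Bornology.IsBounded V)
    {θ₁ : ℝ} (hVd : diam V ≤ θ₁) (hθ : θ₁ < 1)
    (ha : ∀ Q : Fin m → Set (EuclideanSpace ℝ (Fin d)), (∀ i, Q i ⊆ Γ i) →
      ∀ w : EuclideanSpace ℝ (Fin d),
        (∀ i, rhoH (Q i) ((fun p => p - w) '' P i) ≤ θ₁) →
        ∃ u : EuclideanSpace ℝ (Fin d), ∀ i, Q i = (fun p => p - u) '' P i)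
    (hb : ∀ u w : EuclideanSpace ℝ (Fin d),
      (∀ i, rhoH ((fun p => p - u) '' P i) ((fun p => p - w) '' P i) ≤ θ₁) → u = w)
    (hx : ∀ i, ∀ x ∈ P i, ∃ v ∈ V, x - v ∈ Γ i) :
    ∃ v ∈ V, ∀ i, (fun p => p - v) '' P i ⊆ Γ i := by
  have hθ0 : 0 ≤ θ₁ := le_trans diam_nonneg hVd
  obtain ⟨i₀, x₀, hx₀⟩ := hPne
  obtain ⟨v₀, hv₀V, _⟩ := hx i₀ x₀ hx₀
  -- choice function: for x ∈ P i pick v(i,x) ∈ V with x - v(i,x) ∈ Γ i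
  have hsel : ∀ i (x : EuclideanSpace ℝ (Fin d)),
      ∃ v, v ∈ V ∧ (x ∈ P i → x - v ∈ Γ i) := by
    intro i x
    by_cases h : x ∈ P i
    · obtain ⟨v, hvV, hvΓ⟩ := hx i x h
      exact ⟨v, hvV, fun _ => hvΓ⟩
    · exact ⟨v₀, hv₀V, fun h' => absurd h' h⟩
  choose vf hvfV hvfΓ using hsel
  set Q : Fin m → Set (EuclideanSpace ℝ (Fin d)) :=
    fun i => (fun x => x - vf i x) '' P i with hQ
  have hQsub : ∀ i, Q i ⊆ Γ i := by
    rintro i _ ⟨x, hxP, rfl⟩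
    exact hvfΓ i x hxP
  have key : ∀ i, rhoH (Q i) ((fun p => p - v₀) '' P i) ≤ θ₁ := by
    intro i
    apply rhoH_le_aux hθ0
    · simp [hQ, Set.image_eq_empty]
    · rintro _ ⟨x, hxP, rfl⟩
      refine ⟨x - v₀, ⟨x, hxP, rfl⟩, ?_⟩
      rw [dist_sub_left]
      exact dist_le_diam_of_mem hVb (hvfV i x) hv₀V |>.trans hVd
    · rintro _ ⟨x, hxP, rfl⟩
      refine ⟨x - vf i x, ⟨x, hxP, rfl⟩, ?_⟩
      rw [dist_sub_left]
      exact dist_le_diam_of_mem hVb (hvfV i x) hv₀V |>.trans hVd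
  obtain ⟨u, hu⟩ := ha Q hQsub v₀ key
  have huv : u = v₀ := by
    apply hb
    intro i
    rw [← hu i]
    exact key i
  refine ⟨v₀, hv₀V, fun i => ?_⟩
  rw [← huv, ← hu i]
  exact hQsub i
end

section
/- Let Λ = (Λ_i)_{i≤m} be a Delone multiset in ℝ^d with finite local complexity which has uniform cluster frequencies relative to a van Hove sequence {F_n}, and let a_1,…,a_m ∈ ℂ. For i, j ≤ m, y ∈ Λ_i, z ∈ Λ_j, let P^{i,j}(y,z) denote the cluster of Λ whose i-th component contains y, whose j-th component contains z, and which has no other points. Then for every continuous compactly supported φ : ℝ^d → ℂ: (1) for each i, j, the frequency freq(P^{i,j}(y,z), Λ) depends only on i, j and the difference y − z, so one may write c_{ij}(w) = freq(P^{i,j}(y,z), Λ) for any y ∈ Λ_i, z ∈ Λ_j with y − z = w; (2) the set (Λ_i − Λ_j) ∩ supp(φ) is finite for all i, j; and (3) lim_{n→∞} (1/Vol(F_n)) Σ_{i,j≤m} a_i conj(a_j) Σ_{y ∈ Λ_i ∩ F_n} Σ_{z ∈ Λ_j ∩ F_n} φ(y−z) = Σ_{i,j≤m} a_i conj(a_j)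 Σ_{w ∈ (Λ_i − Λ_j) ∩ supp(φ)} c_{ij}(w) φ(w). -/
open Metric Set Filter MeasureTheory Topology
open scoped Pointwise

/-- The two-point cluster `P^{i,j}(y,z)` whose `i`-th component contains `y`, whose `j`-th
component contains `z`, and which has no other points. -/
def twoPointCluster {m d : ℕ} (i j : Fin m) (y z : EuclideanSpace ℝ (Fin d)) :
    Fin m → Set (EuclideanSpace ℝ (Fin d)) :=
  fun k => (if k = i then {y} else ∅) ∪ (if k = j then {z} else ∅)


section AuxLemmas

variable {m d : ℕ}

/-- A uniformly discrete set meets any bounded set in a finite set. -/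
lemma sep_inter_bounded_finite {s : Set (EuclideanSpace ℝ (Fin d))} {r : ℝ} (hr : 0 < r)
    (hsep : ∀ x ∈ s, ∀ y ∈ s, x ≠ y → r ≤ dist x y)
    {K : Set (EuclideanSpace ℝ (Fin d))} (hK : Bornology.IsBounded K) :
    (s ∩ K).Finite := by
  by_contra h
  have hinf : (s ∩ K).Infinite := h
  obtain ⟨x, -, hx⟩ := hinf.exists_accPt_of_subset_isCompact hK.isCompact_closure
    (Set.inter_subset_right.trans subset_closure)
  rw [accPt_iff_nhds] at hx
  obtain ⟨p, ⟨hp1, hp2, -⟩, hpx⟩ := hx (Metric.ball x (r / 2))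
    (Metric.ball_mem_nhds _ (by linarith))
  obtain ⟨q, ⟨hq1, hq2, -⟩, hqx⟩ := hx (Metric.ball x (dist p x))
    (Metric.ball_mem_nhds _ (dist_pos.mpr hpx))
  have h1 : dist p x < r / 2 := by simpa using hp1
  have h2 : dist q x < dist p x := by simpa using hq1
  have hqp : q ≠ p := fun hqq => by rw [hqq] at h2; exact lt_irrefl _ h2
  have hsep' := hsep p hp2 q hq2 (Ne.symm hqp)
  have htri : dist p q ≤ dist p x + dist x q := dist_triangle p x q
  rw [dist_comm x q] at htri
  linarith

lemma mem_twoPoint_iff (Λ : Fin m → Set (EuclideanSpace ℝ (Fin d))) (i j : Fin m)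
    (y z : EuclideanSpace ℝ (Fin d)) (A : Set (EuclideanSpace ℝ (Fin d)))
    (x : EuclideanSpace ℝ (Fin d)) :
    (∀ k, (fun p => x + p) '' twoPointCluster i j y z k ⊆ A ∩ Λ k) ↔
      (x + y ∈ A ∩ Λ i ∧ x + z ∈ A ∩ Λ j) := by
  constructor
  · intro h
    exact ⟨h i ⟨y, by simp [twoPointCluster], rfl⟩, h j ⟨z, by simp [twoPointCluster], rfl⟩⟩
  · rintro ⟨h1, h2⟩ k p ⟨q, hq, rfl⟩
    rcases hq with hq | hq
    · rcases eq_or_ne k i with rfl | hk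
      · rw [if_pos rfl, Set.mem_singleton_iff] at hq; subst hq; exact h1
      · rw [if_neg hk] at hq; exact absurd hq (Set.notMem_empty _)
    · rcases eq_or_ne k j with rfl | hk
      · rw [if_pos rfl, Set.mem_singleton_iff] at hq; subst hq; exact h2
      · rw [if_neg hk] at hq; exact absurd hq (Set.notMem_empty _)

lemma clusterCount_twoPoint (Λ : Fin m → Set (EuclideanSpace ℝ (Fin d))) (i j : Fin m)
    (y z : EuclideanSpace ℝ (Fin d)) (A : Set (EuclideanSpace ℝ (Fin d))) :
    clusterCount Λ (twoPointCluster i j y z) A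
      = {x : EuclideanSpace ℝ (Fin d) | x + y ∈ A ∩ Λ i ∧ x + z ∈ A ∩ Λ j}.ncard := by
  unfold clusterCount
  congr 1
  ext x
  exact mem_twoPoint_iff Λ i j y z A x

lemma clusterCount_twoPoint_congr (Λ : Fin m → Set (EuclideanSpace ℝ (Fin d))) (i j : Fin m)
    {y z y' z' : EuclideanSpace ℝ (Fin d)} (h : y - z = y' - z')
    (A : Set (EuclideanSpace ℝ (Fin d))) :
    clusterCount Λ (twoPointCluster i j y z) A
      = clusterCount Λ (twoPointCluster i j y' z') A := by
  have h' : y - y' = z - z' := by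
    have e : y - y' = (y - z) - (y' - z') + (z - z') := by abel
    rw [e, h, sub_self, zero_add]
  rw [clusterCount_twoPoint, clusterCount_twoPoint]
  have himg : {x : EuclideanSpace ℝ (Fin d) | x + y ∈ A ∩ Λ i ∧ x + z ∈ A ∩ Λ j}
      = (fun x => x + (y' - y)) ''
        {x : EuclideanSpace ℝ (Fin d) | x + y' ∈ A ∩ Λ i ∧ x + z' ∈ A ∩ Λ j} := by
    ext x
    simp only [Set.mem_image, Set.mem_setOf_eq]
    constructor
    · intro hx
      refine ⟨x + (y - y'), ⟨?_, ?_⟩, by abel⟩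
      · have e : x + (y - y') + y' = x + y := by abel
        rw [e]; exact hx.1
      · have e : x + (y - y') + z' = x + z := by rw [h']; abel
        rw [e]; exact hx.2
    · rintro ⟨u, ⟨hu1, hu2⟩, rfl⟩
      constructor
      · have e : u + (y' - y) + y = u + y' := by abel
        rw [e]; exact hu1
      · have e : u + (y' - y) + z = u + z' := by
          have h'' : y' - y = z' - z := by
            have e2 : y' - y = -(y - y') := by abel
            rw [e2, h']; abel
          rw [h'']; abel
        rw [e]; exact hu2
  rw [himg, Set.ncard_image_of_injective _ (add_left_injective _)]

open scoped Classical in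
lemma count_pairs (Λ : Fin m → Set (EuclideanSpace ℝ (Fin d))) (i j : Fin m)
    {y₀ z₀ w : EuclideanSpace ℝ (Fin d)} (hw : y₀ - z₀ = w)
    (A : Set (EuclideanSpace ℝ (Fin d)))
    (hA : (Λ i ∩ A).Finite) (hB : (Λ j ∩ A).Finite) :
    clusterCount Λ (twoPointCluster i j y₀ z₀) A
      = ((hA.toFinset ×ˢ hB.toFinset).filter
          (fun p : EuclideanSpace ℝ (Fin d) × EuclideanSpace ℝ (Fin d) =>
            p.1 - p.2 = w)).card := by
  classical
  rw [clusterCount_twoPoint]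
  have himg : (((hA.toFinset ×ˢ hB.toFinset).filter
          (fun p : EuclideanSpace ℝ (Fin d) × EuclideanSpace ℝ (Fin d) =>
            p.1 - p.2 = w)) :
        Set (EuclideanSpace ℝ (Fin d) × EuclideanSpace ℝ (Fin d)))
      = (fun x => (x + y₀, x + z₀)) ''
        {x : EuclideanSpace ℝ (Fin d) | x + y₀ ∈ A ∩ Λ i ∧ x + z₀ ∈ A ∩ Λ j} := by
    ext ⟨u, v⟩
    simp only [Finset.coe_filter, Finset.mem_product, Set.Finite.mem_toFinset,
      Set.mem_setOf_eq, Set.mem_image, Set.mem_inter_iff, Prod.mk.injEq]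
    constructor
    · rintro ⟨⟨⟨hu1, hu2⟩, hv1, hv2⟩, huv⟩
      have hx : u - y₀ + z₀ = v := by
        have e2 : u - y₀ + z₀ = u - (y₀ - z₀) := by abel
        rw [e2, hw, ← huv]; abel
      have hy : u - y₀ + y₀ = u := by abel
      refine ⟨u - y₀, ⟨⟨?_, ?_⟩, ?_, ?_⟩, hy, hx⟩
      · rw [hy]; exact hu2
      · rw [hy]; exact hu1
      · rw [hx]; exact hv2
      · rw [hx]; exact hv1
    · rintro ⟨x, ⟨⟨hx1, hx2⟩, hx3, hx4⟩, rfl, rfl⟩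
      refine ⟨⟨⟨hx2, hx1⟩, hx4, hx3⟩, ?_⟩
      rw [← hw]; abel
  have hinj : Function.Injective
      (fun x : EuclideanSpace ℝ (Fin d) => (x + y₀, x + z₀)) := by
    intro a b hab
    have := congrArg Prod.fst hab
    simpa using add_left_injective y₀ this
  rw [← Set.ncard_coe_finset, himg, Set.ncard_image_of_injective _ hinj]

lemma twoPoint_isCluster (Λ : Fin m → Set (EuclideanSpace ℝ (Fin d))) (i j : Fin m)
    {y z : EuclideanSpace ℝ (Fin d)} (hy : y ∈ Λ i) (hz : z ∈ Λ j) (k : Fin m) :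
    twoPointCluster i j y z k ⊆ Λ k ∧ (twoPointCluster i j y z k).Finite := by
  constructor
  · rintro p (hp | hp)
    · rcases eq_or_ne k i with rfl | hk
      · rw [if_pos rfl, Set.mem_singleton_iff] at hp; subst hp; exact hy
      · rw [if_neg hk] at hp; exact absurd hp (Set.notMem_empty _)
    · rcases eq_or_ne k j with rfl | hk
      · rw [if_pos rfl, Set.mem_singleton_iff] at hp; subst hp; exact hz
      · rw [if_neg hk] at hp; exact absurd hp (Set.notMem_empty _)
  · apply Set.Finite.union <;> split_ifs <;> simp

end AuxLemmas

/-- existence and form of the autocorrelation, eq. (7) of the paper: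
for an FLC Delone multiset with UCF, weights `aᵢ ∈ ℂ`, and a continuous compactly
supported test function `φ`:
(1) `freq(P^{i,j}(y,z),Λ)` only depends on `i, j, y - z`;
(2) `(Λᵢ - Λⱼ) ∩ supp(φ)` is finite;
(3) `(1/Vol Fₙ) Σ_{i,j} aᵢ conj(aⱼ) Σ_{y∈Λᵢ∩Fₙ} Σ_{z∈Λⱼ∩Fₙ} φ(y-z)` converges to
    `Σ_{i,j} aᵢ conj(aⱼ) Σ_{w∈(Λᵢ-Λⱼ)∩supp φ} c_{ij}(w) φ(w)`, where
    `c_{ij}(y-z) = freq(P^{i,j}(y,z),Λ)`. -/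
theorem stmt_15 {m d : ℕ} (hm : 1 ≤ m) (hd : 1 ≤ d)
    (Λ : Fin m → Set (EuclideanSpace ℝ (Fin d)))
    (hDel : IsDeloneMultiset Λ) (hFLC : HasFLC Λ)
    (F : ℕ → Set (EuclideanSpace ℝ (Fin d))) (hF : IsVanHove F)
    (freq : (Fin m → Set (EuclideanSpace ℝ (Fin d))) → ℝ)
    (hUCF : HasUCFWith Λ F freq)
    (a : Fin m → ℂ)
    (φ : EuclideanSpace ℝ (Fin d) → ℂ) (hφc : Continuous φ)
    (hφs : HasCompactSupport φ) :
    (∀ i j : Fin m, ∀ y z y' z' : EuclideanSpace ℝ (Fin d),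
        y ∈ Λ i → z ∈ Λ j → y' ∈ Λ i → z' ∈ Λ j → y - z = y' - z' →
        freq (twoPointCluster i j y z) = freq (twoPointCluster i j y' z')) ∧
    (∀ i j : Fin m, ((Λ i - Λ j) ∩ tsupport φ).Finite) ∧
    (∃ c : Fin m → Fin m → EuclideanSpace ℝ (Fin d) → ℝ,
      (∀ i j : Fin m, ∀ y ∈ Λ i, ∀ z ∈ Λ j,
        c i j (y - z) = freq (twoPointCluster i j y z)) ∧
      Tendsto
        (fun n => (((volume (F n)).toReal : ℂ))⁻¹ *
          ∑ i : Fin m, ∑ j : Fin m, a i * (starRingEnd ℂ) (a j) *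
            ∑ᶠ y ∈ Λ i ∩ F n, ∑ᶠ z ∈ Λ j ∩ F n, φ (y - z))
        atTop
        (𝓝 (∑ i : Fin m, ∑ j : Fin m, a i * (starRingEnd ℂ) (a j) *
          ∑ᶠ w ∈ (Λ i - Λ j) ∩ tsupport φ, (c i j w : ℂ) * φ w))) := by
  classical
  -- Part 1: frequency depends only on the difference
  have part1 : ∀ i j : Fin m, ∀ y z y' z' : EuclideanSpace ℝ (Fin d),
      y ∈ Λ i → z ∈ Λ j → y' ∈ Λ i → z' ∈ Λ j → y - z = y' - z' →
      freq (twoPointCluster i j y z) = freq (twoPointCluster i j y' z') := by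
    intro i j y z y' z' hy hz hy' hz' hdiff
    have t1 := (hUCF _ (twoPoint_isCluster Λ i j hy hz)).tendsto_at 0
    have t2 := (hUCF _ (twoPoint_isCluster Λ i j hy' hz')).tendsto_at 0
    refine tendsto_nhds_unique t1 ?_
    have hfe : (fun n => (clusterCount Λ (twoPointCluster i j y' z')
            ((fun f => (0 : EuclideanSpace ℝ (Fin d)) + f) '' F n) : ℝ)
          / (volume (F n)).toReal)
        = fun n => (clusterCount Λ (twoPointCluster i j y z)
            ((fun f => (0 : EuclideanSpace ℝ (Fin d)) + f) '' F n) : ℝ)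
          / (volume (F n)).toReal := by
      funext n
      rw [clusterCount_twoPoint_congr Λ i j hdiff]
    rw [← hfe]
    exact t2
  -- Part 2: finiteness of (Λ i - Λ j) ∩ tsupport φ
  have part2 : ∀ i j : Fin m, ((Λ i - Λ j) ∩ tsupport φ).Finite := by
    intro i j
    obtain ⟨R, hsubR⟩ := hφs.isBounded.subset_closedBall (0 : EuclideanSpace ℝ (Fin d))
    set R' := max R 1 with hR'def
    have hR'pos : (0 : ℝ) < R' := lt_of_lt_of_le one_pos (le_max_right _ _)
    obtain ⟨Y, hYfin, hYsub, hYpatch⟩ := hFLC R' hR'pos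
    obtain ⟨r, hrpos, hsep⟩ := (hDel.1 i).1
    have hfin : ∀ y₀ : EuclideanSpace ℝ (Fin d), (closedBall y₀ R' ∩ Λ i).Finite := by
      intro y₀
      have := sep_inter_bounded_finite hrpos hsep
        (Metric.isBounded_closedBall (x := y₀) (r := R'))
      rw [Set.inter_comm] at this
      exact this
    refine Set.Finite.subset (hYfin.biUnion fun y₀ _ => ((hfin y₀).image fun u => u - y₀)) ?_
    rintro w ⟨hmem, hwsupp⟩
    rw [Set.mem_sub] at hmem
    obtain ⟨y, hy, z, hz, rfl⟩ := hmem
    have hzsupp : z ∈ ⋃ k, Λ k := Set.mem_iUnion.mpr ⟨j, hz⟩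
    obtain ⟨y₀, hy₀Y, hpatch⟩ := hYpatch z hzsupp
    have hydist : y ∈ closedBall z R' := by
      rw [Metric.mem_closedBall, dist_eq_norm]
      have h1 : ‖y - z‖ ≤ R := by
        have := hsubR hwsupp
        rwa [Metric.mem_closedBall, dist_zero_right] at this
      exact h1.trans (le_max_left _ _)
    have hmem2 : y ∈ closedBall z R' ∩ Λ i := ⟨hydist, hy⟩
    rw [hpatch i] at hmem2
    obtain ⟨u, hu, hux⟩ := hmem2
    refine Set.mem_biUnion hy₀Y ⟨u, hu, ?_⟩
    show u - y₀ = y - z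
    rw [← hux]; show u - y₀ = u + (z - y₀) - z; abel
  refine ⟨part1, part2, ?_⟩
  -- choose representatives for each difference vector
  have hrep : ∀ (i j : Fin m) (w : EuclideanSpace ℝ (Fin d)),
      ∃ p : EuclideanSpace ℝ (Fin d) × EuclideanSpace ℝ (Fin d),
        w ∈ Λ i - Λ j → p.1 ∈ Λ i ∧ p.2 ∈ Λ j ∧ p.1 - p.2 = w := by
    intro i j w
    by_cases h : w ∈ Λ i - Λ j
    · rw [Set.mem_sub] at h
      obtain ⟨y, hy, z, hz, hw⟩ := h
      exact ⟨(y, z), fun _ => ⟨hy, hz, hw⟩⟩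
    · exact ⟨(0, 0), fun h' => absurd h' h⟩
  choose rep hrepspec using hrep
  refine ⟨fun i j w => freq (twoPointCluster i j (rep i j w).1 (rep i j w).2), ?_, ?_⟩
  · intro i j y hy z hz
    obtain ⟨h1, h2, h3⟩ := hrepspec i j (y - z) (Set.sub_mem_sub hy hz)
    exact part1 i j (rep i j (y - z)).1 (rep i j (y - z)).2 y z h1 h2 hy hz h3
  -- Part 3: the limit
  have hAfin : ∀ (k : Fin m) (n : ℕ), (Λ k ∩ F n).Finite := by
    intro k n
    obtain ⟨r, hrpos, hsep⟩ := (hDel.1 k).1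
    exact sep_inter_bounded_finite hrpos hsep ((hF.1 n).2.1)
  -- key combinatorial identity
  have key : ∀ (i j : Fin m) (n : ℕ),
      (∑ᶠ y ∈ Λ i ∩ F n, ∑ᶠ z ∈ Λ j ∩ F n, φ (y - z))
        = ∑ w ∈ (part2 i j).toFinset,
            (clusterCount Λ (twoPointCluster i j (rep i j w).1 (rep i j w).2) (F n) : ℂ)
              * φ w := by
    intro i j n
    have h1 : (∑ᶠ y ∈ Λ i ∩ F n, ∑ᶠ z ∈ Λ j ∩ F n, φ (y - z))
        = ∑ y ∈ (hAfin i n).toFinset, ∑ z ∈ (hAfin j n).toFinset, φ (y - z) := by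
      rw [finsum_mem_eq_finite_toFinset_sum _ (hAfin i n)]
      exact Finset.sum_congr rfl fun y _ => by
        rw [finsum_mem_eq_finite_toFinset_sum _ (hAfin j n)]
    set S := (hAfin i n).toFinset ×ˢ (hAfin j n).toFinset with hSdef
    set g : EuclideanSpace ℝ (Fin d) × EuclideanSpace ℝ (Fin d) → EuclideanSpace ℝ (Fin d) :=
      fun p => p.1 - p.2 with hgdef
    have h2 : (∑ y ∈ (hAfin i n).toFinset, ∑ z ∈ (hAfin j n).toFinset, φ (y - z))
        = ∑ p ∈ S, φ (g p) := by rw [hSdef, Finset.sum_product]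
    have h3 : (∑ p ∈ S, φ (g p))
        = ∑ w ∈ S.image g, ∑ p ∈ S.filter (fun p => g p = w), φ (g p) :=
      (Finset.sum_fiberwise_of_maps_to (fun p hp => Finset.mem_image_of_mem _ hp) _).symm
    have h4 : ∀ w : EuclideanSpace ℝ (Fin d),
        (∑ p ∈ S.filter (fun p => g p = w), φ (g p))
          = ((S.filter (fun p => g p = w)).card : ℂ) * φ w := by
      intro w
      rw [Finset.sum_congr rfl (fun p hp => by rw [(Finset.mem_filter.mp hp).2]),
        Finset.sum_const, nsmul_eq_mul]
    set U := (S.image g) ∪ (part2 i j).toFinset with hUdef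
    have hmemsub : ∀ w ∈ U, w ∈ Λ i - Λ j := by
      intro w hw
      rcases Finset.mem_union.mp hw with hw | hw
      · obtain ⟨p, hp, rfl⟩ := Finset.mem_image.mp hw
        obtain ⟨hpA, hpB⟩ := Finset.mem_product.mp hp
        exact Set.sub_mem_sub ((hAfin i n).mem_toFinset.mp hpA).1
          ((hAfin j n).mem_toFinset.mp hpB).1
      · exact ((part2 i j).mem_toFinset.mp hw).1
    have hcard : ∀ w ∈ U,
        ((S.filter (fun p => g p = w)).card : ℂ)
          = (clusterCount Λ (twoPointCluster i j (rep i j w).1 (rep i j w).2) (F n) : ℂ) := by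
      intro w hw
      obtain ⟨hr1, hr2, hr3⟩ := hrepspec i j w (hmemsub w hw)
      rw [count_pairs Λ i j hr3 (F n) (hAfin i n) (hAfin j n)]
    have e1 : (∑ w ∈ S.image g, ((S.filter (fun p => g p = w)).card : ℂ) * φ w)
        = ∑ w ∈ U, ((S.filter (fun p => g p = w)).card : ℂ) * φ w := by
      refine Finset.sum_subset Finset.subset_union_left fun w _ hw => ?_
      have hempty : S.filter (fun p => g p = w) = ∅ :=
        Finset.filter_eq_empty_iff.mpr fun {p} hp h => hw (h ▸ Finset.mem_image_of_mem _ hp)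
      rw [hempty]
      simp
    have e2 : (∑ w ∈ (part2 i j).toFinset,
          (clusterCount Λ (twoPointCluster i j (rep i j w).1 (rep i j w).2) (F n) : ℂ) * φ w)
        = ∑ w ∈ U,
          (clusterCount Λ (twoPointCluster i j (rep i j w).1 (rep i j w).2) (F n) : ℂ)
            * φ w := by
      refine Finset.sum_subset Finset.subset_union_right fun w hwU hw => ?_
      have hφ0 : φ w = 0 := by
        by_contra hne
        exact hw ((part2 i j).mem_toFinset.mpr
          ⟨hmemsub w hwU, subset_tsupport φ (Function.mem_support.mpr hne)⟩)
      rw [hφ0, mul_zero]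
    rw [h1, h2, h3]
    simp_rw [h4]
    rw [e1, e2]
    exact Finset.sum_congr rfl fun w hw => by rw [hcard w hw]
  -- convergence of each frequency
  have hlim : ∀ (i j : Fin m), ∀ w ∈ (part2 i j).toFinset,
      Tendsto (fun n =>
          ((clusterCount Λ (twoPointCluster i j (rep i j w).1 (rep i j w).2) (F n) : ℝ)
            / (volume (F n)).toReal)) atTop
        (𝓝 (freq (twoPointCluster i j (rep i j w).1 (rep i j w).2))) := by
    intro i j w hw
    obtain ⟨h1, h2, h3⟩ := hrepspec i j w (((part2 i j).mem_toFinset.mp hw).1)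
    have := (hUCF _ (twoPoint_isCluster Λ i j h1 h2)).tendsto_at 0
    simpa only [zero_add, Set.image_id'] using this
  -- rewrite the target finsum as a finset sum
  have htarget : ∀ i j : Fin m,
      (∑ᶠ w ∈ (Λ i - Λ j) ∩ tsupport φ,
          ((freq (twoPointCluster i j (rep i j w).1 (rep i j w).2) : ℝ) : ℂ) * φ w)
        = ∑ w ∈ (part2 i j).toFinset,
            ((freq (twoPointCluster i j (rep i j w).1 (rep i j w).2) : ℝ) : ℂ) * φ w := by
    intro i j
    rw [finsum_mem_eq_finite_toFinset_sum _ (part2 i j)]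
  -- identify the prelimit function
  have hfun : ∀ n, (((volume (F n)).toReal : ℂ))⁻¹ *
        ∑ i : Fin m, ∑ j : Fin m, a i * (starRingEnd ℂ) (a j) *
          ∑ᶠ y ∈ Λ i ∩ F n, ∑ᶠ z ∈ Λ j ∩ F n, φ (y - z)
      = ∑ i : Fin m, ∑ j : Fin m, a i * (starRingEnd ℂ) (a j) *
          ∑ w ∈ (part2 i j).toFinset,
            (((clusterCount Λ (twoPointCluster i j (rep i j w).1 (rep i j w).2) (F n) : ℝ)
              / (volume (F n)).toReal : ℝ) : ℂ) * φ w := by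
    intro n
    simp_rw [key, Finset.mul_sum]
    refine Finset.sum_congr rfl fun i _ => Finset.sum_congr rfl fun j _ =>
      Finset.sum_congr rfl fun w _ => ?_
    push_cast
    ring
  refine Tendsto.congr (fun n => (hfun n).symm) ?_
  simp_rw [htarget]
  refine tendsto_finset_sum _ fun i _ => tendsto_finset_sum _ fun j _ => ?_
  refine Tendsto.const_mul _ (tendsto_finset_sum _ fun w hw => ?_)
  exact Tendsto.mul_const _ ((Complex.continuous_ofReal.tendsto _).comp (hlim i j w hw))
end
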